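/- arXiv:1612.07122 — 12 statements merged into one kernel-verified Lean document; each statement's English description precedes it below -/
import Mathlib

section
/- Fix θ ∈ [0,1), ε > 0 and constants 0 < a ≤ b. For each N, let K = K(N) be a natural number with a·N^θ ≤ K ≤ b·N^θ, let T = T(N) be a number of tests with T ≥ (1+ε)·(1/ln 2)·K·log₂ N, and run the near-constant column weight design with per-item weight L = ⌊(ln 2)·T/K⌋. Then the success probability of the COMP algorithm tends to 1 as N → ∞. -/
open Filter

/-- Test `t` is positive: it contains at least one defective item (items are placed in tests
via their list of chosen tests `X i : Fin L → Fin T`). -/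
def IsPositive {N T L : ℕ} (S : Finset (Fin N)) (X : Fin N → Fin L → Fin T) (t : Fin T) : Prop :=
  ∃ i ∈ S, ∃ l, X i l = t

/-- COMP succeeds iff the set of items appearing in no negative test (equivalently, all of whose
tests are positive) equals the defective set `S`. -/
def CompSucceeds {N T L : ℕ} (S : Finset (Fin N)) (X : Fin N → Fin L → Fin T) : Prop :=
  {i : Fin N | ∀ l : Fin L, IsPositive S X (X i l)} = (S : Set (Fin N))

/-- Success probability of COMP under the near-constant column weight design: the defective set
is uniform over the `K`-subsets of the `N` items, and independently each item picks `L` tests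
uniformly at random with replacement from the `T` tests. -/
noncomputable def compSuccessProb (N K T L : ℕ) : ℝ :=
  (Nat.card {ω : {S : Finset (Fin N) // S.card = K} × (Fin N → Fin L → Fin T) //
      CompSucceeds ω.1.1 ω.2} : ℝ) /
    (Nat.card ({S : Finset (Fin N) // S.card = K} × (Fin N → Fin L → Fin T)) : ℝ)

open Finset
open Finset


section counting
variable {N T L : ℕ}

lemma card_filter_forall (s : Fin N → Finset (Fin T)) :
    (univ.filter (fun X : Fin N → Fin L → Fin T => ∀ i l, X i l ∈ s i)).card
      = ∏ i, (s i).card ^ L := by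
  classical
  have h : univ.filter (fun X : Fin N → Fin L → Fin T => ∀ i l, X i l ∈ s i)
      = Fintype.piFinset (fun i => Fintype.piFinset (fun _ : Fin L => s i)) := by
    ext X; simp [Fintype.mem_piFinset]
  rw [h, Fintype.card_piFinset]
  simp [Fintype.card_piFinset]

lemma card_univ_fun : (univ : Finset (Fin N → Fin L → Fin T)).card = T ^ (N * L) := by
  classical
  have h := card_filter_forall (N := N) (T := T) (L := L) (fun _ => univ)
  simp only [Finset.filter_true_of_mem (fun _ _ => fun _ _ => Finset.mem_univ _),
    Finset.card_univ, Finset.prod_const, Finset.card_fin] at h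
  rw [Finset.card_univ, h, ← pow_mul, mul_comm]; simp

lemma card_avoid (S : Finset (Fin N)) (A : Finset (Fin T)) :
    (univ.filter (fun X : Fin N → Fin L → Fin T => ∀ i ∈ S, ∀ l, X i l ∉ A)).card
      = (T - A.card) ^ (S.card * L) * T ^ ((N - S.card) * L) := by
  classical
  have h : (univ.filter (fun X : Fin N → Fin L → Fin T => ∀ i ∈ S, ∀ l, X i l ∉ A))
      = univ.filter (fun X : Fin N → Fin L → Fin T =>
          ∀ i l, X i l ∈ (if i ∈ S then Aᶜ else univ)) := by
    apply filter_congr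
    intro X _
    constructor
    · intro h i l
      by_cases hi : i ∈ S
      · simp only [if_pos hi, Finset.mem_compl]; exact h i hi l
      · simp [if_neg hi]
    · intro h i hi l
      have := h i l
      simpa [hi, Finset.mem_compl] using this
  rw [h, card_filter_forall]
  rw [← Finset.prod_filter_mul_prod_filter_not univ (· ∈ S)]
  have h1 : univ.filter (· ∈ S) = S := by ext i; simp
  have h2 : (univ.filter (· ∉ S)).card = N - S.card := by
    rw [Finset.filter_not, h1]; simp [Finset.card_sdiff_of_subset (Finset.subset_univ S)]
  rw [h1]
  have e1 : ∏ i ∈ S, (if i ∈ S then Aᶜ else univ).card ^ L = (T - A.card) ^ (S.card * L) := by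
    rw [Finset.prod_congr rfl (fun i hi => by rw [if_pos hi])]
    simp [Finset.card_compl, prod_const, ← pow_mul, mul_comm]
  have e2 : ∏ i ∈ univ.filter (· ∉ S), (if i ∈ S then Aᶜ else univ).card ^ L
      = T ^ ((N - S.card) * L) := by
    rw [Finset.prod_congr rfl (fun i hi => by
      rw [if_neg (by simpa using (Finset.mem_filter.mp hi).2)])]
    simp [prod_const, h2, ← pow_mul, mul_comm]
  rw [e1, e2]

end counting



noncomputable def coveredSet {N T L : ℕ} (S : Finset (Fin N)) (X : Fin N → Fin L → Fin T) :
    Finset (Fin T) := by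
  classical exact univ.filter (fun t => IsPositive S X t)

lemma mem_coveredSet {N T L : ℕ} {S : Finset (Fin N)} {X : Fin N → Fin L → Fin T} {t : Fin T} :
    t ∈ coveredSet S X ↔ IsPositive S X t := by
  classical simp [coveredSet]

section moments
variable {N T L : ℕ} (S : Finset (Fin N))

lemma card_not_covered (A : Finset (Fin T)) :
    (univ.filter (fun X : Fin N → Fin L → Fin T => ∀ t ∈ A, t ∉ coveredSet S X)).card
      = (T - A.card) ^ (S.card * L) * T ^ ((N - S.card) * L) := by
  classical
  have h : (univ.filter (fun X : Fin N → Fin L → Fin T => ∀ t ∈ A, t ∉ coveredSet S X))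
      = univ.filter (fun X : Fin N → Fin L → Fin T => ∀ i ∈ S, ∀ l, X i l ∉ A) := by
    apply filter_congr
    intro X _
    constructor
    · intro h i hi l hmem
      exact h _ hmem (mem_coveredSet.mpr ⟨i, hi, l, rfl⟩)
    · intro h t ht hc
      obtain ⟨i, hi, l, hl⟩ := mem_coveredSet.mp hc
      exact h i hi l (hl ▸ ht)
  rw [h, card_avoid]

end moments

section moments2
variable {N T L : ℕ} (S : Finset (Fin N))

lemma card_cov_one (t : Fin T) :
    ((univ.filter (fun X : Fin N → Fin L → Fin T => t ∈ coveredSet S X)).card : ℝ)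
      = (T:ℝ)^(N*L) - (((T - 1) ^ (S.card * L) * T ^ ((N - S.card) * L) : ℕ) : ℝ) := by
  classical
  have h0 := Finset.card_filter_add_card_filter_not
    (s := (univ : Finset (Fin N → Fin L → Fin T))) (p := fun X => t ∈ coveredSet S X)
  have h1 : (univ.filter (fun X : Fin N → Fin L → Fin T => ¬ t ∈ coveredSet S X)).card
      = (T - 1) ^ (S.card * L) * T ^ ((N - S.card) * L) := by
    have e : (univ.filter (fun X : Fin N → Fin L → Fin T => ¬ t ∈ coveredSet S X))
        = univ.filter (fun X => ∀ s ∈ ({t} : Finset (Fin T)), s ∉ coveredSet S X) := by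
      apply filter_congr; intro X _; simp
    rw [e, card_not_covered]; simp
  rw [card_univ_fun, h1] at h0
  have h0' : ((univ.filter (fun X : Fin N → Fin L → Fin T => t ∈ coveredSet S X)).card : ℝ)
      + (((T - 1) ^ (S.card * L) * T ^ ((N - S.card) * L) : ℕ) : ℝ) = (T:ℝ)^(N*L) := by
    exact_mod_cast congrArg (Nat.cast (R := ℝ)) h0
  linarith

lemma card_cov_pair {t t' : Fin T} (htt : t ≠ t') :
    ((univ.filter (fun X : Fin N → Fin L → Fin T =>
        t ∈ coveredSet S X ∧ t' ∈ coveredSet S X)).card : ℝ)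
      = (T:ℝ)^(N*L) - 2 * (((T - 1) ^ (S.card * L) * T ^ ((N - S.card) * L) : ℕ) : ℝ)
        + (((T - 2) ^ (S.card * L) * T ^ ((N - S.card) * L) : ℕ) : ℝ) := by
  classical
  set p : (Fin N → Fin L → Fin T) → Prop := fun X => t ∈ coveredSet S X with hp
  set p' : (Fin N → Fin L → Fin T) → Prop := fun X => t' ∈ coveredSet S X with hp'
  have h0 := Finset.card_filter_add_card_filter_not
    (s := (univ : Finset (Fin N → Fin L → Fin T))) (p := fun X => p X ∧ p' X)
  have hun : (univ.filter (fun X : Fin N → Fin L → Fin T => ¬ (p X ∧ p' X)))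
      = univ.filter (fun X => ¬ p X) ∪ univ.filter (fun X => ¬ p' X) := by
    rw [← Finset.filter_or]; apply filter_congr; intro X _
    constructor
    · intro h; by_cases hX : p X
      · exact Or.inr (fun h' => h ⟨hX, h'⟩)
      · exact Or.inl hX
    · rintro (h | h) ⟨h1, h2⟩ <;> [exact h h1; exact h h2]
  have hint : (univ.filter (fun X : Fin N → Fin L → Fin T => ¬ p X) ∩
        univ.filter (fun X => ¬ p' X)).card
      = (T - 2) ^ (S.card * L) * T ^ ((N - S.card) * L) := by
    rw [← Finset.filter_and]
    have e : (univ.filter (fun X : Fin N → Fin L → Fin T => ¬ p X ∧ ¬ p' X))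
        = univ.filter (fun X => ∀ s ∈ ({t, t'} : Finset (Fin T)), s ∉ coveredSet S X) := by
      apply filter_congr; intro X _
      simp only [Finset.mem_insert, Finset.mem_singleton, eq_iff_iff, hp, hp']
      constructor
      · rintro ⟨h1, h2⟩ s hs
        rcases hs with rfl | rfl
        exacts [h1, h2]
      · intro h; exact ⟨h t (Or.inl rfl), h t' (Or.inr rfl)⟩
    rw [e, card_not_covered]
    rw [Finset.card_insert_of_notMem (by simp [htt]), Finset.card_singleton]
  have hu1 : ∀ s : Fin T, (univ.filter (fun X : Fin N → Fin L → Fin T =>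
      ¬ s ∈ coveredSet S X)).card = (T - 1) ^ (S.card * L) * T ^ ((N - S.card) * L) := by
    intro s
    have e : (univ.filter (fun X : Fin N → Fin L → Fin T => ¬ s ∈ coveredSet S X))
        = univ.filter (fun X => ∀ r ∈ ({s} : Finset (Fin T)), r ∉ coveredSet S X) := by
      apply filter_congr; intro X _; simp
    rw [e, card_not_covered]; simp
  have hcup := Finset.card_union_add_card_inter
    (univ.filter (fun X : Fin N → Fin L → Fin T => ¬ p X)) (univ.filter (fun X => ¬ p' X))
  rw [hint, hu1 t, hu1 t'] at hcup
  rw [card_univ_fun, hun] at h0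
  have h0' := congrArg (Nat.cast (R := ℝ)) h0
  have hcup' := congrArg (Nat.cast (R := ℝ)) hcup
  push_cast at h0' hcup'
  push_cast
  linarith

end moments2

section sums
variable {N T L : ℕ} (S : Finset (Fin N))

lemma card_cov_expand (X : Fin N → Fin L → Fin T) :
    ((coveredSet S X).card : ℝ)
      = ∑ t : Fin T, (if t ∈ coveredSet S X then (1:ℝ) else 0) := by
  classical
  rw [Finset.sum_ite_mem, Finset.univ_inter, Finset.sum_const]
  simp

lemma sum_cov :
    ∑ X : Fin N → Fin L → Fin T, ((coveredSet S X).card : ℝ)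
      = T * ((T:ℝ)^(N*L) - (((T - 1) ^ (S.card * L) * T ^ ((N - S.card) * L) : ℕ) : ℝ)) := by
  classical
  rw [Finset.sum_congr rfl (fun X _ => card_cov_expand S X), Finset.sum_comm]
  have h1 : ∀ t : Fin T, (∑ X : Fin N → Fin L → Fin T,
      (if t ∈ coveredSet S X then (1:ℝ) else 0))
      = ((T:ℝ)^(N*L) - (((T - 1) ^ (S.card * L) * T ^ ((N - S.card) * L) : ℕ) : ℝ)) := by
    intro t
    rw [Finset.sum_boole, card_cov_one S t]
  rw [Finset.sum_congr rfl (fun t _ => h1 t), Finset.sum_const, Finset.card_univ,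
    Fintype.card_fin, nsmul_eq_mul]

lemma sum_cov_sq :
    ∑ X : Fin N → Fin L → Fin T, ((coveredSet S X).card : ℝ)^2
      = T * ((T:ℝ)^(N*L) - (((T - 1) ^ (S.card * L) * T ^ ((N - S.card) * L) : ℕ) : ℝ))
        + T * ((T:ℝ) - 1) * ((T:ℝ)^(N*L)
            - 2 * (((T - 1) ^ (S.card * L) * T ^ ((N - S.card) * L) : ℕ) : ℝ)
            + (((T - 2) ^ (S.card * L) * T ^ ((N - S.card) * L) : ℕ) : ℝ)) := by
  classical
  have expand : ∀ X : Fin N → Fin L → Fin T, ((coveredSet S X).card : ℝ)^2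
      = ∑ t : Fin T, ∑ t' : Fin T,
          (if t ∈ coveredSet S X ∧ t' ∈ coveredSet S X then (1:ℝ) else 0) := by
    intro X
    rw [sq, card_cov_expand S X, Finset.sum_mul_sum]
    apply Finset.sum_congr rfl; intro t _
    apply Finset.sum_congr rfl; intro t' _
    by_cases h1 : t ∈ coveredSet S X <;> by_cases h2 : t' ∈ coveredSet S X <;> simp [h1, h2]
  rw [Finset.sum_congr rfl (fun X _ => expand X), Finset.sum_comm,
    Finset.sum_congr rfl (fun t _ => Finset.sum_comm)]
  have inner : ∀ t : Fin T,
      (∑ t' : Fin T, ∑ X : Fin N → Fin L → Fin T,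
        (if t ∈ coveredSet S X ∧ t' ∈ coveredSet S X then (1:ℝ) else 0))
      = ((T:ℝ)^(N*L) - (((T - 1) ^ (S.card * L) * T ^ ((N - S.card) * L) : ℕ) : ℝ))
        + ((T:ℝ) - 1) * ((T:ℝ)^(N*L)
            - 2 * (((T - 1) ^ (S.card * L) * T ^ ((N - S.card) * L) : ℕ) : ℝ)
            + (((T - 2) ^ (S.card * L) * T ^ ((N - S.card) * L) : ℕ) : ℝ)) := by
    intro t
    rw [← Finset.add_sum_erase (univ : Finset (Fin T)) _ (Finset.mem_univ t)]
    congr 1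
    · rw [Finset.sum_boole]
      have e : (univ.filter (fun X : Fin N → Fin L → Fin T =>
          t ∈ coveredSet S X ∧ t ∈ coveredSet S X))
          = univ.filter (fun X => t ∈ coveredSet S X) := by
        apply filter_congr; intro X _; simp
      rw [e, card_cov_one S t]
    · rw [Finset.sum_congr rfl (fun t' ht' => by
        rw [Finset.sum_boole, card_cov_pair S (Finset.ne_of_mem_erase ht').symm])]
      rw [Finset.sum_const, Finset.card_erase_of_mem (Finset.mem_univ t),
        Finset.card_univ, Fintype.card_fin, nsmul_eq_mul]
      have : 0 < T := t.pos
      push_cast [Nat.cast_sub this]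
      ring
  rw [Finset.sum_congr rfl (fun t _ => inner t), Finset.sum_const, Finset.card_univ,
    Fintype.card_fin, nsmul_eq_mul]
  ring

end sums

lemma q_lower (T n : ℕ) (hT : 2 ≤ T) (hn : (n:ℝ) ≤ Real.log 2 * T) :
    (1:ℝ)/2 - 2/T ≤ (((T:ℝ) - 1)/T)^n := by
  set x : ℝ := (T:ℝ) with hx
  have hx2 : (2:ℝ) ≤ x := by rw [hx]; exact_mod_cast hT
  have hx0 : 0 < x := by linarith
  have hx1 : 0 < x - 1 := by linarith
  have hbase : 0 < (x - 1)/x := div_pos hx1 hx0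
  have hlog2 : 0 < Real.log 2 := Real.log_pos (by norm_num)
  have hlog2le : Real.log 2 ≤ 1 := by
    have := Real.log_le_sub_one_of_pos (x := 2) (by norm_num); linarith
  have hlb : -(1/(x-1)) ≤ Real.log ((x-1)/x) := by
    have h1 : Real.log ((x-1)/x) = - Real.log (x/(x-1)) := by
      rw [← Real.log_inv]
      congr 1
      field_simp
    have h2 : Real.log (x/(x-1)) ≤ x/(x-1) - 1 :=
      Real.log_le_sub_one_of_pos (div_pos hx0 hx1)
    have h3 : x/(x-1) - 1 = 1/(x-1) := by field_simp; ring
    rw [h1]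
    rw [h3] at h2
    linarith
  have hpow : (((x - 1))/x)^n = Real.exp (n * Real.log ((x-1)/x)) := by
    rw [← Real.log_pow, Real.exp_log (pow_pos hbase n)]
  rw [hpow]
  have hn0 : (0:ℝ) ≤ (n:ℝ) := Nat.cast_nonneg n
  have step1 : Real.exp (-(Real.log 2) - Real.log 2/(x-1))
      ≤ Real.exp ((n:ℝ) * Real.log ((x-1)/x)) := by
    apply Real.exp_le_exp.mpr
    have hna : -((n:ℝ)/(x-1)) ≤ (n:ℝ) * Real.log ((x-1)/x) := by
      have h4 : -(1/(x-1)) * (n:ℝ) ≤ Real.log ((x-1)/x) * (n:ℝ) :=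
        mul_le_mul_of_nonneg_right hlb hn0
      calc -((n:ℝ)/(x-1)) = -(1/(x-1)) * (n:ℝ) := by ring
        _ ≤ Real.log ((x-1)/x) * (n:ℝ) := h4
        _ = (n:ℝ) * Real.log ((x-1)/x) := by ring
    have hnb : (n:ℝ)/(x-1) ≤ Real.log 2 * x/(x-1) := by gcongr
    have heq : Real.log 2 * x/(x-1) = Real.log 2 + Real.log 2/(x-1) := by
      field_simp; ring
    rw [heq] at hnb
    linarith
  refine le_trans ?_ step1
  have hsplit : Real.exp (-(Real.log 2) - Real.log 2/(x-1))
      = (1/2) * Real.exp (-(Real.log 2/(x-1))) := by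
    rw [sub_eq_add_neg, Real.exp_add, Real.exp_neg, Real.exp_log (by norm_num : (0:ℝ) < 2)]
    ring
  rw [hsplit]
  have hexp : 1 - Real.log 2/(x-1) ≤ Real.exp (-(Real.log 2/(x-1))) := by
    have := Real.add_one_le_exp (-(Real.log 2/(x-1)))
    linarith
  have hfin : 1/2 - 2/x ≤ (1/2) * (1 - Real.log 2/(x-1)) := by
    have h5 : Real.log 2/(x-1) ≤ 1/(x-1) := by gcongr
    have h7 : 0 ≤ Real.log 2/(x-1) := le_of_lt (div_pos hlog2 hx1)
    have h6 : 1/(x-1) ≤ 2/x := by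
      rw [div_le_div_iff₀ hx1 hx0]; linarith
    linarith
  nlinarith [Real.exp_pos (-(Real.log 2/(x-1)))]

lemma cast_u (N T L K' c : ℕ) (hc : c ≤ T) (hT : 1 ≤ T) (hKN : K' ≤ N) :
    (((T - c) ^ (K' * L) * T ^ ((N - K') * L) : ℕ) : ℝ)
      = (((T:ℝ) - c)/T)^(K' * L) * (T:ℝ)^(N*L) := by
  have hx0 : (0:ℝ) < T := by exact_mod_cast hT
  have hsplit : N * L = K' * L + (N - K') * L := by
    rw [← Nat.add_mul, Nat.add_sub_cancel' hKN]
  push_cast [Nat.cast_sub hc]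
  rw [div_pow, hsplit, pow_add]
  field_simp

set_option maxHeartbeats 1000000 in
lemma card_bad_le (N T L : ℕ) (S : Finset (Fin N)) (hT : 2 ≤ T)
    (hKL : ((S.card * L : ℕ):ℝ) ≤ Real.log 2 * T) (β : ℝ) (hβ : 1/2 < β)
    (hTβ : 4 / (β - 1/2) ≤ (T:ℝ)) :
    ((univ.filter (fun X : Fin N → Fin L → Fin T =>
        β * T ≤ ((coveredSet S X).card : ℝ))).card : ℝ)
      ≤ 4 / ((β - 1/2)^2 * T) * (T:ℝ)^(N*L) := by
  classical
  have hSN : S.card ≤ N := by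
    have := Finset.card_le_univ S; simpa using this
  have hx2 : (2:ℝ) ≤ (T:ℝ) := by exact_mod_cast hT
  have hx0 : (0:ℝ) < (T:ℝ) := by linarith
  set n : ℕ := S.card * L with hndef
  set q : ℝ := (((T:ℝ)-1)/T)^n with hqdef
  set q2 : ℝ := (((T:ℝ)-2)/T)^n with hq2def
  have hu1 : (((T - 1) ^ (S.card * L) * T ^ ((N - S.card) * L) : ℕ) : ℝ)
      = q * (T:ℝ)^(N*L) := by
    have h := cast_u N T L S.card 1 (by omega) (by omega) hSN
    rw [hqdef, hndef]
    simpa using h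
  have hu2 : (((T - 2) ^ (S.card * L) * T ^ ((N - S.card) * L) : ℕ) : ℝ)
      = q2 * (T:ℝ)^(N*L) := by
    have h := cast_u N T L S.card 2 (by omega) (by omega) hSN
    rw [hq2def, hndef]
    simpa using h
  have hb1 : (0:ℝ) ≤ ((T:ℝ)-1)/T := div_nonneg (by linarith) (le_of_lt hx0)
  have hb1' : ((T:ℝ)-1)/T ≤ 1 := by rw [div_le_one hx0]; linarith
  have hb2 : (0:ℝ) ≤ ((T:ℝ)-2)/T := div_nonneg (by linarith) (le_of_lt hx0)
  have hq0 : 0 ≤ q := pow_nonneg hb1 n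
  have hq1 : q ≤ 1 := pow_le_one₀ hb1 hb1'
  have hq20 : 0 ≤ q2 := pow_nonneg hb2 n
  have hq2q : q2 ≤ q^2 := by
    have hbase : ((T:ℝ)-2)/T ≤ (((T:ℝ)-1)/T)^2 := by
      rw [div_pow, div_le_div_iff₀ hx0 (by positivity)]
      nlinarith
    calc q2 = (((T:ℝ)-2)/T)^n := hq2def
      _ ≤ ((((T:ℝ)-1)/T)^2)^n := pow_le_pow_left₀ hb2 hbase n
      _ = ((((T:ℝ)-1)/T)^n)^2 := by rw [← pow_mul, ← pow_mul, mul_comm]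
      _ = q^2 := by rw [hqdef]
  have hqlow : (1:ℝ)/2 - 2/(T:ℝ) ≤ q := q_lower T n hT (by exact_mod_cast hKL)
  set μ : ℝ := (T:ℝ) * (1 - q) with hμdef
  have hμle : μ ≤ (T:ℝ)/2 + 2 := by
    have h1 : 1 - q ≤ 1/2 + 2/(T:ℝ) := by linarith
    have h2 := mul_le_mul_of_nonneg_left h1 (le_of_lt hx0)
    rw [hμdef]
    calc (T:ℝ) * (1 - q) ≤ (T:ℝ) * (1/2 + 2/(T:ℝ)) := h2
      _ = (T:ℝ)/2 + 2 := by field_simp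
  have hP0 : (0:ℝ) < (T:ℝ)^(N*L) := by positivity
  have hVar : ∑ X : Fin N → Fin L → Fin T, (((coveredSet S X).card : ℝ) - μ)^2
      ≤ (T:ℝ) * (T:ℝ)^(N*L) := by
    have hsum1 := sum_cov (T := T) (L := L) S
    have hsum2 := sum_cov_sq (T := T) (L := L) S
    rw [hu1] at hsum1
    rw [hu1, hu2] at hsum2
    have hexpand : ∀ X ∈ (univ : Finset (Fin N → Fin L → Fin T)),
        (((coveredSet S X).card : ℝ) - μ)^2
        = ((coveredSet S X).card : ℝ)^2 - 2*μ*((coveredSet S X).card : ℝ) + μ^2 := by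
      intro X _; ring
    have hcard : ((univ : Finset (Fin N → Fin L → Fin T)).card : ℝ) = (T:ℝ)^(N*L) := by
      rw [card_univ_fun]; push_cast; ring
    have hsumVar : ∑ X : Fin N → Fin L → Fin T, (((coveredSet S X).card : ℝ) - μ)^2
        = (T:ℝ)^(N*L) * ((T:ℝ) * (1 - q) + (T:ℝ) * ((T:ℝ) - 1) * (1 - 2*q + q2)
            - (T:ℝ)^2 * (1-q)^2) := by
      rw [Finset.sum_congr rfl hexpand, Finset.sum_add_distrib, Finset.sum_sub_distrib,
        ← Finset.mul_sum, Finset.sum_const, hsum1, hsum2, nsmul_eq_mul, hcard, hμdef]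
      ring
    rw [hsumVar]
    have hkey : (T:ℝ) * (1 - q) + (T:ℝ) * ((T:ℝ) - 1) * (1 - 2*q + q2)
        - (T:ℝ)^2 * (1-q)^2 ≤ (T:ℝ) := by
      nlinarith [mul_nonneg hq20 hx0.le, sq_nonneg (1-q)]
    calc (T:ℝ)^(N*L) * ((T:ℝ) * (1 - q) + (T:ℝ) * ((T:ℝ) - 1) * (1 - 2*q + q2)
            - (T:ℝ)^2 * (1-q)^2)
        ≤ (T:ℝ)^(N*L) * (T:ℝ) := mul_le_mul_of_nonneg_left hkey hP0.le
      _ = (T:ℝ) * (T:ℝ)^(N*L) := by ring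
  set d : ℝ := (β - 1/2) * (T:ℝ) / 2 with hddef
  have hβ2 : 0 < β - 1/2 := by linarith
  have hd0 : 0 < d := by rw [hddef]; positivity
  have hβx : 4 ≤ (β - 1/2) * (T:ℝ) := by
    rw [div_le_iff₀ hβ2] at hTβ
    linarith [hTβ]
  have hlow : ∀ X ∈ univ.filter (fun X : Fin N → Fin L → Fin T =>
      β * T ≤ ((coveredSet S X).card : ℝ)), d ≤ ((coveredSet S X).card : ℝ) - μ := by
    intro X hX
    have h := (Finset.mem_filter.mp hX).2
    rw [hddef]
    linarith
  have hcheb : (((univ.filter (fun X : Fin N → Fin L → Fin T =>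
      β * T ≤ ((coveredSet S X).card : ℝ))).card : ℝ)) * d^2 ≤ (T:ℝ) * (T:ℝ)^(N*L) := by
    calc (((univ.filter (fun X : Fin N → Fin L → Fin T =>
            β * T ≤ ((coveredSet S X).card : ℝ))).card : ℝ)) * d^2
        = ∑ _X ∈ univ.filter (fun X : Fin N → Fin L → Fin T =>
            β * T ≤ ((coveredSet S X).card : ℝ)), d^2 := by
          rw [Finset.sum_const, nsmul_eq_mul]
      _ ≤ ∑ X ∈ univ.filter (fun X : Fin N → Fin L → Fin T =>
            β * T ≤ ((coveredSet S X).card : ℝ)), (((coveredSet S X).card : ℝ) - μ)^2 := by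
          apply Finset.sum_le_sum
          intro X hX
          exact pow_le_pow_left₀ hd0.le (hlow X hX) 2
      _ ≤ ∑ X : Fin N → Fin L → Fin T, (((coveredSet S X).card : ℝ) - μ)^2 := by
          apply Finset.sum_le_sum_of_subset_of_nonneg (Finset.filter_subset _ _)
          intro X _ _
          positivity
      _ ≤ (T:ℝ) * (T:ℝ)^(N*L) := hVar
  have hfinal : (((univ.filter (fun X : Fin N → Fin L → Fin T =>
      β * T ≤ ((coveredSet S X).card : ℝ))).card : ℝ)) ≤ (T:ℝ) * (T:ℝ)^(N*L) / d^2 := by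
    rw [le_div_iff₀ (by positivity)]
    exact hcheb
  refine le_trans hfinal (le_of_eq ?_)
  rw [div_eq_iff (by positivity : (d:ℝ)^2 ≠ 0), hddef]
  have hne : ((β - 1/2)^2 * (T:ℝ)) ≠ 0 := by positivity
  rw [div_mul_eq_mul_div, div_mul_eq_mul_div, eq_div_iff hne]
  ring

lemma coveredSet_congr {N T L : ℕ} (S : Finset (Fin N)) {X X' : Fin N → Fin L → Fin T}
    (h : ∀ j ∈ S, X j = X' j) : coveredSet S X = coveredSet S X' := by
  ext t
  simp only [mem_coveredSet, IsPositive]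
  constructor
  · rintro ⟨j, hj, l, hl⟩; exact ⟨j, hj, l, by rw [← h j hj]; exact hl⟩
  · rintro ⟨j, hj, l, hl⟩; exact ⟨j, hj, l, by rw [h j hj]; exact hl⟩

lemma card_into_finset {T L : ℕ} (w : Finset (Fin T)) :
    (univ.filter (fun f : Fin L → Fin T => ∀ l, f l ∈ w)).card = w.card ^ L := by
  classical
  have h : univ.filter (fun f : Fin L → Fin T => ∀ l, f l ∈ w)
      = Fintype.piFinset (fun _ : Fin L => w) := by
    ext f; simp [Fintype.mem_piFinset]
  rw [h, Fintype.card_piFinset]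
  simp

set_option maxHeartbeats 1000000 in
lemma card_item_covered_le (N T L : ℕ) (S : Finset (Fin N)) {i : Fin N} (hi : i ∉ S)
    (hT : 0 < T) (β : ℝ) (hβ0 : 0 ≤ β) :
    ((univ.filter (fun X : Fin N → Fin L → Fin T =>
        ¬ (β * T ≤ ((coveredSet S X).card : ℝ)) ∧ ∀ l, X i l ∈ coveredSet S X)).card : ℝ)
      ≤ β^L * (T:ℝ)^(N*L) := by
  classical
  set p : (Fin N → Fin L → Fin T) → Prop := fun X =>
    ¬ (β * T ≤ ((coveredSet S X).card : ℝ)) ∧ ∀ l, X i l ∈ coveredSet S X with hp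
  set e := Equiv.piSplitAt i (fun _ : Fin N => Fin L → Fin T) with he
  -- transfer card along the equivalence
  have hcard1 : (univ.filter p).card
      = (univ.filter (fun y : (Fin L → Fin T) × ({j : Fin N // j ≠ i} → Fin L → Fin T) =>
          p (e.symm y))).card := by
    refine Finset.card_bij' (fun X _ => e X) (fun y _ => e.symm y) ?_ ?_ ?_ ?_
    · intro X hX
      simp only [Finset.mem_filter, Finset.mem_univ, true_and] at hX ⊢
      simpa using hX
    · intro y hy
      simp only [Finset.mem_filter, Finset.mem_univ, true_and] at hy ⊢
      exact hy
    · intro X _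
      simp
    · intro y _
      simp
  rw [hcard1]
  -- fiberwise over the second component
  have hfiber : (univ.filter (fun y : (Fin L → Fin T) × ({j : Fin N // j ≠ i} → Fin L → Fin T) =>
          p (e.symm y))).card
      = ∑ r : {j : Fin N // j ≠ i} → Fin L → Fin T,
          (univ.filter (fun f : Fin L → Fin T => p (e.symm (f, r)))).card := by
    rw [Finset.card_eq_sum_card_fiberwise
      (f := fun y : (Fin L → Fin T) × ({j : Fin N // j ≠ i} → Fin L → Fin T) => y.2)
      (t := univ) (fun x _ => Finset.mem_univ _)]
    apply Finset.sum_congr rfl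
    intro r _
    refine Finset.card_bij' (fun y _ => y.1) (fun f _ => (f, r)) ?_ ?_ ?_ ?_
    · intro y hy
      simp only [Finset.mem_filter, Finset.mem_univ, true_and] at hy ⊢
      rw [← hy.2]
      simpa using hy.1
    · intro f hf
      simp only [Finset.mem_filter, Finset.mem_univ, true_and] at hf ⊢
      exact ⟨hf, trivial⟩
    · intro y hy
      simp only [Finset.mem_filter, Finset.mem_univ, true_and] at hy
      show (y.1, r) = y
      rw [← hy.2]
    · intro f _
      rfl
  rw [hfiber]
  -- per-fiber bound
  have hNpos : 0 < N := i.pos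
  set f0 : Fin L → Fin T := fun _ => ⟨0, hT⟩ with hf0
  have hcov_eq : ∀ (r : {j : Fin N // j ≠ i} → Fin L → Fin T) (f : Fin L → Fin T),
      coveredSet S (e.symm (f, r)) = coveredSet S (e.symm (f0, r)) := by
    intro r f
    apply coveredSet_congr
    intro j hj
    have hji : j ≠ i := fun h => hi (h ▸ hj)
    rw [he]
    simp [Equiv.piSplitAt_symm_apply, dif_neg hji]
  have hinner : ∀ r : {j : Fin N // j ≠ i} → Fin L → Fin T,
      ((univ.filter (fun f : Fin L → Fin T => p (e.symm (f, r)))).card : ℝ)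
        ≤ β^L * (T:ℝ)^L := by
    intro r
    by_cases hbad : β * T ≤ ((coveredSet S (e.symm (f0, r))).card : ℝ)
    · have : (univ.filter (fun f : Fin L → Fin T => p (e.symm (f, r)))) = ∅ := by
        apply Finset.filter_false_of_mem
        intro f _
        rw [hp]
        simp only [not_and]
        intro hc
        exact absurd (by rw [hcov_eq r f]; exact hbad) hc
      rw [this]
      simp
      positivity
    · have hlt : ((coveredSet S (e.symm (f0, r))).card : ℝ) < β * T := lt_of_not_ge hbad
      have hsub : (univ.filter (fun f : Fin L → Fin T => p (e.symm (f, r))))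
          ⊆ univ.filter (fun f : Fin L → Fin T => ∀ l, f l ∈ coveredSet S (e.symm (f0, r))) := by
        intro f hf
        simp only [Finset.mem_filter, Finset.mem_univ, true_and, hp] at hf ⊢
        intro l
        have hmem := hf.2 l
        rw [hcov_eq r f] at hmem
        have harg : (e.symm (f, r)) i = f := by
          rw [he]; simp [Equiv.piSplitAt_symm_apply]
        rw [harg] at hmem
        exact hmem
      calc ((univ.filter (fun f : Fin L → Fin T => p (e.symm (f, r)))).card : ℝ)
          ≤ ((univ.filter (fun f : Fin L → Fin T =>
              ∀ l, f l ∈ coveredSet S (e.symm (f0, r)))).card : ℝ) := by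
            exact_mod_cast Finset.card_le_card hsub
        _ = ((coveredSet S (e.symm (f0, r))).card : ℝ)^L := by
            rw [card_into_finset]; push_cast; ring
        _ ≤ (β * T)^L := pow_le_pow_left₀ (by positivity) hlt.le L
        _ = β^L * (T:ℝ)^L := mul_pow β (T:ℝ) L
  rw [Nat.cast_sum]
  calc (∑ r : {j : Fin N // j ≠ i} → Fin L → Fin T,
        (((univ.filter (fun f : Fin L → Fin T => p (e.symm (f, r)))).card : ℕ) : ℝ))
      ≤ ∑ _r : {j : Fin N // j ≠ i} → Fin L → Fin T, β^L * (T:ℝ)^L :=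
        Finset.sum_le_sum (fun r _ => hinner r)
    _ = (Fintype.card ({j : Fin N // j ≠ i} → Fin L → Fin T) : ℝ) * (β^L * (T:ℝ)^L) := by
        rw [Finset.sum_const, Finset.card_univ, nsmul_eq_mul]
    _ ≤ β^L * (T:ℝ)^(N*L) := by
        have hc : Fintype.card ({j : Fin N // j ≠ i} → Fin L → Fin T) = (T^L)^(N-1) := by
          rw [Fintype.card_fun]
          congr 1
          · rw [Fintype.card_fun]; simp
          · simp [Fintype.card_subtype_compl]
        rw [hc]
        have hpow : ((((T^L)^(N-1) : ℕ)) : ℝ) * ((T:ℝ)^L) = (T:ℝ)^(N*L) := by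
          push_cast
          rw [← pow_mul, ← pow_add]
          congr 1
          cases N with
          | zero => simp at hNpos
          | succ m => simp [Nat.succ_sub_one]; ring
        refine le_of_eq ?_
        calc ((((T^L)^(N-1) : ℕ)) : ℝ) * (β^L * (T:ℝ)^L)
            = β^L * (((((T^L)^(N-1) : ℕ)) : ℝ) * (T:ℝ)^L) := by ring
          _ = β^L * (T:ℝ)^(N*L) := by rw [hpow]


lemma not_compSucceeds_iff {N T L : ℕ} (S : Finset (Fin N)) (X : Fin N → Fin L → Fin T) :
    ¬ CompSucceeds S X ↔ ∃ i, i ∉ S ∧ ∀ l, IsPositive S X (X i l) := by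
  unfold CompSucceeds
  constructor
  · intro h
    by_contra hc
    push_neg at hc
    apply h
    ext i
    simp only [Set.mem_setOf_eq, Finset.mem_coe]
    constructor
    · intro hall
      by_contra his
      obtain ⟨l, hl⟩ := hc i his
      exact hl (hall l)
    · intro his l
      exact ⟨i, his, l, rfl⟩
  · rintro ⟨i, his, hall⟩ h
    have h1 : i ∈ {i : Fin N | ∀ l : Fin L, IsPositive S X (X i l)} := hall
    rw [h] at h1
    exact his (by exact_mod_cast h1)

open Classical in
set_option maxHeartbeats 1000000 in
lemma fail_count_le (N T L : ℕ) (S : Finset (Fin N)) (hT : 2 ≤ T)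
    (hKL : ((S.card * L : ℕ):ℝ) ≤ Real.log 2 * T) (β : ℝ) (hβ : 1/2 < β)
    (hTβ : 4 / (β - 1/2) ≤ (T:ℝ)) :
    ((univ.filter (fun X : Fin N → Fin L → Fin T => ¬ CompSucceeds S X)).card : ℝ)
      ≤ (4 / ((β - 1/2)^2 * T) + N * β^L) * (T:ℝ)^(N*L) := by
  classical
  have hβ0 : (0:ℝ) ≤ β := by linarith
  set Bad := univ.filter (fun X : Fin N → Fin L → Fin T =>
      β * T ≤ ((coveredSet S X).card : ℝ)) with hBad
  have hsub : univ.filter (fun X : Fin N → Fin L → Fin T => ¬ CompSucceeds S X)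
      ⊆ Bad ∪ Sᶜ.biUnion (fun i => univ.filter (fun X : Fin N → Fin L → Fin T =>
          ¬ (β * T ≤ ((coveredSet S X).card : ℝ)) ∧ ∀ l, X i l ∈ coveredSet S X)) := by
    intro X hX
    simp only [Finset.mem_filter, Finset.mem_univ, true_and] at hX
    obtain ⟨i, his, hall⟩ := (not_compSucceeds_iff S X).mp hX
    by_cases hb : β * T ≤ ((coveredSet S X).card : ℝ)
    · exact Finset.mem_union_left _ (by simp [hBad, hb])
    · apply Finset.mem_union_right
      apply Finset.mem_biUnion.mpr
      exact ⟨i, Finset.mem_compl.mpr his,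
        by simp only [Finset.mem_filter, Finset.mem_univ, true_and]
           exact ⟨hb, fun l => mem_coveredSet.mpr (hall l)⟩⟩
  calc ((univ.filter (fun X : Fin N → Fin L → Fin T => ¬ CompSucceeds S X)).card : ℝ)
      ≤ ((Bad ∪ Sᶜ.biUnion (fun i => univ.filter (fun X : Fin N → Fin L → Fin T =>
          ¬ (β * T ≤ ((coveredSet S X).card : ℝ)) ∧ ∀ l, X i l ∈ coveredSet S X))).card : ℝ) := by
        exact_mod_cast Finset.card_le_card hsub
    _ ≤ (Bad.card : ℝ) + ((Sᶜ.biUnion (fun i => univ.filter (fun X : Fin N → Fin L → Fin T =>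
          ¬ (β * T ≤ ((coveredSet S X).card : ℝ)) ∧ ∀ l, X i l ∈ coveredSet S X))).card : ℝ) := by
        exact_mod_cast Finset.card_union_le _ _
    _ ≤ (Bad.card : ℝ) + ∑ i ∈ Sᶜ, ((univ.filter (fun X : Fin N → Fin L → Fin T =>
          ¬ (β * T ≤ ((coveredSet S X).card : ℝ)) ∧ ∀ l, X i l ∈ coveredSet S X)).card : ℝ) := by
        have := Finset.card_biUnion_le (s := Sᶜ)
          (t := fun i => univ.filter (fun X : Fin N → Fin L → Fin T =>
            ¬ (β * T ≤ ((coveredSet S X).card : ℝ)) ∧ ∀ l, X i l ∈ coveredSet S X))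
        have h2 : (((Sᶜ.biUnion (fun i => univ.filter (fun X : Fin N → Fin L → Fin T =>
            ¬ (β * T ≤ ((coveredSet S X).card : ℝ)) ∧ ∀ l, X i l ∈ coveredSet S X))).card : ℕ) : ℝ)
            ≤ ((∑ i ∈ Sᶜ, (univ.filter (fun X : Fin N → Fin L → Fin T =>
            ¬ (β * T ≤ ((coveredSet S X).card : ℝ)) ∧ ∀ l, X i l ∈ coveredSet S X)).card : ℕ) : ℝ) := by
          exact_mod_cast this
        rw [Nat.cast_sum] at h2
        linarith
    _ ≤ 4 / ((β - 1/2)^2 * T) * (T:ℝ)^(N*L)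
        + ∑ i ∈ Sᶜ, β^L * (T:ℝ)^(N*L) := by
        apply add_le_add
        · exact card_bad_le N T L S hT hKL β hβ hTβ
        · apply Finset.sum_le_sum
          intro i hi
          exact card_item_covered_le N T L S (Finset.mem_compl.mp hi) (by omega) β hβ0
    _ ≤ (4 / ((β - 1/2)^2 * T) + N * β^L) * (T:ℝ)^(N*L) := by
        rw [Finset.sum_const, nsmul_eq_mul]
        have hcle : (Sᶜ.card : ℝ) ≤ (N:ℝ) := by
          have : Sᶜ.card ≤ N := by
            have := Finset.card_le_univ (Sᶜ : Finset (Fin N)); simpa using this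
          exact_mod_cast this
        have hP0 : (0:ℝ) ≤ (T:ℝ)^(N*L) := by positivity
        have hβL : (0:ℝ) ≤ β^L := by positivity
        nlinarith [mul_le_mul_of_nonneg_right (mul_le_mul_of_nonneg_right hcle hβL) hP0]

open Classical in
set_option maxHeartbeats 1000000 in
lemma compSuccessProb_ge (N K T L : ℕ) (hKN : K ≤ N) (hT : 2 ≤ T)
    (hKL : ((K * L : ℕ):ℝ) ≤ Real.log 2 * T) (β : ℝ) (hβ : 1/2 < β)
    (hTβ : 4 / (β - 1/2) ≤ (T:ℝ)) :
    1 - (4 / ((β - 1/2)^2 * T) + N * β^L) ≤ compSuccessProb N K T L := by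
  classical
  set g : ℝ := 4 / ((β - 1/2)^2 * T) + N * β^L with hg
  have hx0 : (0:ℝ) < (T:ℝ) := by positivity
  have hP0 : (0:ℝ) < (T:ℝ)^(N*L) := by positivity
  have hM0 : 0 < N.choose K := Nat.choose_pos hKN
  -- denominator
  have hden : (Nat.card ({S : Finset (Fin N) // S.card = K} × (Fin N → Fin L → Fin T)) : ℝ)
      = (N.choose K : ℝ) * (T:ℝ)^(N*L) := by
    rw [Nat.card_prod, Nat.card_eq_fintype_card, Nat.card_eq_fintype_card,
      Fintype.card_finset_len, Fintype.card_fin]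
    have : Fintype.card (Fin N → Fin L → Fin T) = T^(N*L) := by
      rw [← Finset.card_univ, card_univ_fun]
    rw [this]
    push_cast
    ring
  -- numerator
  have hnum : (Nat.card {ω : {S : Finset (Fin N) // S.card = K} × (Fin N → Fin L → Fin T) //
        CompSucceeds ω.1.1 ω.2})
      = ∑ Sp : {S : Finset (Fin N) // S.card = K},
          (univ.filter (fun X : Fin N → Fin L → Fin T => CompSucceeds Sp.1 X)).card := by
    rw [Nat.card_eq_fintype_card, Fintype.card_subtype]
    rw [Finset.card_eq_sum_card_fiberwise
      (f := fun ω : {S : Finset (Fin N) // S.card = K} × (Fin N → Fin L → Fin T) => ω.1)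
      (t := univ) (fun x _ => Finset.mem_univ _)]
    refine Finset.sum_congr rfl (fun Sp _ => ?_)
    refine Finset.card_bij' (fun y _ => y.2) (fun X _ => (Sp, X)) ?_ ?_ ?_ ?_
    · intro y hy
      simp only [Finset.mem_filter, Finset.mem_univ, true_and] at hy ⊢
      rw [← hy.2]
      exact hy.1
    · intro X hX
      simp only [Finset.mem_filter, Finset.mem_univ, true_and] at hX ⊢
      exact ⟨hX, trivial⟩
    · intro y hy
      simp only [Finset.mem_filter, Finset.mem_univ, true_and] at hy
      show (Sp, y.2) = y
      rw [← hy.2]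
    · intro X _
      rfl
  -- per-S success bound
  have hperS : ∀ Sp : {S : Finset (Fin N) // S.card = K},
      (1 - g) * (T:ℝ)^(N*L)
        ≤ ((univ.filter (fun X : Fin N → Fin L → Fin T => CompSucceeds Sp.1 X)).card : ℝ) := by
    intro Sp
    have hcompl := Finset.card_filter_add_card_filter_not
      (s := (univ : Finset (Fin N → Fin L → Fin T)))
      (p := fun X => CompSucceeds Sp.1 X)
    rw [card_univ_fun] at hcompl
    have hfail : ((univ.filter (fun X : Fin N → Fin L → Fin T =>
        ¬ CompSucceeds Sp.1 X)).card : ℝ) ≤ g * (T:ℝ)^(N*L) := by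
      rw [hg]
      have := fail_count_le N T L Sp.1 hT (by rw [Sp.2]; exact hKL) β hβ hTβ
      exact this
    have hcast : ((univ.filter (fun X : Fin N → Fin L → Fin T =>
          CompSucceeds Sp.1 X)).card : ℝ)
        + ((univ.filter (fun X : Fin N → Fin L → Fin T =>
          ¬ CompSucceeds Sp.1 X)).card : ℝ) = (T:ℝ)^(N*L) := by
      exact_mod_cast congrArg (Nat.cast (R := ℝ)) hcompl
    nlinarith
  -- assemble
  rw [compSuccessProb, hden]
  rw [le_div_iff₀ (by positivity)]
  have hsum : (Nat.card {ω : {S : Finset (Fin N) // S.card = K} × (Fin N → Fin L → Fin T) //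
        CompSucceeds ω.1.1 ω.2} : ℝ)
      = ∑ Sp : {S : Finset (Fin N) // S.card = K},
          ((univ.filter (fun X : Fin N → Fin L → Fin T => CompSucceeds Sp.1 X)).card : ℝ) := by
    rw [hnum]
    push_cast
    ring
  rw [hsum]
  have hlow : ∑ Sp : {S : Finset (Fin N) // S.card = K}, (1 - g) * (T:ℝ)^(N*L)
      ≤ ∑ Sp : {S : Finset (Fin N) // S.card = K},
          ((univ.filter (fun X : Fin N → Fin L → Fin T => CompSucceeds Sp.1 X)).card : ℝ) :=
    Finset.sum_le_sum (fun Sp _ => hperS Sp)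
  rw [Finset.sum_const, Finset.card_univ, Fintype.card_finset_len, Fintype.card_fin,
    nsmul_eq_mul] at hlow
  calc (1 - g) * ((N.choose K : ℝ) * (T:ℝ)^(N*L))
      = (N.choose K : ℝ) * ((1 - g) * (T:ℝ)^(N*L)) := by ring
    _ ≤ ∑ Sp : {S : Finset (Fin N) // S.card = K},
          ((univ.filter (fun X : Fin N → Fin L → Fin T => CompSucceeds Sp.1 X)).card : ℝ) := hlow

lemma compSuccessProb_le_one (N K T L : ℕ) : compSuccessProb N K T L ≤ 1 := by
  classical
  rw [compSuccessProb]
  apply div_le_one_of_le₀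
  · have h := Fintype.card_subtype_le
      (p := fun ω : {S : Finset (Fin N) // S.card = K} × (Fin N → Fin L → Fin T) =>
        CompSucceeds ω.1.1 ω.2)
    rw [Nat.card_eq_fintype_card, Nat.card_eq_fintype_card]
    exact_mod_cast h
  · positivity

lemma compSuccessProb_nonneg (N K T L : ℕ) : 0 ≤ compSuccessProb N K T L := by
  rw [compSuccessProb]; positivity


set_option maxHeartbeats 1000000 in
/-- COMP achievability for near-constant column weight designs:
if `K = Θ(N^θ)` with `θ ∈ [0,1)` and `T ≥ (1+ε)·(1/ln 2)·K·log₂ N`, then with per-item weight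
`L = ⌊(ln 2)·T/K⌋` the COMP success probability tends to `1`. -/
theorem comp_success_tendsto_one
    (θ ε a b : ℝ) (hθ0 : 0 ≤ θ) (hθ1 : θ < 1) (hε : 0 < ε) (ha : 0 < a) (hab : a ≤ b)
    (K T : ℕ → ℕ)
    (hK : ∀ N : ℕ, a * (N : ℝ) ^ θ ≤ (K N : ℝ) ∧ (K N : ℝ) ≤ b * (N : ℝ) ^ θ)
    (hT : ∀ N : ℕ, (T N : ℝ) ≥ (1 + ε) * (1 / Real.log 2) * (K N : ℝ) * Real.logb 2 N) :
    Tendsto (fun N => compSuccessProb N (K N) (T N) ⌊Real.log 2 * (T N : ℝ) / (K N : ℝ)⌋₊)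
      atTop (nhds 1) := by
  have hlog2 : 0 < Real.log 2 := Real.log_pos (by norm_num)
  have h1ε : (0:ℝ) < 1 + ε := by linarith
  set c0 : ℝ := (2:ℝ) ^ (-(1/(1+ε))) with hc0def
  have hc0a : 1/2 < c0 := by
    have h := (Real.rpow_lt_rpow_left_iff (x := 2) (y := (-1:ℝ))
      (z := -(1/(1+ε))) (by norm_num)).mpr
      (by
        rw [neg_lt_neg_iff, div_lt_one h1ε]
        linarith)
    rw [Real.rpow_neg_one] at h
    rw [hc0def]
    convert h using 1
    norm_num
  have hc0b : c0 < 1 := Real.rpow_lt_one_of_one_lt_of_neg (by norm_num)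
    (by rw [neg_neg_iff_pos]; positivity)
  set β : ℝ := (1/2 + c0)/2 with hβdef
  have hβa : 1/2 < β := by rw [hβdef]; linarith
  have hβb : β < c0 := by rw [hβdef]; linarith
  have hβ1 : β < 1 := by linarith
  have hβ0 : 0 < β := by linarith
  have hlogβ : Real.log β < -(1/(1+ε)) * Real.log 2 := by
    have h := Real.log_lt_log hβ0 hβb
    rwa [hc0def, Real.log_rpow (by norm_num)] at h
  set δ : ℝ := -(1 + (1+ε) * Real.log β / Real.log 2) with hδdef
  have hδ : 0 < δ := by
    have h2 : (1+ε) * Real.log β < -Real.log 2 := by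
      have h3 := (mul_lt_mul_iff_right₀ h1ε).mpr hlogβ
      calc (1+ε) * Real.log β < (1+ε) * (-(1/(1+ε)) * Real.log 2) := h3
        _ = -Real.log 2 := by field_simp
    have h4 : (1+ε) * Real.log β / Real.log 2 < -1 := by
      rw [div_lt_iff₀ hlog2]
      linarith
    rw [hδdef]
    linarith
  set L' : ℕ → ℕ := fun N => ⌊Real.log 2 * (T N : ℝ) / (K N : ℝ)⌋₊ with hL'def
  -- basic positivity facts
  have hrpow1 : ∀ N : ℕ, 1 ≤ N → (1:ℝ) ≤ (N:ℝ)^θ := by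
    intro N hN
    calc (1:ℝ) = 1^θ := (Real.one_rpow θ).symm
      _ ≤ (N:ℝ)^θ := Real.rpow_le_rpow zero_le_one (by exact_mod_cast hN) hθ0
  have hKpos : ∀ N : ℕ, 1 ≤ N → 0 < K N := by
    intro N hN
    have h1 := (hK N).1
    have h2 := hrpow1 N hN
    have : (0:ℝ) < (K N : ℝ) := by nlinarith
    exact_mod_cast this
  have hlogbN : ∀ N : ℕ, 1 ≤ N → Real.logb 2 N = Real.log N / Real.log 2 := by
    intro N _; rw [Real.logb]
  have hlogN0 : ∀ N : ℕ, 1 ≤ N → 0 ≤ Real.log N := by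
    intro N hN
    apply Real.log_nonneg
    exact_mod_cast hN
  -- T goes to infinity
  have hTlow : ∀ N : ℕ, 1 ≤ N → ((1+ε) * a / (Real.log 2)^2) * Real.log N ≤ (T N : ℝ) := by
    intro N hN
    have h1 := hT N
    have h2 := (hK N).1
    have h3 := hrpow1 N hN
    have h4 := hlogN0 N hN
    rw [hlogbN N hN] at h1
    have h5 : a ≤ (K N : ℝ) := by nlinarith
    have h6 : (1+ε) * (1/Real.log 2) * a * (Real.log N / Real.log 2)
        ≤ (1+ε) * (1/Real.log 2) * (K N : ℝ) * (Real.log N / Real.log 2) := by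
      have hpos : 0 ≤ (1+ε) * (1/Real.log 2) * (Real.log N / Real.log 2) := by positivity
      nlinarith
    calc ((1+ε) * a / (Real.log 2)^2) * Real.log N
        = (1+ε) * (1/Real.log 2) * a * (Real.log N / Real.log 2) := by
          rw [pow_two]
          field_simp
      _ ≤ (1+ε) * (1/Real.log 2) * (K N : ℝ) * (Real.log N / Real.log 2) := h6
      _ ≤ (T N : ℝ) := h1
  have hTinf : Tendsto (fun N : ℕ => (T N : ℝ)) atTop atTop := by
    apply tendsto_atTop_mono' atTop ?_ (Tendsto.const_mul_atTop
      (show (0:ℝ) < (1+ε) * a / (Real.log 2)^2 by positivity)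
      (Real.tendsto_log_atTop.comp tendsto_natCast_atTop_atTop))
    filter_upwards [eventually_ge_atTop 1] with N hN
    exact hTlow N hN
  -- the error terms
  have hg1 : Tendsto (fun N : ℕ => 4 / ((β - 1/2)^2 * (T N : ℝ))) atTop (nhds 0) := by
    apply Tendsto.div_atTop tendsto_const_nhds
    exact Tendsto.const_mul_atTop (pow_pos (by linarith : (0:ℝ) < β - 1/2) 2) hTinf
  have hLlow : ∀ N : ℕ, 1 ≤ N → (1+ε) * Real.log N / Real.log 2 - 1 ≤ (L' N : ℝ) := by
    intro N hN
    have hKp : (0:ℝ) < (K N : ℝ) := by exact_mod_cast hKpos N hN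
    have h1 := hT N
    rw [hlogbN N hN] at h1
    have h2 : (1+ε) * Real.log N / Real.log 2 ≤ Real.log 2 * (T N : ℝ) / (K N : ℝ) := by
      rw [div_le_div_iff₀ hlog2 hKp]
      have h3 : (1+ε) * (1/Real.log 2) * (K N : ℝ) * (Real.log N / Real.log 2)
            * (Real.log 2 * Real.log 2)
          ≤ (T N:ℝ) * (Real.log 2 * Real.log 2) :=
        mul_le_mul_of_nonneg_right h1 (by positivity)
      have h4 : (1+ε) * (1/Real.log 2) * (K N : ℝ) * (Real.log N / Real.log 2)
            * (Real.log 2 * Real.log 2)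
          = (1+ε) * Real.log N * (K N : ℝ) := by
        field_simp
      rw [h4] at h3
      have h5 : Real.log 2 * (T N:ℝ) * Real.log 2 = (T N:ℝ) * (Real.log 2 * Real.log 2) := by
        ring
      linarith
    have h4 := Nat.sub_one_lt_floor (Real.log 2 * (T N : ℝ) / (K N : ℝ))
    have h5 : ((⌊Real.log 2 * (T N : ℝ) / (K N : ℝ)⌋₊ : ℕ) : ℝ) = (L' N : ℝ) := by
      rw [hL'def]
    linarith [h4, h2, h5.ge]
  have hbound2 : ∀ᶠ N : ℕ in atTop, (N:ℝ) * β^(L' N) ≤ β⁻¹ * (N:ℝ)^(-δ) := by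
    filter_upwards [eventually_ge_atTop 1] with N hN
    have hN0 : (0:ℝ) < (N:ℝ) := by exact_mod_cast hN
    have hm := hLlow N hN
    have hstep : β^(L' N) ≤ β^((1+ε) * Real.log N / Real.log 2 - 1) := by
      rw [← Real.rpow_natCast β (L' N)]
      exact Real.rpow_le_rpow_of_exponent_ge hβ0 hβ1.le hm
    have e1 : β^((1+ε) * Real.log N / Real.log 2)
        = (N:ℝ)^((1+ε) * Real.log β / Real.log 2) := by
      rw [Real.rpow_def_of_pos hβ0, Real.rpow_def_of_pos hN0]
      congr 1
      ring
    have e2 : (N:ℝ) * β^((1+ε) * Real.log N / Real.log 2 - 1)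
        = β⁻¹ * (N:ℝ)^(-δ) := by
      rw [Real.rpow_sub hβ0, Real.rpow_one, e1]
      rw [show -δ = 1 + (1+ε) * Real.log β / Real.log 2 by rw [hδdef]; ring]
      rw [Real.rpow_add hN0, Real.rpow_one, div_eq_mul_inv]
      ring
    calc (N:ℝ) * β^(L' N) ≤ (N:ℝ) * β^((1+ε) * Real.log N / Real.log 2 - 1) := by
          apply mul_le_mul_of_nonneg_left hstep hN0.le
      _ = β⁻¹ * (N:ℝ)^(-δ) := e2
  have hg2 : Tendsto (fun N : ℕ => (N:ℝ) * β^(L' N)) atTop (nhds 0) := by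
    apply tendsto_of_tendsto_of_tendsto_of_le_of_le' (g := fun _ => (0:ℝ))
      (h := fun N : ℕ => β⁻¹ * (N:ℝ)^(-δ)) tendsto_const_nhds
    · have h1 : Tendsto (fun N : ℕ => (N:ℝ)^(-δ)) atTop (nhds 0) :=
        (tendsto_rpow_neg_atTop hδ).comp tendsto_natCast_atTop_atTop
      have h2 := h1.const_mul (β⁻¹)
      simpa using h2
    · filter_upwards with N
      positivity
    · exact hbound2
  -- eventual lower bound on the success probability
  have hKN : ∀ᶠ N : ℕ in atTop, K N ≤ N := by
    have h1 : Tendsto (fun N : ℕ => (N:ℝ)^(1-θ)) atTop atTop :=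
      (tendsto_rpow_atTop (by linarith)).comp tendsto_natCast_atTop_atTop
    filter_upwards [h1.eventually_ge_atTop b, eventually_ge_atTop 1] with N hb1 hN
    have hN0 : (0:ℝ) < (N:ℝ) := by exact_mod_cast hN
    have h2 := (hK N).2
    have h3 : (0:ℝ) ≤ (N:ℝ)^θ := Real.rpow_nonneg hN0.le θ
    have h4 : b * (N:ℝ)^θ ≤ (N:ℝ)^(1-θ) * (N:ℝ)^θ := by nlinarith
    have h5 : (N:ℝ)^(1-θ) * (N:ℝ)^θ = (N:ℝ) := by
      rw [← Real.rpow_add hN0]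
      norm_num
    have : (K N : ℝ) ≤ (N:ℝ) := by linarith
    exact_mod_cast this
  have hlower : ∀ᶠ N : ℕ in atTop,
      1 - (4 / ((β - 1/2)^2 * (T N : ℝ)) + (N:ℝ) * β^(L' N))
        ≤ compSuccessProb N (K N) (T N) (L' N) := by
    filter_upwards [hKN, hTinf.eventually_ge_atTop 2,
      hTinf.eventually_ge_atTop (4 / (β - 1/2)), eventually_ge_atTop 1]
      with N hKNle hT2 hTβ hN1
    have hT2' : 2 ≤ T N := by exact_mod_cast hT2
    have hKp : (0:ℝ) < (K N : ℝ) := by exact_mod_cast hKpos N hN1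
    have hKL : ((K N * L' N : ℕ):ℝ) ≤ Real.log 2 * T N := by
      push_cast
      have h1 : ((L' N : ℕ):ℝ) ≤ Real.log 2 * (T N : ℝ) / (K N : ℝ) := by
        rw [hL'def]
        exact Nat.floor_le (by positivity)
      calc (K N : ℝ) * (L' N : ℝ) ≤ (K N : ℝ) * (Real.log 2 * (T N : ℝ) / (K N : ℝ)) := by
            apply mul_le_mul_of_nonneg_left h1 hKp.le
        _ = Real.log 2 * (T N : ℝ) := by field_simp
    exact compSuccessProb_ge N (K N) (T N) (L' N) hKNle hT2' hKL β hβa hTβ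
  -- squeeze
  have hone : Tendsto (fun N : ℕ =>
      1 - (4 / ((β - 1/2)^2 * (T N : ℝ)) + (N:ℝ) * β^(L' N))) atTop (nhds 1) := by
    have := (hg1.add hg2).const_sub 1
    simpa using this
  apply tendsto_of_tendsto_of_tendsto_of_le_of_le' hone tendsto_const_nhds hlower
  filter_upwards with N
  exact compSuccessProb_le_one N (K N) (T N) (L' N)
end

section
/- Fix α > 0. There exists T₀ such that for all natural numbers T ≥ T₀ with α·T a natural number, the following holds: if α·T coupons are drawn independently and uniformly at random with replacement from a set of T coupons, and W denotes the number of distinct coupons drawn, then for every δ > 0, P( |W − (1 − e^{−α})·T| ≥ δ ) ≤ 2·exp( −δ²/(α·T) ). -/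
open Real Finset


open Real

-- analytic core of Hoeffding's lemma
lemma hoeff_core (p t : ℝ) (hp0 : 0 ≤ p) (hp1 : p ≤ 1) :
    (1 - p) * exp (-(t * p)) + p * exp (t * (1 - p)) ≤ exp (t ^ 2 / 8) := by
  -- define F s = s^2/8 + s*p - log (1 - p + p * exp s); show F ≥ 0
  have hden : ∀ s : ℝ, 0 < 1 - p + p * exp s := by
    intro s
    rcases hp0.lt_or_eq with h | h
    · nlinarith [exp_pos s]
    · rw [← h]; norm_num
  set F : ℝ → ℝ := fun s => s ^ 2 / 8 + s * p - Real.log (1 - p + p * exp s) with hF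
  set F' : ℝ → ℝ := fun s => s / 4 + p - p * exp s / (1 - p + p * exp s) with hF'
  have hderiv : ∀ s : ℝ, HasDerivAt F (F' s) s := by
    intro s
    have h1 : HasDerivAt (fun s : ℝ => 1 - p + p * exp s) (p * exp s) s := by
      simpa using ((Real.hasDerivAt_exp s).const_mul p).const_add (1 - p)
    have h2 : HasDerivAt (fun s : ℝ => Real.log (1 - p + p * exp s))
        (p * exp s / (1 - p + p * exp s)) s := h1.log (hden s).ne'
    have h3 : HasDerivAt (fun s : ℝ => s ^ 2 / 8 + s * p) (s / 4 + p) s := by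
      have := ((hasDerivAt_pow 2 s).div_const 8).add ((hasDerivAt_id s).mul_const p)
      refine this.congr_deriv ?_
      ring
    exact h3.sub h2
  have hderiv' : ∀ s : ℝ, HasDerivAt F'
      (1 / 4 - p * exp s * (1 - p) / (1 - p + p * exp s) ^ 2) s := by
    intro s
    have h1 : HasDerivAt (fun s : ℝ => p * exp s) (p * exp s) s :=
      (Real.hasDerivAt_exp s).const_mul p
    have h2 : HasDerivAt (fun s : ℝ => 1 - p + p * exp s) (p * exp s) s := by
      simpa using h1.const_add (1 - p)
    have h3 : HasDerivAt (fun s : ℝ => p * exp s / (1 - p + p * exp s))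
        ((p * exp s * (1 - p + p * exp s) - p * exp s * (p * exp s)) /
          (1 - p + p * exp s) ^ 2) s := h1.div h2 (hden s).ne'
    have h4 : HasDerivAt (fun s : ℝ => s / 4 + p) (1 / 4) s := by
      simpa using (hasDerivAt_id s).div_const 4 |>.add_const p
    have := h4.sub h3
    refine this.congr_deriv ?_
    field_simp
    ring
  have hF''nonneg : ∀ s : ℝ, 0 ≤ 1 / 4 - p * exp s * (1 - p) / (1 - p + p * exp s) ^ 2 := by
    intro s
    rw [sub_nonneg, div_le_iff₀ (pow_pos (hden s) 2)]
    nlinarith [sq_nonneg ((1 - p) - p * exp s), (hden s).le, exp_pos s]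
  -- F' is monotone
  have hmono' : Monotone F' := by
    apply monotone_of_deriv_nonneg
    · exact fun s => (hderiv' s).differentiableAt
    · intro s
      rw [(hderiv' s).deriv]
      exact hF''nonneg s
  have hF'0 : F' 0 = 0 := by
    simp [hF']
  have hF0 : F 0 = 0 := by simp [hF]
  have hFnonneg : ∀ s : ℝ, 0 ≤ F s := by
    intro s
    rcases le_total 0 s with h | h
    · have : MonotoneOn F (Set.Ici 0) := by
        apply monotoneOn_of_deriv_nonneg (convex_Ici 0)
          ((Differentiable.continuous fun x => (hderiv x).differentiableAt).continuousOn)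
        · intro x _
          exact (hderiv x).differentiableAt.differentiableWithinAt
        · intro x hx
          rw [(hderiv x).deriv]
          rw [← hF'0]
          exact hmono' (le_of_lt (by simpa using hx))
      calc (0:ℝ) = F 0 := hF0.symm
        _ ≤ F s := this (Set.mem_Ici.2 le_rfl) (Set.mem_Ici.2 h) h
    · have : AntitoneOn F (Set.Iic 0) := by
        apply antitoneOn_of_deriv_nonpos (convex_Iic 0)
          ((Differentiable.continuous fun x => (hderiv x).differentiableAt).continuousOn)
        · intro x _
          exact (hderiv x).differentiableAt.differentiableWithinAt
        · intro x hx
          rw [(hderiv x).deriv, ← hF'0]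
          exact hmono' (le_of_lt (by simpa using hx))
      calc (0:ℝ) = F 0 := hF0.symm
        _ ≤ F s := this (Set.mem_Iic.2 h) (Set.mem_Iic.2 le_rfl) h
  -- now conclude
  have h := hFnonneg t
  have hlog : Real.log (1 - p + p * exp t) ≤ t ^ 2 / 8 + t * p := by
    simp only [hF] at h; linarith
  have : 1 - p + p * exp t ≤ exp (t ^ 2 / 8 + t * p) := by
    rw [← Real.exp_log (hden t)]
    exact Real.exp_le_exp.2 hlog
  have key : (1 - p + p * exp t) * exp (-(t * p)) ≤ exp (t ^ 2 / 8) := by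
    calc (1 - p + p * exp t) * exp (-(t * p))
        ≤ exp (t ^ 2 / 8 + t * p) * exp (-(t * p)) := by
          apply mul_le_mul_of_nonneg_right this (exp_nonneg _)
      _ = exp (t ^ 2 / 8) := by rw [← Real.exp_add]; congr 1; ring
  calc (1 - p) * exp (-(t * p)) + p * exp (t * (1 - p))
      = (1 - p + p * exp t) * exp (-(t * p)) := by
        rw [show t * (1 - p) = t + -(t * p) by ring, Real.exp_add]
        ring
    _ ≤ exp (t ^ 2 / 8) := key


lemma hoeff_finset {ι : Type*} [Fintype ι] [Nonempty ι] (v : ι → ℝ)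
    (hmean : ∑ i, v i = 0) (hrange : ∀ i j, v i - v j ≤ 1) (t : ℝ) :
    ∑ i, exp (t * v i) ≤ (Fintype.card ι : ℝ) * exp (t ^ 2 / 8) := by
  obtain ⟨i₀, -, hmin⟩ := Finset.exists_min_image (univ : Finset ι) v ⟨Classical.arbitrary ι, mem_univ _⟩
  set a := v i₀ with ha
  have hcard : (0:ℝ) < Fintype.card ι := by
    exact_mod_cast Fintype.card_pos
  have hvge : ∀ i, a ≤ v i := fun i => hmin i (mem_univ i)
  have hvle : ∀ i, v i ≤ a + 1 := fun i => by have := hrange i i₀; linarith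
  have ha0 : a ≤ 0 := by
    by_contra h
    push_neg at h
    have : 0 < ∑ i, v i := by
      calc (0:ℝ) < Fintype.card ι * a := by positivity
        _ = ∑ _i : ι, a := by rw [Finset.sum_const, card_univ]; ring
        _ ≤ ∑ i, v i := Finset.sum_le_sum fun i _ => hvge i
    linarith
  have ha1 : -1 ≤ a := by
    obtain ⟨j, hj⟩ : ∃ j, 0 ≤ v j := by
      by_contra h
      push_neg at h
      have : ∑ i, v i < 0 :=
        Finset.sum_neg (fun i _ => h i) ⟨Classical.arbitrary ι, mem_univ _⟩
      linarith
    have := hrange j i₀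
    linarith
  have hconv : ∀ i, exp (t * v i) ≤
      (a + 1 - v i) * exp (t * a) + (v i - a) * exp (t * (a + 1)) := by
    intro i
    have h := convexOn_exp.2 (Set.mem_univ (t * a)) (Set.mem_univ (t * (a + 1)))
      (by linarith [hvle i] : (0:ℝ) ≤ a + 1 - v i)
      (by linarith [hvge i] : (0:ℝ) ≤ v i - a) (by ring)
    simpa [smul_eq_mul, show (a + 1 - v i) * (t * a) + (v i - a) * (t * (a + 1)) = t * v i by ring]
      using h
  calc ∑ i, exp (t * v i)
      ≤ ∑ i, ((a + 1 - v i) * exp (t * a) + (v i - a) * exp (t * (a + 1))) :=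
        Finset.sum_le_sum fun i _ => hconv i
    _ = (Fintype.card ι : ℝ) * ((a + 1) * exp (t * a) + (-a) * exp (t * (a + 1))) := by
        rw [Finset.sum_add_distrib, ← Finset.sum_mul, ← Finset.sum_mul]
        simp only [Finset.sum_sub_distrib, hmean, Finset.sum_const, card_univ, nsmul_eq_mul]
        ring
    _ ≤ (Fintype.card ι : ℝ) * exp (t ^ 2 / 8) := by
        apply mul_le_mul_of_nonneg_left _ hcard.le
        have := hoeff_core (-a) t (by linarith) (by linarith)
        calc (a + 1) * exp (t * a) + (-a) * exp (t * (a + 1))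
            = (1 - (-a)) * exp (-(t * (-a))) + (-a) * exp (t * (1 - (-a))) := by
              ring_nf
          _ ≤ exp (t ^ 2 / 8) := this


lemma mcdiarmid_mgf (T : ℕ) (hT : 0 < T) (t : ℝ) :
    ∀ n : ℕ, ∀ f : (Fin n → Fin T) → ℝ,
      (∀ x y : Fin n → Fin T, ∀ i : Fin n, (∀ j, j ≠ i → x j = y j) → f x ≤ f y + 1) →
      ∑ x, exp (t * f x) ≤
        (T : ℝ) ^ n * exp (n * t ^ 2 / 8 + t * ((∑ x, f x) / (T : ℝ) ^ n)) := by
  intro n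
  induction n with
  | zero =>
      intro f _
      haveI : Unique (Fin 0 → Fin T) := ⟨⟨fun i => i.elim0⟩, fun x => funext fun i => i.elim0⟩
      rw [Fintype.sum_unique fun x => exp (t * f x), Fintype.sum_unique f]
      simp
  | succ n IH =>
      intro f hf
      haveI : NeZero T := ⟨hT.ne'⟩
      haveI : Nonempty (Fin T) := ⟨⟨0, hT⟩⟩
      set g : (Fin n → Fin T) → ℝ := fun x => (∑ a : Fin T, f (Fin.cons a x)) / T with hg
      have hTpos : (0:ℝ) < T := by exact_mod_cast hT
      -- Lipschitz for cons in non-zero coordinates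
      have hcons_lip : ∀ (a : Fin T) (x y : Fin n → Fin T) (i : Fin n),
          (∀ j, j ≠ i → x j = y j) → f (Fin.cons a x) ≤ f (Fin.cons a y) + 1 := by
        intro a x y i hxy
        apply hf _ _ i.succ
        intro j hj
        rcases Fin.eq_zero_or_eq_succ j with h0 | ⟨k, rfl⟩
        · subst h0; simp
        · simp only [Fin.cons_succ]
          exact hxy k fun hki => hj (by rw [hki])
      have hg_lip : ∀ x y : Fin n → Fin T, ∀ i : Fin n,
          (∀ j, j ≠ i → x j = y j) → g x ≤ g y + 1 := by
        intro x y i hxy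
        rw [hg]
        simp only
        rw [div_add' _ _ _ hTpos.ne', div_le_div_iff_of_pos_right hTpos]
        have h1 : ∑ a : Fin T, f (Fin.cons a x) ≤ ∑ a : Fin T, (f (Fin.cons a y) + 1) :=
          Finset.sum_le_sum fun a _ => hcons_lip a x y i hxy
        have h2 : ∑ a : Fin T, (f (Fin.cons a y) + 1) = (∑ a : Fin T, f (Fin.cons a y)) + T := by
          rw [Finset.sum_add_distrib]; simp [card_univ]
        rw [h2] at h1
        linarith
      -- split the sum
      have hsplit : ∀ (F : (Fin (n+1) → Fin T) → ℝ),
          ∑ z, F z = ∑ x : Fin n → Fin T, ∑ a : Fin T, F (Fin.cons a x) := by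
        intro F
        rw [← (Fin.consEquiv fun _ : Fin (n+1) => Fin T).sum_comp F]
        rw [Fintype.sum_prod_type]
        rw [Finset.sum_comm]
        rfl
      -- per-x Hoeffding
      have hperx : ∀ x : Fin n → Fin T,
          ∑ a : Fin T, exp (t * f (Fin.cons a x)) ≤
            (T : ℝ) * exp (t ^ 2 / 8) * exp (t * g x) := by
        intro x
        set v : Fin T → ℝ := fun a => f (Fin.cons a x) - g x with hv
        have hvmean : ∑ a, v a = 0 := by
          simp only [hv, Finset.sum_sub_distrib, Finset.sum_const, card_univ,
            Fintype.card_fin, nsmul_eq_mul, hg]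
          field_simp
          ring
        have hvrange : ∀ a b : Fin T, v a - v b ≤ 1 := by
          intro a b
          have : f (Fin.cons a x) ≤ f (Fin.cons b x) + 1 := by
            apply hf _ _ 0
            intro j hj
            rcases Fin.eq_zero_or_eq_succ j with h0 | ⟨k, rfl⟩
            · exact absurd h0 hj
            · simp
          simp only [hv]; linarith
        have := hoeff_finset v hvmean hvrange t
        calc ∑ a : Fin T, exp (t * f (Fin.cons a x))
            = ∑ a : Fin T, exp (t * v a) * exp (t * g x) := by
              apply Finset.sum_congr rfl
              intro a _
              rw [← Real.exp_add]
              congr 1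
              simp only [hv]; ring
          _ = (∑ a : Fin T, exp (t * v a)) * exp (t * g x) := by
              rw [Finset.sum_mul]
          _ ≤ ((T : ℝ) * exp (t ^ 2 / 8)) * exp (t * g x) := by
              apply mul_le_mul_of_nonneg_right _ (exp_nonneg _)
              simpa using this
      -- sum of g
      have hsumg : ∑ x : Fin n → Fin T, g x = (∑ z, f z) / T := by
        rw [hsplit f, hg]
        simp only
        rw [← Finset.sum_div]
      have hIH := IH g hg_lip
      calc ∑ z, exp (t * f z)
          = ∑ x : Fin n → Fin T, ∑ a : Fin T, exp (t * f (Fin.cons a x)) :=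
            hsplit fun z => exp (t * f z)
        _ ≤ ∑ x : Fin n → Fin T, (T : ℝ) * exp (t ^ 2 / 8) * exp (t * g x) :=
            Finset.sum_le_sum fun x _ => hperx x
        _ = (T : ℝ) * exp (t ^ 2 / 8) * ∑ x, exp (t * g x) := by
            rw [← Finset.mul_sum]
        _ ≤ (T : ℝ) * exp (t ^ 2 / 8) *
            ((T : ℝ) ^ n * exp (n * t ^ 2 / 8 + t * ((∑ x, g x) / (T : ℝ) ^ n))) := by
            apply mul_le_mul_of_nonneg_left hIH (by positivity)
        _ = (T : ℝ) ^ (n+1) *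
            (exp (t ^ 2 / 8) * exp (n * t ^ 2 / 8 + t * ((∑ z, f z) / (T:ℝ) / (T:ℝ) ^ n))) := by
            rw [hsumg]; ring
        _ = (T : ℝ) ^ (n+1) *
            exp ((↑(n+1) : ℝ) * t ^ 2 / 8 + t * ((∑ z, f z) / (T : ℝ) ^ (n+1))) := by
            rw [← Real.exp_add]
            congr 1
            have hne : (T:ℝ) ≠ 0 := hTpos.ne'
            push_cast
            rw [pow_succ]
            field_simp
            ring


lemma tail_count (T c : ℕ) (hT : 0 < T) (hc : 0 < c) (f : (Fin c → Fin T) → ℝ)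
    (hf : ∀ x y : Fin c → Fin T, ∀ i : Fin c, (∀ j, j ≠ i → x j = y j) → f x ≤ f y + 1)
    (s : ℝ) (hs : 0 < s) :
    ((univ.filter fun x : Fin c → Fin T =>
        s ≤ f x - (∑ z, f z) / (T : ℝ) ^ c).card : ℝ) ≤
      (T : ℝ) ^ c * exp (-2 * s ^ 2 / c) := by
  set m : ℝ := (∑ z, f z) / (T : ℝ) ^ c with hm
  have hcpos : (0:ℝ) < c := by exact_mod_cast hc
  set t : ℝ := 4 * s / c with ht
  have htpos : 0 < t := by positivity
  set A := univ.filter fun x : Fin c → Fin T => s ≤ f x - m with hA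
  have h1 : (A.card : ℝ) * exp (t * (s + m)) ≤ ∑ x ∈ A, exp (t * f x) := by
    calc (A.card : ℝ) * exp (t * (s + m)) = ∑ _x ∈ A, exp (t * (s + m)) := by
          rw [Finset.sum_const, nsmul_eq_mul]
      _ ≤ ∑ x ∈ A, exp (t * f x) := ?_
    apply Finset.sum_le_sum
    intro x hx
    have := (Finset.mem_filter.1 hx).2
    apply Real.exp_le_exp.2
    nlinarith
  have h2 : ∑ x ∈ A, exp (t * f x) ≤ ∑ x, exp (t * f x) :=
    Finset.sum_le_sum_of_subset_of_nonneg (Finset.subset_univ A)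
      fun x _ _ => (exp_pos _).le
  have h3 := mcdiarmid_mgf T hT t c f hf
  have key : (A.card : ℝ) * exp (t * (s + m)) ≤
      (T : ℝ) ^ c * exp (c * t ^ 2 / 8 + t * m) := le_trans h1 (le_trans h2 h3)
  have hexp : (T : ℝ) ^ c * exp (c * t ^ 2 / 8 + t * m) =
      ((T : ℝ) ^ c * exp (-2 * s ^ 2 / c)) * exp (t * (s + m)) := by
    rw [mul_assoc, ← Real.exp_add]
    congr 2
    rw [ht]
    field_simp
    ring
  rw [hexp] at key
  exact le_of_mul_le_mul_right key (exp_pos _)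


lemma W_lip (T c : ℕ) (x y : Fin c → Fin T) (i : Fin c) (hxy : ∀ j, j ≠ i → x j = y j) :
    ((univ.image x).card : ℝ) ≤ ((univ.image y).card : ℝ) + 1 := by
  have hsub : univ.image x ⊆ insert (x i) (univ.image y) := by
    intro b hb
    obtain ⟨k, -, rfl⟩ := Finset.mem_image.1 hb
    by_cases hk : k = i
    · subst hk; exact Finset.mem_insert_self _ _
    · rw [hxy k hk]
      exact Finset.mem_insert_of_mem (Finset.mem_image_of_mem y (mem_univ k))
  have := le_trans (Finset.card_le_card hsub) (Finset.card_insert_le _ _)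
  exact_mod_cast this

lemma count_miss (T c : ℕ) (j : Fin T) :
    (univ.filter fun x : Fin c → Fin T => j ∉ univ.image x).card = (T - 1) ^ c := by
  have h1 : ∀ x : Fin c → Fin T, (j ∉ univ.image x) ↔ ∀ i, x i ≠ j := by
    intro x
    simp [Finset.mem_image]
  rw [Finset.filter_congr fun x _ => by rw [h1]]
  rw [← Fintype.card_subtype]
  rw [Fintype.card_congr (Equiv.subtypePiEquivPi (p := fun _ (b : Fin T) => b ≠ j))]
  rw [Fintype.card_pi]
  have : Fintype.card {b : Fin T // b ≠ j} = T - 1 := by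
    rw [Fintype.card_subtype_compl, Fintype.card_subtype_eq, Fintype.card_fin]
  simp [this]

lemma sum_W (T c : ℕ) (hT : 0 < T) :
    ∑ x : Fin c → Fin T, ((univ.image x).card : ℝ) =
      (T : ℝ) * ((T : ℝ) ^ c - ((T : ℝ) - 1) ^ c) := by
  have step1 : ∀ x : Fin c → Fin T,
      ((univ.image x).card : ℝ) = ∑ j : Fin T, if j ∈ univ.image x then (1:ℝ) else 0 := by
    intro x
    rw [Finset.sum_ite_mem]
    simp [Finset.univ_inter]
  simp_rw [step1]
  rw [Finset.sum_comm]
  have step2 : ∀ j : Fin T,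
      (∑ x : Fin c → Fin T, if j ∈ univ.image x then (1:ℝ) else 0) =
        (T : ℝ) ^ c - ((T : ℝ) - 1) ^ c := by
    intro j
    rw [Finset.sum_boole]
    have hsplit := Finset.card_filter_add_card_filter_not
      (s := (univ : Finset (Fin c → Fin T))) (p := fun x => j ∈ univ.image x)
    have hmiss := count_miss T c j
    rw [show (univ.filter fun x : Fin c → Fin T => j ∉ univ.image x)
      = (univ.filter fun x : Fin c → Fin T => ¬ (j ∈ univ.image x)) from rfl] at hmiss
    rw [hmiss] at hsplit
    rw [Finset.card_univ, Fintype.card_fun] at hsplit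
    simp only [Fintype.card_fin] at hsplit
    have hle : (T - 1) ^ c ≤ T ^ c := Nat.pow_le_pow_left (Nat.sub_le T 1) c
    have : (univ.filter fun x : Fin c → Fin T => j ∈ univ.image x).card
        = T ^ c - (T - 1) ^ c := by omega
    rw [this]
    push_cast [Nat.cast_sub hle, Nat.cast_sub hT]
    ring
  simp_rw [step2]
  rw [Finset.sum_const, card_univ, Fintype.card_fin, nsmul_eq_mul]

set_option maxHeartbeats 1000000 in
/-- Concentration of the number of distinct coupons: for `α > 0`, for all sufficiently large
`T`, if `c = α·T` coupons are drawn independently and uniformly at random with replacement from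
a set of `T` coupons, then for every `δ > 0` the number `W` of distinct coupons drawn satisfies
`P(|W − (1 − e^{−α})·T| ≥ δ) ≤ 2·exp(−δ²/(α·T))`.  The probability is the counting probability
over the uniform space of all draw sequences `Fin c → Fin T`. -/
theorem coupon_collector_concentration (α : ℝ) (hα : 0 < α) :
    ∃ T₀ : ℕ, ∀ T : ℕ, T₀ ≤ T → ∀ c : ℕ, (c : ℝ) = α * T → ∀ δ : ℝ, 0 < δ →
      (Nat.card {f : Fin c → Fin T //
          |((Finset.univ.image f).card : ℝ) - (1 - Real.exp (-α)) * T| ≥ δ} : ℝ) /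
        (Nat.card (Fin c → Fin T) : ℝ)
      ≤ 2 * Real.exp (-δ ^ 2 / (α * T)) := by
  classical
  refine ⟨max 2 (⌈128 * (α + 1) ^ 2 / α⌉₊ + 1), ?_⟩
  intro T hT c hc δ hδ
  have hT2 : 2 ≤ T := le_trans (le_max_left _ _) hT
  have hTpos : 0 < T := by omega
  have hTR : (2 : ℝ) ≤ (T : ℝ) := by exact_mod_cast hT2
  have hTRpos : (0 : ℝ) < T := by linarith
  have hTne : (T : ℝ) ≠ 0 := hTRpos.ne'
  have hαT : 128 * (α + 1) ^ 2 ≤ α * T := by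
    have h1 : (⌈128 * (α + 1) ^ 2 / α⌉₊ + 1 : ℕ) ≤ T := le_trans (le_max_right _ _) hT
    have h2 : 128 * (α + 1) ^ 2 / α ≤ (⌈128 * (α + 1) ^ 2 / α⌉₊ : ℝ) := Nat.le_ceil _
    have h3 : ((⌈128 * (α + 1) ^ 2 / α⌉₊ : ℕ) : ℝ) ≤ T := by
      exact_mod_cast le_trans (Nat.le_succ _) h1
    rw [div_le_iff₀ hα] at h2
    calc 128 * (α + 1) ^ 2 ≤ (⌈128 * (α + 1) ^ 2 / α⌉₊ : ℝ) * α := h2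
      _ ≤ (T : ℝ) * α := mul_le_mul_of_nonneg_right h3 hα.le
      _ = α * T := by ring
  have hcR : (c : ℝ) = α * T := hc
  have hcRpos : (0 : ℝ) < c := by rw [hcR]; positivity
  have hcpos : 0 < c := by exact_mod_cast hcRpos
  have hcne : (c : ℝ) ≠ 0 := hcRpos.ne'
  -- abbreviations
  set W : (Fin c → Fin T) → ℝ := fun x => ((univ.image x).card : ℝ) with hW
  set μ : ℝ := (1 - Real.exp (-α)) * T with hμ
  set m : ℝ := (∑ z, W z) / (T : ℝ) ^ c with hm
  -- Lipschitz hypotheses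
  have hWlip : ∀ x y : Fin c → Fin T, ∀ i : Fin c,
      (∀ j, j ≠ i → x j = y j) → W x ≤ W y + 1 := fun x y i h => W_lip T c x y i h
  have hWlip' : ∀ x y : Fin c → Fin T, ∀ i : Fin c,
      (∀ j, j ≠ i → x j = y j) → -W x ≤ -W y + 1 := by
    intro x y i h
    have := W_lip T c y x i fun j hj => (h j hj).symm
    simp only [hW] at this ⊢
    linarith
  -- mean computation
  set q : ℝ := ((T : ℝ) - 1) / T with hq
  have hmq : m = (T : ℝ) * (1 - q ^ c) := by
    rw [hm, hW, sum_W T c hTpos, hq, div_pow]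
    field_simp
  have hq0 : 0 ≤ q := by
    rw [hq]
    apply div_nonneg _ hTRpos.le
    linarith
  have hT1pos : (0 : ℝ) < (T : ℝ) - 1 := by linarith
  -- upper bound on q^c
  have hqa : q ^ c ≤ Real.exp (-α) := by
    have h1 : q ≤ Real.exp (-(1 / (T : ℝ))) := by
      have h2 := Real.add_one_le_exp (-(1 / (T : ℝ)))
      have h3 : q = 1 - 1 / (T : ℝ) := by rw [hq]; field_simp
      rw [h3]; linarith
    calc q ^ c ≤ Real.exp (-(1 / (T : ℝ))) ^ c := pow_le_pow_left₀ hq0 h1 c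
      _ = Real.exp ((c : ℝ) * (-(1 / (T : ℝ)))) := (Real.exp_nat_mul _ c).symm
      _ = Real.exp (-α) := by
          congr 1
          rw [hcR]
          field_simp
  -- lower bound on q^c
  have hqb : Real.exp (-α) - q ^ c ≤ 2 * α / T := by
    have h1 : Real.exp (-(1 / ((T : ℝ) - 1))) ≤ q := by
      have h2 := Real.add_one_le_exp (1 / ((T : ℝ) - 1))
      have h3 : (T : ℝ) / ((T : ℝ) - 1) ≤ Real.exp (1 / ((T : ℝ) - 1)) := by
        have : (T : ℝ) / ((T : ℝ) - 1) = 1 / ((T : ℝ) - 1) + 1 := by field_simp; ring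
        linarith
      have h4 : ((T : ℝ) / ((T : ℝ) - 1))⁻¹ = q := by rw [inv_div, hq]
      calc Real.exp (-(1 / ((T : ℝ) - 1))) = (Real.exp (1 / ((T : ℝ) - 1)))⁻¹ :=
            Real.exp_neg _
        _ ≤ ((T : ℝ) / ((T : ℝ) - 1))⁻¹ := by
            apply inv_anti₀ (by positivity) h3
        _ = q := h4
    have hlow : Real.exp (-((c : ℝ) / ((T : ℝ) - 1))) ≤ q ^ c := by
      calc Real.exp (-((c : ℝ) / ((T : ℝ) - 1)))
          = Real.exp ((c : ℝ) * (-(1 / ((T : ℝ) - 1)))) := by congr 1; field_simp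
        _ = Real.exp (-(1 / ((T : ℝ) - 1))) ^ c := Real.exp_nat_mul _ c
        _ ≤ q ^ c := pow_le_pow_left₀ (Real.exp_nonneg _) h1 c
    set u : ℝ := (c : ℝ) / ((T : ℝ) - 1) - α with hu
    have hu_eq : u = α / ((T : ℝ) - 1) := by
      rw [hu, hcR]
      field_simp
      ring
    have hu0 : 0 ≤ u := by rw [hu_eq]; positivity
    have hsplitexp : Real.exp (-((c : ℝ) / ((T : ℝ) - 1))) =
        Real.exp (-α) * Real.exp (-u) := by
      rw [← Real.exp_add]
      congr 1
      rw [hu]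
      ring
    have h1mu : 1 - Real.exp (-u) ≤ u := by
      have := Real.add_one_le_exp (-u)
      linarith
    have hea1 : Real.exp (-α) ≤ 1 := by
      rw [show (1:ℝ) = Real.exp 0 from (Real.exp_zero).symm]
      exact Real.exp_le_exp.2 (by linarith)
    have hstep : Real.exp (-α) - q ^ c ≤ u := by
      have hlow' : Real.exp (-α) * Real.exp (-u) ≤ q ^ c := by
        rw [← hsplitexp]; exact hlow
      have hexpu1 : Real.exp (-u) ≤ 1 := by
        rw [show (1:ℝ) = Real.exp 0 from (Real.exp_zero).symm]
        exact Real.exp_le_exp.2 (by linarith)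
      have e2 : Real.exp (-α) * (1 - Real.exp (-u)) ≤ 1 * u :=
        mul_le_mul hea1 h1mu (by linarith) (by norm_num)
      nlinarith
    have hfin : u ≤ 2 * α / T := by
      rw [hu_eq, div_le_div_iff₀ hT1pos hTRpos]
      nlinarith [mul_nonneg hα.le (sub_nonneg.2 hTR)]
    exact hstep.trans hfin
  -- distance between μ and the true mean
  have hdiff : μ - m = (T : ℝ) * (q ^ c - Real.exp (-α)) := by
    rw [hμ, hmq]; ring
  have hΔ : |μ - m| ≤ 2 * α := by
    rw [abs_le]
    constructor
    · rw [hdiff]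
      have : q ^ c - Real.exp (-α) ≥ -(2 * α / T) := by linarith
      calc -(2 * α) = (T : ℝ) * (-(2 * α / T)) := by field_simp
        _ ≤ (T : ℝ) * (q ^ c - Real.exp (-α)) :=
            mul_le_mul_of_nonneg_left this hTRpos.le
    · rw [hdiff]
      nlinarith
  -- rewrite the counting cardinalities
  have hNfun : (Nat.card (Fin c → Fin T) : ℝ) = (T : ℝ) ^ c := by
    simp [Nat.card_eq_fintype_card]
  set P : (Fin c → Fin T) → Prop := fun x => |W x - μ| ≥ δ with hP
  have hNsub : (Nat.card {f : Fin c → Fin T //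
      |((Finset.univ.image f).card : ℝ) - (1 - Real.exp (-α)) * T| ≥ δ} : ℝ)
      = ((univ.filter P).card : ℝ) := by
    rw [Nat.card_eq_fintype_card, Fintype.card_subtype]
  rw [hNsub, hNfun]
  have hTcpos : (0 : ℝ) < (T : ℝ) ^ c := by positivity
  by_cases hδ8 : δ ≤ 8 * (α + 1)
  · -- small δ: trivially bounded by 1
    have hlhs : ((univ.filter P).card : ℝ) / (T : ℝ) ^ c ≤ 1 := by
      rw [div_le_one hTcpos]
      have := Finset.card_filter_le (univ : Finset (Fin c → Fin T)) P
      calc ((univ.filter P).card : ℝ) ≤ ((univ : Finset (Fin c → Fin T)).card : ℝ) := by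
            exact_mod_cast this
        _ = (T : ℝ) ^ c := by
            rw [card_univ]
            simp
    have hx : δ ^ 2 / (α * T) ≤ 1 / 2 := by
      have hsq : δ ^ 2 ≤ (8 * (α + 1)) ^ 2 := by
        apply pow_le_pow_left₀ hδ.le hδ8
      have hsq' : (8 * (α + 1)) ^ 2 = 64 * (α + 1) ^ 2 := by ring
      rw [div_le_iff₀ (by positivity : (0:ℝ) < α * T)]
      linarith
    have hrhs : (1 : ℝ) ≤ 2 * Real.exp (-δ ^ 2 / (α * T)) := by
      have h2 := Real.add_one_le_exp (-(δ ^ 2 / (α * T)))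
      have : -δ ^ 2 / (α * T) = -(δ ^ 2 / (α * T)) := by ring
      rw [this]
      linarith
    linarith
  · -- large δ: Chernoff
    push_neg at hδ8
    set s : ℝ := 3 * δ / 4 with hs
    have hspos : 0 < s := by rw [hs]; linarith
    have h1 := tail_count T c hTpos hcpos W hWlip s hspos
    have h2 := tail_count T c hTpos hcpos (fun x => -W x) hWlip' s hspos
    have hsumneg : (∑ z, (fun x => -W x) z) / (T : ℝ) ^ c = -m := by
      have hneg : (∑ z, (fun x => -W x) z) = -∑ z, W z := by simp
      rw [hneg, hm, neg_div]
    -- the event is inside the union of the two tails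
    have hsubset : univ.filter P ⊆
        (univ.filter fun x : Fin c → Fin T => s ≤ W x - (∑ z, W z) / (T : ℝ) ^ c) ∪
        (univ.filter fun x : Fin c → Fin T =>
          s ≤ (fun x => -W x) x - (∑ z, (fun x => -W x) z) / (T : ℝ) ^ c) := by
      intro x hx
      have hPx : δ ≤ |W x - μ| := (Finset.mem_filter.1 hx).2
      have habs : s ≤ |W x - m| := by
        have h0 := abs_sub_abs_le_abs_sub (W x - μ) (W x - m)
        have h3 : |(W x - μ) - (W x - m)| = |μ - m| := by
          rw [show (W x - μ) - (W x - m) = -(μ - m) by ring, abs_neg]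
        rw [h3] at h0
        rw [hs]
        have h2α : 2 * α ≤ δ / 4 := by linarith
        linarith [hΔ, hPx, h0]
      rw [Finset.mem_union]
      rcases le_abs.1 habs with h | h
      · left
        rw [Finset.mem_filter]
        exact ⟨mem_univ _, by rw [← hm]; exact h⟩
      · right
        rw [Finset.mem_filter]
        refine ⟨mem_univ _, ?_⟩
        rw [hsumneg]
        simp only
        linarith
    have hcount : ((univ.filter P).card : ℝ) ≤
        2 * ((T : ℝ) ^ c * Real.exp (-2 * s ^ 2 / c)) := by
      have hcard := Finset.card_le_card hsubset
      have hcard2 := le_trans hcard (Finset.card_union_le _ _)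
      have : ((univ.filter P).card : ℝ) ≤
          ((univ.filter fun x : Fin c → Fin T =>
            s ≤ W x - (∑ z, W z) / (T : ℝ) ^ c).card : ℝ) +
          ((univ.filter fun x : Fin c → Fin T =>
            s ≤ (fun x => -W x) x - (∑ z, (fun x => -W x) z) / (T : ℝ) ^ c).card : ℝ) := by
        exact_mod_cast hcard2
      linarith [h1, h2, this]
    rw [div_le_iff₀ hTcpos]
    have hexp_mono : Real.exp (-2 * s ^ 2 / c) ≤ Real.exp (-δ ^ 2 / (α * T)) := by
      apply Real.exp_le_exp.2
      rw [← hcR, div_le_div_iff_of_pos_right hcRpos]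
      rw [hs]
      nlinarith
    calc ((univ.filter P).card : ℝ)
        ≤ 2 * ((T : ℝ) ^ c * Real.exp (-2 * s ^ 2 / c)) := hcount
      _ ≤ 2 * ((T : ℝ) ^ c * Real.exp (-δ ^ 2 / (α * T))) := by
          apply mul_le_mul_of_nonneg_left _ (by norm_num)
          exact mul_le_mul_of_nonneg_left hexp_mono hTcpos.le
      _ = 2 * Real.exp (-δ ^ 2 / (α * T)) * (T : ℝ) ^ c := by ring
end

section
/- Let T, L, w be natural numbers with w ≤ T, fix a subset B of the T coupons with |B| = w, and draw L coupons independently and uniformly at random with replacement from the T coupons. Let J be the number of distinct coupons drawn that lie outside B. Then for every 0 ≤ j ≤ L, P(J = j) = ( (T−w)·(T−w−1)···(T−w−j+1) / T^L ) · ∑_{s=0}^{L−j} binom(L,s)·S(L−s, j)·w^s. -/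
open Finset

/-- The Stirling number of the second kind,
`S(n,k) = (1/k!)·∑_{i=0}^{k} (−1)^{k−i}·C(k,i)·i^n`. -/
noncomputable def stirlingSecond (n k : ℕ) : ℝ :=
  (1 / (k.factorial : ℝ)) *
    ∑ i ∈ Finset.range (k + 1), (-1 : ℝ) ^ (k - i) * (Nat.choose k i : ℝ) * (i : ℝ) ^ n

private lemma mem_inf_sets {α β : Type*} [Fintype β] [DecidableEq β] (t : Finset α)
    (F : α → Finset β) (b : β) : b ∈ t.inf F ↔ ∀ a ∈ t, b ∈ F a := by
  induction t using Finset.cons_induction with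
  | empty => simp
  | cons a t ha ih => simp [Finset.inf_cons, Finset.forall_mem_cons, ih]

private lemma count_lemma (T L w : ℕ) (B : Finset (Fin T)) (hB : B.card = w) (j : ℕ) :
    ((Finset.univ.filter (fun f : Fin L → Fin T =>
        ((Finset.univ.image f) \ B).card = j)).card : ℤ)
      = (Nat.choose (T - w) j : ℤ) *
        ∑ i ∈ Finset.range (j + 1),
          (Nat.choose j i : ℤ) * ((-1 : ℤ) ^ i * ((w + j - i : ℕ) : ℤ) ^ L) := by
  classical
  have hmaps : ∀ f ∈ (Finset.univ.filter (fun f : Fin L → Fin T =>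
      ((Finset.univ.image f) \ B).card = j)),
      (Finset.univ.image f) \ B ∈ Bᶜ.powersetCard j := by
    intro f hf
    rw [Finset.mem_filter] at hf
    rw [Finset.mem_powersetCard]
    refine ⟨fun x hx => ?_, hf.2⟩
    rw [Finset.mem_sdiff] at hx
    simpa using hx.2
  rw [Finset.card_eq_sum_card_fiberwise hmaps]
  have hfib : ∀ A ∈ Bᶜ.powersetCard j,
      ((Finset.univ.filter (fun f : Fin L → Fin T =>
          ((Finset.univ.image f) \ B).card = j)).filter
        (fun f => (Finset.univ.image f) \ B = A))
      = Finset.univ.filter (fun f : Fin L → Fin T => (Finset.univ.image f) \ B = A) := by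
    intro A hA
    rw [Finset.mem_powersetCard] at hA
    rw [Finset.filter_filter]
    apply Finset.filter_congr
    intro f _
    constructor
    · exact fun h => h.2
    · exact fun h => ⟨by rw [h, hA.2], h⟩
  have key : ∀ A ∈ Bᶜ.powersetCard j,
      ((Finset.univ.filter (fun f : Fin L → Fin T =>
          (Finset.univ.image f) \ B = A)).card : ℤ)
      = ∑ i ∈ Finset.range (j + 1),
          (Nat.choose j i : ℤ) * ((-1 : ℤ) ^ i * ((w + j - i : ℕ) : ℤ) ^ L) := by
    intro A hA
    rw [Finset.mem_powersetCard] at hA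
    obtain ⟨hAsub, hAcard⟩ := hA
    have hdisj : Disjoint B A := by
      rw [Finset.disjoint_right]
      intro a ha
      simpa using hAsub ha
    have h := Finset.inclusion_exclusion_sum_inf_compl (G := ℤ) A
        (fun a : Fin T => Finset.univ.filter (fun f : Fin L → Fin T => a ∉ Finset.univ.image f))
        (fun f => if ∀ l, f l ∈ B ∪ A then (1 : ℤ) else 0)
    rw [Finset.sum_boole] at h
    have hL : ((A.inf fun a =>
        (Finset.univ.filter (fun f : Fin L → Fin T => a ∉ Finset.univ.image f))ᶜ).filter
          (fun f => ∀ l, f l ∈ B ∪ A))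
        = Finset.univ.filter (fun f : Fin L → Fin T => (Finset.univ.image f) \ B = A) := by
      ext f
      simp only [Finset.mem_filter, mem_inf_sets, Finset.mem_compl, Finset.mem_univ, true_and,
        not_not]
      constructor
      · rintro ⟨h1, h2⟩
        apply Finset.Subset.antisymm
        · intro x hx
          rw [Finset.mem_sdiff] at hx
          obtain ⟨hxi, hxB⟩ := hx
          rw [Finset.mem_image] at hxi
          obtain ⟨l, _, rfl⟩ := hxi
          rcases Finset.mem_union.1 (h2 l) with hc | hc
          · exact absurd hc hxB
          · exact hc
        · intro a ha
          rw [Finset.mem_sdiff]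
          exact ⟨h1 a ha, fun hb => Finset.disjoint_left.1 hdisj hb ha⟩
      · rintro rfl
        refine ⟨fun a ha => (Finset.mem_sdiff.1 ha).1, fun l => ?_⟩
        by_cases hb : f l ∈ B
        · exact Finset.mem_union_left _ hb
        · refine Finset.mem_union_right _ ?_
          rw [Finset.mem_sdiff]
          exact ⟨Finset.mem_image_of_mem f (Finset.mem_univ l), hb⟩
    rw [hL] at h
    have hR : ∀ t ∈ A.powerset,
        (∑ f ∈ t.inf (fun a : Fin T =>
            Finset.univ.filter (fun f : Fin L → Fin T => a ∉ Finset.univ.image f)),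
          (if ∀ l, f l ∈ B ∪ A then (1 : ℤ) else 0))
        = ((w + j - t.card : ℕ) : ℤ) ^ L := by
      intro t ht
      rw [Finset.mem_powerset] at ht
      rw [Finset.sum_boole]
      have hset : ((t.inf (fun a : Fin T =>
          Finset.univ.filter (fun f : Fin L → Fin T => a ∉ Finset.univ.image f))).filter
            (fun f => ∀ l, f l ∈ B ∪ A))
          = Fintype.piFinset (fun _ : Fin L => (B ∪ A) \ t) := by
        ext f
        simp only [Finset.mem_filter, mem_inf_sets, Finset.mem_univ, true_and,
          Fintype.mem_piFinset]
        constructor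
        · rintro ⟨h1, h2⟩
          intro l
          rw [Finset.mem_sdiff]
          refine ⟨h2 l, fun hmem => ?_⟩
          exact h1 _ hmem (Finset.mem_image_of_mem f (Finset.mem_univ l))
        · intro hall
          constructor
          · intro a hat
            intro haimg
            rw [Finset.mem_image] at haimg
            obtain ⟨l, _, rfl⟩ := haimg
            exact (Finset.mem_sdiff.1 (hall l)).2 hat
          · exact fun l => (Finset.mem_sdiff.1 (hall l)).1
      rw [hset]
      rw [Fintype.card_piFinset]
      have hcard : ((B ∪ A) \ t).card = w + j - t.card := by
        rw [Finset.card_sdiff_of_subset (ht.trans Finset.subset_union_right),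
          Finset.card_union_of_disjoint hdisj, hB, hAcard]
      rw [hcard]
      push_cast
      rw [Finset.prod_const, Finset.card_univ, Fintype.card_fin]
    have h2 : (∑ t ∈ A.powerset, ((-1 : ℤ) ^ t.card •
          ∑ f ∈ t.inf (fun a : Fin T =>
              Finset.univ.filter (fun f : Fin L → Fin T => a ∉ Finset.univ.image f)),
            (if ∀ l, f l ∈ B ∪ A then (1 : ℤ) else 0)))
        = ∑ t ∈ A.powerset, ((-1 : ℤ) ^ t.card * ((w + j - t.card : ℕ) : ℤ) ^ L) :=
      Finset.sum_congr rfl fun t ht => by rw [hR t ht, smul_eq_mul]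
    rw [h, h2]
    have h3 := Finset.sum_powerset_apply_card
      (f := fun m => (-1 : ℤ) ^ m * ((w + j - m : ℕ) : ℤ) ^ L) (x := A)
    rw [h3, hAcard]
    refine Finset.sum_congr rfl fun i _ => ?_
    rw [nsmul_eq_mul]
  rw [Nat.cast_sum]
  have h4 : ∀ A ∈ Bᶜ.powersetCard j,
      (((((Finset.univ.filter (fun f : Fin L → Fin T =>
          ((Finset.univ.image f) \ B).card = j))).filter
          (fun f => (Finset.univ.image f) \ B = A)).card : ℤ))
      = ∑ i ∈ Finset.range (j + 1),
          (Nat.choose j i : ℤ) * ((-1 : ℤ) ^ i * ((w + j - i : ℕ) : ℤ) ^ L) := by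
    intro A hA
    rw [hfib A hA]
    exact key A hA
  rw [Finset.sum_congr rfl h4, Finset.sum_const, Finset.card_powersetCard, Finset.card_compl,
    hB, Fintype.card_fin, nsmul_eq_mul]


private lemma alt_sum_zero (j n : ℕ) (hn : n < j) :
    ∑ i ∈ Finset.range (j + 1), (-1 : ℝ) ^ (j - i) * (Nat.choose j i : ℝ) * (i : ℝ) ^ n = 0 := by
  have h0 := count_lemma j n 0 ∅ (by simp) j
  have hempty : (Finset.univ.filter (fun f : Fin n → Fin j =>
      ((Finset.univ.image f) \ (∅ : Finset (Fin j))).card = j)).card = 0 := by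
    rw [Finset.card_eq_zero, Finset.filter_eq_empty_iff]
    intro f _
    rw [Finset.sdiff_empty]
    intro hc
    have h1 : (Finset.univ.image f).card ≤ n :=
      le_trans Finset.card_image_le (by simp)
    omega
  rw [hempty] at h0
  simp only [Nat.sub_zero, Nat.choose_self, Nat.cast_one, one_mul, Nat.cast_zero,
    Nat.zero_add] at h0
  rw [← Finset.sum_range_reflect]
  have hcongr : ∀ i ∈ Finset.range (j + 1),
      (-1 : ℝ) ^ (j - (j + 1 - 1 - i)) * (Nat.choose j (j + 1 - 1 - i) : ℝ) *
        ((j + 1 - 1 - i : ℕ) : ℝ) ^ n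
      = (Nat.choose j i : ℝ) * ((-1 : ℝ) ^ i * ((j - i : ℕ) : ℝ) ^ n) := by
    intro i hi
    rw [Finset.mem_range] at hi
    have hij : i ≤ j := by omega
    have e1 : j + 1 - 1 - i = j - i := by omega
    have e2 : j - (j - i) = i := by omega
    rw [e1, e2, Nat.choose_symm hij]
    ring
  rw [Finset.sum_congr rfl hcongr]
  have h2 := congrArg (fun z : ℤ => (z : ℝ)) h0
  push_cast at h2
  linarith [h2]

/-- Distribution of the number of distinct coupons outside a fixed set: draw `L` coupons
independently and uniformly at random with replacement from `T` coupons, fix `B` of size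
`w ≤ T`, and let `J` be the number of distinct coupons drawn lying outside `B`.  Then
`P(J = j) = ((T−w)·(T−w−1)···(T−w−j+1)/T^L)·∑_{s=0}^{L−j} C(L,s)·S(L−s,j)·w^s`. -/
theorem distinct_coupons_outside_distribution (T L w : ℕ) (hw : w ≤ T)
    (B : Finset (Fin T)) (hB : B.card = w) (j : ℕ) (hj : j ≤ L) :
    (Nat.card {f : Fin L → Fin T // ((Finset.univ.image f) \ B).card = j} : ℝ) / (T : ℝ) ^ L
      = ((Nat.descFactorial (T - w) j : ℝ) / (T : ℝ) ^ L) *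
        ∑ s ∈ Finset.range (L - j + 1),
          (Nat.choose L s : ℝ) * stirlingSecond (L - s) j * (w : ℝ) ^ s := by
  classical
  have hE : ∀ s : ℕ, (j.factorial : ℝ) * stirlingSecond (L - s) j
      = ∑ i ∈ Finset.range (j + 1),
          (-1 : ℝ) ^ (j - i) * (Nat.choose j i : ℝ) * (i : ℝ) ^ (L - s) := by
    intro s
    rw [stirlingSecond, ← mul_assoc, mul_one_div,
      div_self (Nat.cast_ne_zero.2 j.factorial_ne_zero), one_mul]
  have hSigma : (∑ i ∈ Finset.range (j + 1),
        (Nat.choose j i : ℝ) * ((-1 : ℝ) ^ i * ((w + j - i : ℕ) : ℝ) ^ L))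
      = (j.factorial : ℝ) * ∑ s ∈ Finset.range (L - j + 1),
          (Nat.choose L s : ℝ) * stirlingSecond (L - s) j * (w : ℝ) ^ s := by
    calc (∑ i ∈ Finset.range (j + 1),
          (Nat.choose j i : ℝ) * ((-1 : ℝ) ^ i * ((w + j - i : ℕ) : ℝ) ^ L))
        = ∑ i ∈ Finset.range (j + 1),
            (-1 : ℝ) ^ (j - i) * (Nat.choose j i : ℝ) * ((w : ℝ) + (i : ℝ)) ^ L := by
          rw [← Finset.sum_range_reflect]
          refine Finset.sum_congr rfl fun i hi => ?_
          rw [Finset.mem_range] at hi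
          have hij : i ≤ j := by omega
          have e1 : j + 1 - 1 - i = j - i := by omega
          have e2 : w + j - (j - i) = w + i := by omega
          rw [e1, e2, Nat.choose_symm hij]
          push_cast
          ring
      _ = ∑ i ∈ Finset.range (j + 1), ∑ s ∈ Finset.range (L + 1),
            (-1 : ℝ) ^ (j - i) * (Nat.choose j i : ℝ) *
              ((w : ℝ) ^ s * (i : ℝ) ^ (L - s) * (Nat.choose L s : ℝ)) := by
          refine Finset.sum_congr rfl fun i _ => ?_
          rw [add_pow, Finset.mul_sum]
      _ = ∑ s ∈ Finset.range (L + 1), ∑ i ∈ Finset.range (j + 1),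
            (-1 : ℝ) ^ (j - i) * (Nat.choose j i : ℝ) *
              ((w : ℝ) ^ s * (i : ℝ) ^ (L - s) * (Nat.choose L s : ℝ)) := Finset.sum_comm
      _ = ∑ s ∈ Finset.range (L + 1), (Nat.choose L s : ℝ) *
            (∑ i ∈ Finset.range (j + 1),
              (-1 : ℝ) ^ (j - i) * (Nat.choose j i : ℝ) * (i : ℝ) ^ (L - s)) * (w : ℝ) ^ s := by
          refine Finset.sum_congr rfl fun s _ => ?_
          rw [Finset.mul_sum, Finset.sum_mul]
          refine Finset.sum_congr rfl fun i _ => ?_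
          ring
      _ = ∑ s ∈ Finset.range (L - j + 1), (Nat.choose L s : ℝ) *
            (∑ i ∈ Finset.range (j + 1),
              (-1 : ℝ) ^ (j - i) * (Nat.choose j i : ℝ) * (i : ℝ) ^ (L - s)) * (w : ℝ) ^ s := by
          symm
          apply Finset.sum_subset (Finset.range_subset_range.2 (by omega))
          intro s hs1 hs2
          rw [Finset.mem_range] at hs1
          simp only [Finset.mem_range, not_lt] at hs2
          rw [alt_sum_zero j (L - s) (by omega)]
          ring
      _ = (j.factorial : ℝ) * ∑ s ∈ Finset.range (L - j + 1),
            (Nat.choose L s : ℝ) * stirlingSecond (L - s) j * (w : ℝ) ^ s := by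
          rw [Finset.mul_sum]
          refine Finset.sum_congr rfl fun s _ => ?_
          rw [← hE s]
          ring
  have hcount := count_lemma T L w B hB j
  have hcR := congrArg (fun z : ℤ => (z : ℝ)) hcount
  push_cast at hcR
  have hNat : (Nat.card {f : Fin L → Fin T // ((Finset.univ.image f) \ B).card = j} : ℝ)
      = ((Finset.univ.filter (fun f : Fin L → Fin T =>
          ((Finset.univ.image f) \ B).card = j)).card : ℝ) := by
    rw [Nat.card_eq_fintype_card, Fintype.card_subtype]
  rw [hNat, hcR, hSigma, div_mul_eq_mul_div]
  rw [Nat.descFactorial_eq_factorial_mul_choose]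
  push_cast
  ring
end

section
/- Let T, L, w be natural numbers with 1 ≤ w ≤ T, fix a subset B of the T coupons with |B| = w, and draw L coupons independently and uniformly at random with replacement from the T coupons. Let J be the number of distinct coupons drawn that lie outside B. Then for every 0 ≤ j ≤ L, P(J = j) ≤ exp( L²/(4w) ) · binom(L,j) · (1 − w/T)^j · (w/T)^{L−j}. -/
open Finset

namespace CouponAux

variable {T L : ℕ}

/-- positions that are the first occurrence of a value outside `B`. -/
def firstSet (B : Finset (Fin T)) (f : Fin L → Fin T) : Finset (Fin L) :=
  Finset.univ.filter (fun i => f i ∉ B ∧ ∀ i', i' < i → f i' ≠ f i)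

lemma mem_firstSet {B : Finset (Fin T)} {f : Fin L → Fin T} {i : Fin L} :
    i ∈ firstSet B f ↔ f i ∉ B ∧ ∀ i', i' < i → f i' ≠ f i := by
  simp [firstSet]

def minOcc (f : Fin L → Fin T) (i : Fin L) : Fin L :=
  (Finset.univ.filter (fun i' => f i' = f i)).min' ⟨i, by simp⟩

lemma minOcc_eq (f : Fin L → Fin T) (i : Fin L) : f (minOcc f i) = f i := by
  have := Finset.min'_mem (Finset.univ.filter (fun i' => f i' = f i)) ⟨i, by simp⟩
  simpa [minOcc] using this

lemma minOcc_mem_firstSet {B : Finset (Fin T)} {f : Fin L → Fin T} {i : Fin L}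
    (h : f i ∉ B) : minOcc f i ∈ firstSet B f := by
  rw [mem_firstSet]
  refine ⟨by rw [minOcc_eq f i]; exact h, fun i' hlt hne => ?_⟩
  have hmem : i' ∈ Finset.univ.filter (fun i' => f i' = f i) := by
    simp only [Finset.mem_filter, Finset.mem_univ, true_and]; rw [hne, minOcc_eq f i]
  exact absurd (Finset.min'_le _ _ hmem) (not_le.mpr hlt)

lemma card_firstSet (B : Finset (Fin T)) (f : Fin L → Fin T) :
    (firstSet B f).card = ((Finset.univ.image f) \ B).card := by
  refine Finset.card_bij (fun i _ => f i) ?_ ?_ ?_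
  · intro a ha
    rw [mem_firstSet] at ha
    exact Finset.mem_sdiff.2 ⟨Finset.mem_image_of_mem f (Finset.mem_univ a), ha.1⟩
  · intro a₁ h₁ a₂ h₂ he
    rw [mem_firstSet] at h₁ h₂
    rcases lt_trichotomy a₁ a₂ with h | h | h
    · exact absurd he (h₂.2 a₁ h)
    · exact h
    · exact absurd he.symm (h₁.2 a₂ h)
  · intro v hv
    rw [Finset.mem_sdiff] at hv
    obtain ⟨hvim, hvB⟩ := hv
    obtain ⟨i, _, hi⟩ := Finset.mem_image.1 hvim
    refine ⟨minOcc f i, minOcc_mem_firstSet (by rw [hi]; exact hvB), by show f (minOcc f i) = v; rw [minOcc_eq f i, hi]⟩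

lemma iso_coe_eq {α : Type*} [LinearOrder α] {s t : Finset α} (h : s = t) {k : ℕ}
    (hs : s.card = k) (ht : t.card = k) (x : Fin k) :
    ((s.orderIsoOfFin hs x : α)) = (t.orderIsoOfFin ht x : α) := by subst h; rfl

lemma count_bound (B : Finset (Fin T)) (j : ℕ) (hj : j ≤ L) :
    Nat.card {f : Fin L → Fin T // ((Finset.univ.image f) \ B).card = j}
      ≤ L.choose j * (T - B.card) ^ j * (B.card + j) ^ (L - j) := by
  classical
  have hPcard : ∀ f : {f : Fin L → Fin T // ((Finset.univ.image f) \ B).card = j},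
      (firstSet B f.1).card = j := fun f => (card_firstSet B f.1).trans f.2
  have hPccard : ∀ f : {f : Fin L → Fin T // ((Finset.univ.image f) \ B).card = j},
      ((firstSet B f.1)ᶜ).card = L - j := by
    intro f
    rw [Finset.card_compl, hPcard f, Fintype.card_fin]
  let Φ : {f : Fin L → Fin T // ((Finset.univ.image f) \ B).card = j} →
      ({P : Finset (Fin L) // P.card = j} ×
        (Fin j → ↥(Finset.univ \ B)) × (Fin (L - j) → ↥B ⊕ Fin j)) := fun f =>
    ⟨⟨firstSet B f.1, hPcard f⟩,
     fun k => ⟨f.1 ((firstSet B f.1).orderIsoOfFin (hPcard f) k),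
       Finset.mem_sdiff.2 ⟨Finset.mem_univ _,
         (mem_firstSet.1 ((firstSet B f.1).orderIsoOfFin (hPcard f) k).2).1⟩⟩,
     fun k =>
       if h : f.1 (((firstSet B f.1)ᶜ.orderIsoOfFin (hPccard f) k : ↥((firstSet B f.1)ᶜ)) : Fin L) ∈ B then
         Sum.inl ⟨_, h⟩
       else
         Sum.inr (((firstSet B f.1).orderIsoOfFin (hPcard f)).symm
           ⟨minOcc f.1 _, minOcc_mem_firstSet h⟩)⟩
  have hΦ : Function.Injective Φ := by
    intro f g heq
    have hset : firstSet B f.1 = firstSet B g.1 :=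
      congrArg Subtype.val (congrArg Prod.fst heq)
    have h2 := congrArg (fun d => d.2.1) heq
    have h3 := congrArg (fun d => d.2.2) heq
    simp only [Φ] at h2 h3
    have honP : ∀ p ∈ firstSet B f.1, f.1 p = g.1 p := by
      intro p hp
      set k := ((firstSet B f.1).orderIsoOfFin (hPcard f)).symm ⟨p, hp⟩ with hk
      have h2k := congrFun h2 k
      have e1 : ((firstSet B f.1).orderIsoOfFin (hPcard f) k : Fin L) = p := by
        rw [hk, OrderIso.apply_symm_apply]
      have e2 : ((firstSet B g.1).orderIsoOfFin (hPcard g) k : Fin L) = p :=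
        (iso_coe_eq hset.symm (hPcard g) (hPcard f) k).trans e1
      have := congrArg Subtype.val h2k
      simpa [e1, e2] using this
    ext1; funext i
    by_cases hi : i ∈ firstSet B f.1
    · exact honP i hi
    · have hic : i ∈ (firstSet B f.1)ᶜ := Finset.mem_compl.2 hi
      set k := (((firstSet B f.1)ᶜ).orderIsoOfFin (hPccard f)).symm ⟨i, hic⟩ with hk
      have h3k := congrFun h3 k
      have e1 : (((firstSet B f.1)ᶜ).orderIsoOfFin (hPccard f) k : Fin L) = i := by
        rw [hk, OrderIso.apply_symm_apply]
      have e2 : (((firstSet B g.1)ᶜ).orderIsoOfFin (hPccard g) k : Fin L) = i :=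
        (iso_coe_eq (by rw [hset]) (hPccard g) (hPccard f) k).trans e1
      rw [e1, e2] at h3k  -- hopefully rewrites inside dite
      by_cases hfB : f.1 i ∈ B <;> by_cases hgB : g.1 i ∈ B
      · rw [dif_pos hfB, dif_pos hgB] at h3k
        simpa using h3k
      · rw [dif_pos hfB, dif_neg hgB] at h3k
        exact absurd h3k (by simp)
      · rw [dif_neg hfB, dif_pos hgB] at h3k
        exact absurd h3k (by simp)
      · rw [dif_neg hfB, dif_neg hgB] at h3k
        have hxy := Sum.inr_injective h3k
        have hpq : minOcc f.1 i = minOcc g.1 i := by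
          have t1 : minOcc f.1 i =
              ((firstSet B f.1).orderIsoOfFin (hPcard f)
                (((firstSet B f.1).orderIsoOfFin (hPcard f)).symm
                  ⟨minOcc f.1 i, minOcc_mem_firstSet hfB⟩) : Fin L) := by
            rw [OrderIso.apply_symm_apply]
          have t2 : minOcc g.1 i =
              ((firstSet B g.1).orderIsoOfFin (hPcard g)
                (((firstSet B g.1).orderIsoOfFin (hPcard g)).symm
                  ⟨minOcc g.1 i, minOcc_mem_firstSet hgB⟩) : Fin L) := by
            rw [OrderIso.apply_symm_apply]
          rw [t1, t2, hxy]
          exact iso_coe_eq hset (hPcard f) (hPcard g) _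
        have hpmem : minOcc f.1 i ∈ firstSet B f.1 := minOcc_mem_firstSet hfB
        calc f.1 i = f.1 (minOcc f.1 i) := (minOcc_eq f.1 i).symm
          _ = g.1 (minOcc f.1 i) := honP _ hpmem
          _ = g.1 (minOcc g.1 i) := by rw [hpq]
          _ = g.1 i := minOcc_eq g.1 i
  calc Nat.card {f : Fin L → Fin T // ((Finset.univ.image f) \ B).card = j}
      = Fintype.card {f : Fin L → Fin T // ((Finset.univ.image f) \ B).card = j} :=
        Nat.card_eq_fintype_card
    _ ≤ Fintype.card ({P : Finset (Fin L) // P.card = j} ×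
        (Fin j → ↥(Finset.univ \ B)) × (Fin (L - j) → ↥B ⊕ Fin j)) :=
      Fintype.card_le_of_injective Φ hΦ
    _ = L.choose j * (T - B.card) ^ j * (B.card + j) ^ (L - j) := by
        rw [Fintype.card_prod, Fintype.card_prod, Fintype.card_fun, Fintype.card_fun,
          Fintype.card_finset_len, Fintype.card_fin, Fintype.card_fin, Fintype.card_fin,
          Fintype.card_coe, Fintype.card_sum, Fintype.card_coe, Fintype.card_fin,
          Finset.card_sdiff_of_subset (Finset.subset_univ B), Finset.card_univ, Fintype.card_fin]
        ring


end CouponAux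

open CouponAux in
/-- Binomial-type upper bound on the number of distinct coupons outside a fixed set: draw `L`
coupons independently and uniformly at random with replacement from `T` coupons, fix `B` of
size `w` with `1 ≤ w ≤ T`, and let `J` be the number of distinct coupons drawn lying outside
`B`.  Then `P(J = j) ≤ exp(L²/(4w))·C(L,j)·(1 − w/T)^j·(w/T)^{L−j}`. -/
theorem distinct_coupons_outside_binomial_bound (T L w : ℕ) (hw1 : 1 ≤ w) (hwT : w ≤ T)
    (B : Finset (Fin T)) (hB : B.card = w) (j : ℕ) (hj : j ≤ L) :
    (Nat.card {f : Fin L → Fin T // ((Finset.univ.image f) \ B).card = j} : ℝ) / (T : ℝ) ^ L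
      ≤ Real.exp ((L : ℝ) ^ 2 / (4 * (w : ℝ))) * (Nat.choose L j : ℝ) *
        (1 - (w : ℝ) / (T : ℝ)) ^ j * ((w : ℝ) / (T : ℝ)) ^ (L - j) := by
  have hT1 : 1 ≤ T := le_trans hw1 hwT
  have hT0 : (0:ℝ) < T := by exact_mod_cast hT1
  have hw0 : (0:ℝ) < w := by exact_mod_cast hw1
  have hwTR : (w:ℝ) ≤ T := by exact_mod_cast hwT
  have hN := count_bound (L := L) B j hj
  rw [hB] at hN
  have hNR : (Nat.card {f : Fin L → Fin T // ((Finset.univ.image f) \ B).card = j} : ℝ)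
      ≤ (L.choose j : ℝ) * ((T:ℝ) - w) ^ j * ((w:ℝ) + j) ^ (L - j) := by
    calc (Nat.card {f : Fin L → Fin T // ((Finset.univ.image f) \ B).card = j} : ℝ)
        ≤ ((L.choose j * (T - w) ^ j * (w + j) ^ (L - j) : ℕ) : ℝ) := by exact_mod_cast hN
      _ = (L.choose j : ℝ) * ((T:ℝ) - w) ^ j * ((w:ℝ) + j) ^ (L - j) := by
          push_cast [Nat.cast_sub hwT]; ring
  rw [div_le_iff₀ (by positivity : (0:ℝ) < (T:ℝ) ^ L)]
  refine hNR.trans ?_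
  set E := (L : ℝ) ^ 2 / (4 * (w : ℝ)) with hE
  have hb : ((L - j : ℕ) : ℝ) = (L : ℝ) - (j : ℝ) := by
    push_cast [Nat.cast_sub hj]; ring
  have hstep : ((w:ℝ) + j) ^ (L - j) ≤ Real.exp E * (w:ℝ) ^ (L - j) := by
    have h1 : (w:ℝ) + j ≤ w * Real.exp ((j:ℝ)/w) := by
      have := Real.add_one_le_exp ((j:ℝ)/w)
      calc (w:ℝ) + j = w * ((j:ℝ)/w + 1) := by field_simp; ring
        _ ≤ w * Real.exp ((j:ℝ)/w) := by
            exact mul_le_mul_of_nonneg_left this hw0.le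
    have h2 : ((w:ℝ) + j) ^ (L - j) ≤ (w * Real.exp ((j:ℝ)/w)) ^ (L - j) :=
      pow_le_pow_left₀ (by positivity) h1 _
    have h3 : (w * Real.exp ((j:ℝ)/w)) ^ (L - j)
        = (w:ℝ) ^ (L - j) * Real.exp ((j:ℝ)/w * (L - j : ℕ)) := by
      rw [mul_pow, ← Real.exp_nat_mul]
      ring_nf
    have h4 : (j:ℝ)/w * ((L - j : ℕ) : ℝ) ≤ E := by
      rw [hb, hE, div_mul_eq_mul_div, div_le_div_iff₀ hw0 (by positivity)]
      nlinarith [sq_nonneg ((j:ℝ) - ((L:ℝ) - j))]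
    calc ((w:ℝ) + j) ^ (L - j) ≤ (w:ℝ) ^ (L - j) * Real.exp ((j:ℝ)/w * (L - j : ℕ)) := by
          rw [← h3]; exact h2
      _ ≤ (w:ℝ) ^ (L - j) * Real.exp E := by
          exact mul_le_mul_of_nonneg_left (Real.exp_le_exp.2 h4) (by positivity)
      _ = Real.exp E * (w:ℝ) ^ (L - j) := by ring
  have hTL : (T:ℝ) ^ L = (T:ℝ) ^ j * (T:ℝ) ^ (L - j) := by
    rw [← pow_add, Nat.add_sub_cancel' hj]
  have e1 : (1 - (w:ℝ)/T) ^ j * (T:ℝ) ^ j = ((T:ℝ) - w) ^ j := by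
    rw [← mul_pow]; congr 1; field_simp
  have e2 : ((w:ℝ)/T) ^ (L - j) * (T:ℝ) ^ (L - j) = (w:ℝ) ^ (L - j) := by
    rw [← mul_pow]; congr 1; field_simp
  have hrhs : Real.exp E * (L.choose j : ℝ) * (1 - (w:ℝ)/T) ^ j * ((w:ℝ)/T) ^ (L - j)
        * (T:ℝ) ^ L
      = Real.exp E * (L.choose j : ℝ) * ((T:ℝ) - w) ^ j * (w:ℝ) ^ (L - j) := by
    calc Real.exp E * (L.choose j : ℝ) * (1 - (w:ℝ)/T) ^ j * ((w:ℝ)/T) ^ (L - j)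
          * (T:ℝ) ^ L
        = Real.exp E * (L.choose j : ℝ) * ((1 - (w:ℝ)/T) ^ j * (T:ℝ) ^ j)
          * (((w:ℝ)/T) ^ (L - j) * (T:ℝ) ^ (L - j)) := by rw [hTL]; ring
      _ = Real.exp E * (L.choose j : ℝ) * ((T:ℝ) - w) ^ j * (w:ℝ) ^ (L - j) := by
          rw [e1, e2]
  rw [hrhs]
  have hTw : (0:ℝ) ≤ (T:ℝ) - w := by linarith
  calc (L.choose j : ℝ) * ((T:ℝ) - w) ^ j * ((w:ℝ) + j) ^ (L - j)
      ≤ (L.choose j : ℝ) * ((T:ℝ) - w) ^ j * (Real.exp E * (w:ℝ) ^ (L - j)) := by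
        exact mul_le_mul_of_nonneg_left hstep (by positivity)
    _ = Real.exp E * (L.choose j : ℝ) * ((T:ℝ) - w) ^ j * (w:ℝ) ^ (L - j) := by ring
end

section
/- Let j and V be natural numbers and let s, s' be real numbers with 0 ≤ s ≤ s' and j·s' ≤ 1. Then φ_j(s, V) ≤ φ_j(s', V); that is, φ_j(·, V) is nondecreasing in its first argument on [0, 1/j]. -/
open Finset

/-- `φ_j(s,V) = ∑_{ℓ=0}^{j} (−1)^ℓ·C(j,ℓ)·(1 − ℓs)^V`. -/
noncomputable def phi (j : ℕ) (s : ℝ) (V : ℕ) : ℝ :=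
  ∑ ℓ ∈ Finset.range (j + 1), (-1 : ℝ) ^ ℓ * (Nat.choose j ℓ : ℝ) * (1 - (ℓ : ℝ) * s) ^ V

/-- n-th finite difference of `x ^ p` at `a` with step `h`. -/
noncomputable def fd (n p : ℕ) (a h : ℝ) : ℝ :=
  ∑ m ∈ Finset.range (n + 1), (-1 : ℝ) ^ m * (Nat.choose n m : ℝ) * (a - (m : ℝ) * h) ^ p

lemma fd_succ (n p : ℕ) (a h : ℝ) :
    fd (n + 1) p a h = fd n p a h - fd n p (a - h) h := by
  have h1 : fd (n + 1) p a h =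
      (∑ m ∈ range (n + 1), (-1 : ℝ) ^ (m+1) * ((n.choose m : ℝ) + (n.choose (m+1) : ℝ))
        * (a - ((m : ℝ) + 1) * h) ^ p) + a ^ p := by
    rw [fd, sum_range_succ']
    push_cast [Nat.choose_succ_succ]
    norm_num
  have h2 : fd n p a h =
      (∑ m ∈ range (n + 1), (-1 : ℝ) ^ (m+1) * (n.choose (m+1) : ℝ)
        * (a - ((m : ℝ) + 1) * h) ^ p) + a ^ p := by
    rw [fd, sum_range_succ']
    push_cast
    norm_num
    rw [sum_range_succ]
    simp
  have h3 : fd n p (a - h) h =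
      ∑ m ∈ range (n + 1), (-1 : ℝ) ^ m * (n.choose m : ℝ)
        * (a - ((m : ℝ) + 1) * h) ^ p := by
    rw [fd]
    refine sum_congr rfl fun m _ => ?_
    ring_nf
  rw [h1, h2, h3, add_sub_right_comm]
  congr 1
  rw [← sum_sub_distrib]
  refine sum_congr rfl fun m _ => ?_
  ring

lemma fd_nonneg : ∀ (n : ℕ) (p : ℕ) (a h : ℝ), 0 ≤ h → (n : ℝ) * h ≤ a → 0 ≤ fd n p a h := by
  intro n
  induction n with
  | zero =>
    intro p a h hh ha
    simp only [fd, Nat.cast_zero, zero_mul] at ha ⊢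
    simpa using pow_nonneg ha p
  | succ n ih =>
    intro p a h hh ha
    set b := a - h with hb
    have hnb : (n : ℝ) * h ≤ b := by
      have : ((n : ℝ) + 1) * h ≤ a := by push_cast at ha; linarith
      simp only [hb]; linarith
    have key : fd (n + 1) p a h =
        ∑ i ∈ range p, ∑ r ∈ range (i + 1),
          (h * ((i.choose r : ℝ) * h ^ (i - r))) * fd n (r + (p - 1 - i)) b h := by
      rw [fd_succ]
      calc fd n p a h - fd n p b h
          = ∑ m ∈ range (n + 1), (-1 : ℝ) ^ m * (n.choose m : ℝ)
              * ((a - m * h) ^ p - (b - m * h) ^ p) := by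
            rw [fd, fd, ← sum_sub_distrib]
            exact sum_congr rfl fun m _ => by ring
        _ = ∑ m ∈ range (n + 1), ∑ i ∈ range p,
              (-1 : ℝ) ^ m * (n.choose m : ℝ)
              * ((a - m * h) ^ i * (b - m * h) ^ (p - 1 - i) * h) := by
            refine sum_congr rfl fun m _ => ?_
            have hd : a - (m : ℝ) * h - (b - (m : ℝ) * h) = h := by rw [hb]; ring
            rw [← geom_sum₂_mul (a - (m:ℝ)*h) (b - (m:ℝ)*h) p, hd, sum_mul, mul_sum]
        _ = ∑ i ∈ range p, ∑ m ∈ range (n + 1),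
              (-1 : ℝ) ^ m * (n.choose m : ℝ)
              * ((a - m * h) ^ i * (b - m * h) ^ (p - 1 - i) * h) := sum_comm
        _ = ∑ i ∈ range p, ∑ m ∈ range (n + 1), ∑ r ∈ range (i + 1),
              (h * ((i.choose r : ℝ) * h ^ (i - r))) *
                ((-1 : ℝ) ^ m * (n.choose m : ℝ) * (b - m * h) ^ (r + (p - 1 - i))) := by
            refine sum_congr rfl fun i _ => sum_congr rfl fun m _ => ?_
            have hax : a - (m : ℝ) * h = (b - (m : ℝ) * h) + h := by rw [hb]; ring
            rw [hax, add_pow, sum_mul, sum_mul, mul_sum]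
            refine sum_congr rfl fun r _ => ?_
            rw [pow_add]
            ring
        _ = ∑ i ∈ range p, ∑ r ∈ range (i + 1),
              (h * ((i.choose r : ℝ) * h ^ (i - r))) * fd n (r + (p - 1 - i)) b h := by
            refine sum_congr rfl fun i _ => ?_
            rw [sum_comm]
            exact sum_congr rfl fun r _ => by rw [fd, mul_sum]
    rw [key]
    refine sum_nonneg fun i _ => sum_nonneg fun r _ => mul_nonneg ?_ (ih _ b h hh hnb)
    positivity

theorem phi_hasDerivAt (j V : ℕ) (s : ℝ) :
    HasDerivAt (fun t => phi j t V)
      (∑ ℓ ∈ range (j + 1), (-1 : ℝ) ^ ℓ * (Nat.choose j ℓ : ℝ) *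
        ((V : ℝ) * (1 - (ℓ : ℝ) * s) ^ (V - 1) * (-(ℓ : ℝ)))) s := by
  apply HasDerivAt.fun_sum
  intro ℓ _
  have h1 : HasDerivAt (fun t : ℝ => 1 - (ℓ : ℝ) * t) (-(ℓ : ℝ)) s := by
    simpa using ((hasDerivAt_id s).const_mul (ℓ : ℝ)).const_sub 1
  exact (h1.pow V).const_mul _

lemma phi_deriv_eq (j' V : ℕ) (s : ℝ) :
    (∑ ℓ ∈ range (j' + 1 + 1), (-1 : ℝ) ^ ℓ * (Nat.choose (j' + 1) ℓ : ℝ) *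
        ((V : ℝ) * (1 - (ℓ : ℝ) * s) ^ (V - 1) * (-(ℓ : ℝ))))
      = (V : ℝ) * ((j' : ℝ) + 1) * fd j' (V - 1) (1 - s) s := by
  rw [sum_range_succ', fd, mul_sum]
  push_cast
  norm_num
  refine sum_congr rfl fun m _ => ?_
  have hc : ((j' + 1).choose (m + 1) : ℝ) * ((m : ℝ) + 1)
      = ((j' : ℝ) + 1) * (j'.choose m : ℝ) := by
    exact_mod_cast congrArg (Nat.cast : ℕ → ℝ) (Nat.add_one_mul_choose_eq j' m).symm
  have hbase : (1 : ℝ) - s - (m : ℝ) * s = 1 - ((m : ℝ) + 1) * s := by ring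
  rw [hbase]
  linear_combination ((-1 : ℝ) ^ m * (V : ℝ) * (1 - ((m : ℝ) + 1) * s) ^ (V - 1)) * hc

/-- `φ_j(·,V)` is nondecreasing in its first argument on `[0, 1/j]`. -/
theorem phi_mono_in_s (j V : ℕ) (s s' : ℝ) (hs0 : 0 ≤ s) (hss' : s ≤ s')
    (hjs' : (j : ℝ) * s' ≤ 1) :
    phi j s V ≤ phi j s' V := by
  rcases Nat.eq_zero_or_pos j with rfl | hj
  · simp [phi]
  obtain ⟨j', rfl⟩ : ∃ j', j = j' + 1 := ⟨j - 1, (Nat.succ_pred_eq_of_pos hj).symm⟩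
  have hmono : MonotoneOn (fun t => phi (j' + 1) t V) (Set.Icc s s') := by
    apply monotoneOn_of_hasDerivWithinAt_nonneg (convex_Icc s s')
      (f' := fun x => (V : ℝ) * ((j' : ℝ) + 1) * fd j' (V - 1) (1 - x) x)
    · refine Continuous.continuousOn ?_
      unfold phi
      fun_prop
    · intro x _
      exact ((phi_deriv_eq j' V x) ▸ (phi_hasDerivAt (j' + 1) V x)).hasDerivWithinAt
    · intro x hx
      rw [interior_Icc] at hx
      obtain ⟨hx1, hx2⟩ := hx
      have hx0 : 0 ≤ x := le_of_lt (lt_of_le_of_lt hs0 hx1)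
      have hfd : 0 ≤ fd j' (V - 1) (1 - x) x := by
        apply fd_nonneg _ _ _ _ hx0
        have : ((j' : ℝ) + 1) * x ≤ ((j' : ℝ) + 1) * s' := by
          apply mul_le_mul_of_nonneg_left (le_of_lt hx2) (by positivity)
        have h1 : ((j' : ℝ) + 1) * s' ≤ 1 := by push_cast at hjs'; linarith
        linarith
      positivity
  exact hmono (Set.left_mem_Icc.mpr hss') (Set.right_mem_Icc.mpr hss') hss'
end

section
/- Let j be a natural number, V ≥ 1 a natural number, and s a real number with 0 ≤ s and j·s ≤ 1. Then φ_j(s, V−1) ≤ φ_j(s, V); that is, φ_j(s, ·) is nondecreasing in its second argument. -/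
/-- Auxiliary alternating sum `F k n s a = ∑_{m=0}^k (-1)^m C(k,m) (a - m s)^n`. -/
noncomputable def Faux (k n : ℕ) (s a : ℝ) : ℝ :=
  ∑ m ∈ Finset.range (k + 1), (-1 : ℝ) ^ m * (Nat.choose k m : ℝ) * (a - (m : ℝ) * s) ^ n

lemma Faux_succ (k n : ℕ) (s a : ℝ) :
    Faux (k + 1) n s a = Faux k n s a - Faux k n s (a - s) := by
  have hFk : Faux k n s a
      = ∑ i ∈ Finset.range (k + 1),
          (-1 : ℝ) ^ (i + 1) * (Nat.choose k (i + 1) : ℝ) * (a - ((i : ℝ) + 1) * s) ^ n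
        + a ^ n := by
    have h0 : Faux k n s a
        = ∑ m ∈ Finset.range (k + 2), (-1 : ℝ) ^ m * (Nat.choose k m : ℝ) * (a - (m : ℝ) * s) ^ n := by
      unfold Faux
      conv_rhs => rw [Finset.sum_range_succ]
      simp [Nat.choose_succ_self]
    rw [h0, Finset.sum_range_succ']
    norm_num
  have hFk' : Faux k n s (a - s)
      = ∑ i ∈ Finset.range (k + 1),
          (-1 : ℝ) ^ i * (Nat.choose k i : ℝ) * (a - ((i : ℝ) + 1) * s) ^ n := by
    unfold Faux
    apply Finset.sum_congr rfl
    intro i _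
    ring_nf
  have hL : Faux (k + 1) n s a
      = ∑ i ∈ Finset.range (k + 1),
          (-1 : ℝ) ^ (i + 1) * (Nat.choose (k + 1) (i + 1) : ℝ) * (a - ((i : ℝ) + 1) * s) ^ n
        + a ^ n := by
    unfold Faux
    rw [Finset.sum_range_succ']
    norm_num
  rw [hL, hFk, hFk']
  have key : ∀ i ∈ Finset.range (k + 1),
      (-1 : ℝ) ^ (i + 1) * (Nat.choose (k + 1) (i + 1) : ℝ) * (a - ((i : ℝ) + 1) * s) ^ n
      = (-1 : ℝ) ^ (i + 1) * (Nat.choose k (i + 1) : ℝ) * (a - ((i : ℝ) + 1) * s) ^ n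
        - (-1 : ℝ) ^ i * (Nat.choose k i : ℝ) * (a - ((i : ℝ) + 1) * s) ^ n := by
    intro i _
    have h := Nat.choose_succ_succ k i
    have : ((Nat.choose (k + 1) (i + 1) : ℕ) : ℝ)
        = (Nat.choose k i : ℝ) + (Nat.choose k (i + 1) : ℝ) := by
      rw [h]; push_cast; ring
    rw [this]
    ring
  rw [Finset.sum_congr rfl key, Finset.sum_sub_distrib]
  ring

lemma Faux_hasDerivAt (k n : ℕ) (s a : ℝ) :
    HasDerivAt (fun a => Faux k (n + 1) s a) (((n : ℝ) + 1) * Faux k n s a) a := by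
  have h : ∀ m ∈ Finset.range (k + 1),
      HasDerivAt (fun a : ℝ => (-1 : ℝ) ^ m * (Nat.choose k m : ℝ) * (a - (m : ℝ) * s) ^ (n + 1))
        ((-1 : ℝ) ^ m * (Nat.choose k m : ℝ) * (((n : ℝ) + 1) * (a - (m : ℝ) * s) ^ n)) a := by
    intro m _
    have h1 : HasDerivAt (fun a : ℝ => (a - (m : ℝ) * s) ^ (n + 1))
        (((n : ℝ) + 1) * (a - (m : ℝ) * s) ^ n) a := by
      have := ((hasDerivAt_id a).sub_const ((m : ℝ) * s)).fun_pow (n + 1)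
      simpa using this
    simpa using h1.const_mul ((-1 : ℝ) ^ m * (Nat.choose k m : ℝ))
  have hsum := HasDerivAt.fun_sum h
  convert hsum using 1
  · rfl
  · rfl
  · rfl
  unfold Faux
  rw [Finset.mul_sum]
  exact Finset.sum_congr rfl fun m _ => by ring

lemma Faux_nonneg (s : ℝ) (hs : 0 ≤ s) :
    ∀ n (k : ℕ) (a : ℝ), (k : ℝ) * s ≤ a → 0 ≤ Faux k n s a := by
  intro n
  induction n with
  | zero =>
    intro k a _
    have : Faux k 0 s a = ((∑ m ∈ Finset.range (k + 1), (-1 : ℤ) ^ m * (Nat.choose k m : ℤ) : ℤ) : ℝ) := by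
      unfold Faux
      push_cast
      simp
    rw [this, Int.alternating_sum_range_choose]
    split <;> norm_num
  | succ n ih =>
    intro k a ha
    match k with
    | 0 =>
      have ha' : 0 ≤ a := by simpa using ha
      have : Faux 0 (n + 1) s a = a ^ (n + 1) := by
        unfold Faux; simp
      rw [this]
      positivity
    | k + 1 =>
      rw [Faux_succ]
      have hks : (k : ℝ) * s ≤ a - s := by
        push_cast at ha
        nlinarith
      have mono : MonotoneOn (fun a => Faux k (n + 1) s a) (Set.Ici ((k : ℝ) * s)) := by
        apply monotoneOn_of_deriv_nonneg (convex_Ici _)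
        · exact fun x _ => (Faux_hasDerivAt k n s x).continuousAt.continuousWithinAt
        · intro x _
          exact (Faux_hasDerivAt k n s x).differentiableAt.differentiableWithinAt
        · intro x hx
          rw [(Faux_hasDerivAt k n s x).deriv]
          have hx' : (k : ℝ) * s ≤ x := le_of_lt (by simpa using hx)
          have := ih k x hx'
          positivity
      have h1 : a - s ∈ Set.Ici ((k : ℝ) * s) := hks
      have h2 : a ∈ Set.Ici ((k : ℝ) * s) := by
        simp only [Set.mem_Ici]
        linarith
      have := mono h1 h2 (by linarith)
      linarith

lemma phi_diff (k W : ℕ) (s : ℝ) :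
    phi (k + 1) s (W + 1) - phi (k + 1) s W = s * ((k : ℝ) + 1) * Faux k W s (1 - s) := by
  unfold phi Faux
  rw [← Finset.sum_sub_distrib, Finset.sum_range_succ', Finset.mul_sum]
  have h0 : (-1 : ℝ) ^ 0 * (Nat.choose (k + 1) 0 : ℝ) * (1 - ((0 : ℕ) : ℝ) * s) ^ (W + 1)
      - (-1 : ℝ) ^ 0 * (Nat.choose (k + 1) 0 : ℝ) * (1 - ((0 : ℕ) : ℝ) * s) ^ W = 0 := by
    simp
  rw [show (∑ i ∈ Finset.range (k + 1),
      ((-1 : ℝ) ^ (i + 1) * (Nat.choose (k + 1) (i + 1) : ℝ) * (1 - ((i + 1 : ℕ) : ℝ) * s) ^ (W + 1)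
      - (-1 : ℝ) ^ (i + 1) * (Nat.choose (k + 1) (i + 1) : ℝ) * (1 - ((i + 1 : ℕ) : ℝ) * s) ^ W))
      + ((-1 : ℝ) ^ 0 * (Nat.choose (k + 1) 0 : ℝ) * (1 - ((0 : ℕ) : ℝ) * s) ^ (W + 1)
      - (-1 : ℝ) ^ 0 * (Nat.choose (k + 1) 0 : ℝ) * (1 - ((0 : ℕ) : ℝ) * s) ^ W)
      = ∑ i ∈ Finset.range (k + 1),
      ((-1 : ℝ) ^ (i + 1) * (Nat.choose (k + 1) (i + 1) : ℝ) * (1 - ((i + 1 : ℕ) : ℝ) * s) ^ (W + 1)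
      - (-1 : ℝ) ^ (i + 1) * (Nat.choose (k + 1) (i + 1) : ℝ) * (1 - ((i + 1 : ℕ) : ℝ) * s) ^ W)
      from by rw [h0]; ring]
  apply Finset.sum_congr rfl
  intro i _
  have hc : ((i : ℝ) + 1) * (Nat.choose (k + 1) (i + 1) : ℝ) = ((k : ℝ) + 1) * (Nat.choose k i : ℝ) := by
    have := Nat.add_one_mul_choose_eq k i
    have h2 : ((k + 1) * Nat.choose k i : ℕ) = (Nat.choose (k + 1) (i + 1) * (i + 1) : ℕ) := this
    have := congrArg (fun x : ℕ => (x : ℝ)) h2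
    push_cast at this
    linarith
  push_cast
  rw [pow_succ]
  linear_combination ((-1 : ℝ) ^ i * s * ((1 : ℝ) - ((i : ℝ) + 1) * s) ^ W) * hc

/-- `φ_j(s,·)` is nondecreasing in its second argument, for `0 ≤ s` with `j·s ≤ 1`. -/
theorem phi_mono_in_V (j V : ℕ) (hV : 1 ≤ V) (s : ℝ) (hs0 : 0 ≤ s)
    (hjs : (j : ℝ) * s ≤ 1) :
    phi j s (V - 1) ≤ phi j s V := by
  obtain ⟨W, rfl⟩ : ∃ W, V = W + 1 := ⟨V - 1, (Nat.succ_pred_eq_of_pos hV).symm⟩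
  simp only [Nat.add_sub_cancel]
  match j with
  | 0 =>
    unfold phi
    simp
  | k + 1 =>
    have h := phi_diff k W s
    have hF : 0 ≤ Faux k W s (1 - s) := by
      apply Faux_nonneg s hs0
      push_cast at hjs
      nlinarith
    have hk1 : (0 : ℝ) ≤ (k : ℝ) + 1 := by positivity
    nlinarith [mul_nonneg (mul_nonneg hs0 hk1) hF]
end

section
/- Let j ≥ 1 and V be natural numbers and s a real number with 0 ≤ s and j·s ≤ 1. Then φ_j(s, V) ≤ φ_{j−1}(s, V); that is, φ is nonincreasing in the index j. -/
noncomputable def Dsum (k : ℕ) (x y : ℝ) (V : ℕ) : ℝ :=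
  ∑ m ∈ Finset.range (k + 1), (-1 : ℝ) ^ m * (Nat.choose k m : ℝ) * (x - (m : ℝ) * y) ^ V

lemma Dsum_zero (k : ℕ) (x y : ℝ) :
    Dsum k x y 0 = if k = 0 then 1 else 0 := by
  have h := Int.alternating_sum_range_choose (n := k)
  have h2 := congrArg (Int.cast : ℤ → ℝ) h
  push_cast at h2
  simpa [Dsum] using h2

lemma Dsum_succ (k V : ℕ) (x y : ℝ) :
    Dsum (k+1) x y (V+1) = x * Dsum (k+1) x y V + y * (k+1) * Dsum k (x-y) y V := by
  have key : ∀ m : ℕ, ((m : ℝ) + 1) * (Nat.choose (k+1) (m+1) : ℝ)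
      = ((k : ℝ) + 1) * (Nat.choose k m : ℝ) := by
    intro m
    have h := Nat.add_one_mul_choose_eq k m
    have : ((k+1) * Nat.choose k m : ℕ) = ((k+1).choose (m+1) * (m+1) : ℕ) := h
    have h2 : ((k:ℝ)+1) * (Nat.choose k m : ℝ) = ((k+1).choose (m+1) : ℝ) * ((m:ℝ)+1) := by
      exact_mod_cast this
    linarith
  have split : Dsum (k+1) x y (V+1)
      = x * Dsum (k+1) x y V
        - ∑ m ∈ Finset.range (k+2),
            (-1 : ℝ) ^ m * (Nat.choose (k+1) m : ℝ) * (x - (m : ℝ) * y) ^ V * ((m : ℝ) * y) := by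
    rw [Dsum, Dsum, Finset.mul_sum, ← Finset.sum_sub_distrib]
    refine Finset.sum_congr rfl fun m _ => ?_
    ring
  rw [split]
  have hT : ∑ m ∈ Finset.range (k+2),
      (-1 : ℝ) ^ m * (Nat.choose (k+1) m : ℝ) * (x - (m : ℝ) * y) ^ V * ((m : ℝ) * y)
      = - (y * (k+1) * Dsum k (x-y) y V) := by
    rw [Finset.sum_range_succ']
    simp only [Nat.cast_zero, zero_mul, mul_zero, add_zero]
    rw [Dsum, Finset.mul_sum, ← Finset.sum_neg_distrib]
    refine Finset.sum_congr rfl fun m _ => ?_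
    have hk := key m
    push_cast
    have : (x - ((m : ℝ) + 1) * y) = (x - y - (m : ℝ) * y) := by ring
    rw [this]
    linear_combination (-(-1:ℝ)^m * (x - y - (m:ℝ)*y)^V * y) * hk
  rw [hT]
  ring

lemma Dsum_nonneg : ∀ (V k : ℕ) (x y : ℝ), 0 ≤ y → (k : ℝ) * y ≤ x → 0 ≤ Dsum k x y V := by
  intro V
  induction V with
  | zero =>
    intro k x y hy hx
    rw [Dsum_zero]
    split <;> norm_num
  | succ V ih =>
    intro k x y hy hx
    have hx0 : 0 ≤ x := le_trans (by positivity) hx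
    cases k with
    | zero =>
      have hD : Dsum 0 x y (V+1) = x ^ (V+1) := by simp [Dsum]
      rw [hD]
      exact pow_nonneg hx0 _
    | succ k =>
      rw [Dsum_succ]
      have h1 : 0 ≤ Dsum (k+1) x y V := ih (k+1) x y hy (by exact_mod_cast hx)
      have h2 : 0 ≤ Dsum k (x - y) y V := by
        apply ih k (x - y) y hy
        have : ((k+1 : ℕ) : ℝ) * y ≤ x := by exact_mod_cast hx
        push_cast at this
        linarith
      have : (0:ℝ) ≤ y * (k+1) := by positivity
      nlinarith

lemma phi_succ (k V : ℕ) (s : ℝ) :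
    phi (k+1) s V = phi k s V - Dsum k (1-s) s V := by
  rw [phi, Finset.sum_range_succ']
  simp only [Nat.choose_zero_right, Nat.cast_one, pow_zero, Nat.cast_zero, zero_mul, sub_zero,
    one_mul, mul_one]
  have step : ∀ m ∈ Finset.range (k+1),
      (-1 : ℝ) ^ (m+1) * (Nat.choose (k+1) (m+1) : ℝ) * (1 - ((m+1 : ℕ) : ℝ) * s) ^ V
      = (-1 : ℝ) ^ (m+1) * (Nat.choose k (m+1) : ℝ) * (1 - ((m+1 : ℕ) : ℝ) * s) ^ V
        - (-1 : ℝ) ^ m * (Nat.choose k m : ℝ) * ((1 - s) - (m : ℝ) * s) ^ V := by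
    intro m _
    have hpascal : (Nat.choose (k+1) (m+1) : ℝ) = (Nat.choose k m : ℝ) + (Nat.choose k (m+1) : ℝ) := by
      rw [Nat.choose_succ_succ]
      push_cast
      ring
    have hpt : (1 - ((m : ℝ) + 1) * s) = ((1 - s) - (m : ℝ) * s) := by ring
    push_cast
    rw [hpascal, hpt, pow_succ]
    ring
  rw [Finset.sum_congr rfl step, Finset.sum_sub_distrib, one_pow]
  have hA : ∑ m ∈ Finset.range (k+1),
      (-1 : ℝ) ^ (m+1) * (Nat.choose k (m+1) : ℝ) * (1 - ((m+1 : ℕ) : ℝ) * s) ^ V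
      = phi k s V - 1 := by
    rw [Finset.sum_range_succ, Nat.choose_succ_self]
    rw [phi, Finset.sum_range_succ']
    simp
  have hB : ∑ m ∈ Finset.range (k+1),
      (-1 : ℝ) ^ m * (Nat.choose k m : ℝ) * ((1 - s) - (m : ℝ) * s) ^ V
      = Dsum k (1-s) s V := rfl
  rw [hA, hB]
  ring

/-- `φ` is nonincreasing in the index `j`, for `0 ≤ s` with `j·s ≤ 1`. -/
theorem phi_anti_in_j (j V : ℕ) (hj : 1 ≤ j) (s : ℝ) (hs0 : 0 ≤ s)
    (hjs : (j : ℝ) * s ≤ 1) :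
    phi j s V ≤ phi (j - 1) s V := by
  obtain ⟨k, rfl⟩ : ∃ k, j = k + 1 := ⟨j - 1, (Nat.succ_pred_eq_of_pos hj).symm⟩
  simp only [Nat.add_sub_cancel]
  rw [phi_succ]
  have hD : 0 ≤ Dsum k (1-s) s V := by
    apply Dsum_nonneg V k (1-s) s hs0
    push_cast at hjs ⊢
    linarith
  linarith
end

section
/- Let j ≤ V be natural numbers and let s ≥ 0 be a real number with s·V·j ≤ 2. Then φ_j(s, V) ≤ (V!/(V−j)!)·s^j, and consequently φ_j(s, V) ≤ (V·s)^j. -/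
/-- Auxiliary generalization of `phi` with a free base point `x`. -/
noncomputable def phiAux (j : ℕ) (s : ℝ) (V : ℕ) (x : ℝ) : ℝ :=
  ∑ ℓ ∈ Finset.range (j + 1), (-1 : ℝ) ^ ℓ * (Nat.choose j ℓ : ℝ) * (x - (ℓ : ℝ) * s) ^ V

lemma phiAux_succ (j : ℕ) (s : ℝ) (V : ℕ) (x : ℝ) :
    phiAux (j + 1) s V x = phiAux j s V x - phiAux j s V (x - s) := by
  unfold phiAux
  rw [Finset.sum_range_succ' (fun ℓ => (-1 : ℝ) ^ ℓ * (Nat.choose (j+1) ℓ : ℝ) * (x - (ℓ : ℝ) * s) ^ V) (j+1)]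
  have h1 : ∀ k : ℕ, (-1 : ℝ) ^ (k+1) * (Nat.choose (j+1) (k+1) : ℝ) * (x - ((k+1 : ℕ) : ℝ) * s) ^ V
      = (-1 : ℝ) ^ (k+1) * (Nat.choose j (k+1) : ℝ) * (x - ((k+1 : ℕ) : ℝ) * s) ^ V
        - (-1 : ℝ) ^ k * (Nat.choose j k : ℝ) * ((x - s) - (k : ℝ) * s) ^ V := by
    intro k
    have : ((Nat.choose (j+1) (k+1) : ℕ) : ℝ) = (Nat.choose j k : ℝ) + (Nat.choose j (k+1) : ℝ) := by
      rw [Nat.choose_succ_succ]; push_cast; ring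
    rw [this]
    have hx : (x - s) - (k : ℝ) * s = x - ((k+1 : ℕ) : ℝ) * s := by push_cast; ring
    rw [hx]
    ring
  rw [Finset.sum_congr rfl (fun k _ => h1 k)]
  rw [Finset.sum_sub_distrib]
  have h2 : ∑ k ∈ Finset.range (j+1), (-1 : ℝ) ^ (k+1) * (Nat.choose j (k+1) : ℝ) * (x - ((k+1 : ℕ) : ℝ) * s) ^ V
      = ∑ ℓ ∈ Finset.range (j+1), (-1 : ℝ) ^ ℓ * (Nat.choose j ℓ : ℝ) * (x - (ℓ : ℝ) * s) ^ V
        - (-1 : ℝ) ^ 0 * (Nat.choose j 0 : ℝ) * (x - ((0 : ℕ) : ℝ) * s) ^ V := by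
    have := Finset.sum_range_succ' (fun ℓ => (-1 : ℝ) ^ ℓ * (Nat.choose j ℓ : ℝ) * (x - (ℓ : ℝ) * s) ^ V) j
    -- this : ∑_{ℓ < j+1} f ℓ = ∑_{k<j} f (k+1) + f 0
    have hj : (Nat.choose j (j+1) : ℝ) = 0 := by
      norm_cast; exact Nat.choose_eq_zero_of_lt (Nat.lt_succ_self j)
    rw [Finset.sum_range_succ]
    rw [hj]
    rw [this]
    ring
  rw [h2]
  simp only [Nat.choose_zero_right, Nat.cast_one, pow_zero]
  push_cast
  ring

lemma phiAux_sub_integral (j : ℕ) (s : ℝ) (V : ℕ) (x₀ x₁ : ℝ) :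
    phiAux j s (V + 1) x₁ - phiAux j s (V + 1) x₀
      = ∫ t in x₀..x₁, ((V : ℝ) + 1) * phiAux j s V t := by
  unfold phiAux
  have hint : ∀ ℓ ∈ Finset.range (j+1),
      IntervalIntegrable (fun t => ((V : ℝ) + 1) * ((-1 : ℝ) ^ ℓ * (Nat.choose j ℓ : ℝ) * (t - (ℓ : ℝ) * s) ^ V))
        MeasureTheory.volume x₀ x₁ := by
    intro ℓ _
    exact (Continuous.intervalIntegrable (by continuity) x₀ x₁)
  rw [show (fun t => ((V : ℝ) + 1) * ∑ ℓ ∈ Finset.range (j+1), (-1 : ℝ) ^ ℓ * (Nat.choose j ℓ : ℝ) * (t - (ℓ : ℝ) * s) ^ V)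
      = (fun t => ∑ ℓ ∈ Finset.range (j+1), ((V : ℝ) + 1) * ((-1 : ℝ) ^ ℓ * (Nat.choose j ℓ : ℝ) * (t - (ℓ : ℝ) * s) ^ V))
      from funext fun t => Finset.mul_sum _ _ _]
  rw [intervalIntegral.integral_finset_sum hint]
  rw [← Finset.sum_sub_distrib]
  refine Finset.sum_congr rfl fun ℓ _ => ?_
  have key : ∫ t in x₀..x₁, ((V : ℝ) + 1) * ((-1 : ℝ) ^ ℓ * (Nat.choose j ℓ : ℝ) * (t - (ℓ : ℝ) * s) ^ V)
      = ((V : ℝ) + 1) * ((-1 : ℝ) ^ ℓ * (Nat.choose j ℓ : ℝ)) * ∫ t in x₀..x₁, (t - (ℓ : ℝ) * s) ^ V := by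
    rw [← intervalIntegral.integral_const_mul]
    congr 1; funext t; ring
  rw [key]
  have : ∫ t in x₀..x₁, (t - (ℓ : ℝ) * s) ^ V
      = ((x₁ - (ℓ : ℝ) * s) ^ (V+1) - (x₀ - (ℓ : ℝ) * s) ^ (V+1)) / ((V : ℝ) + 1) := by
    rw [intervalIntegral.integral_comp_sub_right (fun u => u ^ V) ((ℓ : ℝ) * s)]
    rw [integral_pow]
  rw [this]
  have hV : ((V : ℝ) + 1) ≠ 0 := by positivity
  field_simp

lemma phiAux_abs_le (s : ℝ) (hs0 : 0 ≤ s) :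
    ∀ j V : ℕ, j ≤ V → ∀ x : ℝ, |x| ≤ 1 → |x - (j : ℝ) * s| ≤ 1 →
      |phiAux j s V x| ≤ ((V.factorial : ℝ) / ((V - j).factorial : ℝ)) * s ^ j := by
  intro j
  induction j with
  | zero =>
    intro V _ x hx _
    have h0 : phiAux 0 s V x = x ^ V := by simp [phiAux]
    rw [h0, Nat.sub_zero, div_self (by positivity : (V.factorial : ℝ) ≠ 0), pow_zero, abs_pow]
    calc |x| ^ V ≤ 1 ^ V := pow_le_pow_left₀ (abs_nonneg x) hx V
    _ = 1 * 1 := by ring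
  | succ j ih =>
    intro V hjV x hx hxj
    obtain ⟨W, rfl⟩ : ∃ W, V = W + 1 := ⟨V - 1, by omega⟩
    have hjW : j ≤ W := by omega
    rw [phiAux_succ]
    have hrepr := phiAux_sub_integral j s W (x - s) x
    rw [show phiAux j s (W+1) x - phiAux j s (W+1) (x - s) = phiAux j s (W+1) x - phiAux j s (W+1) (x-s) from rfl]
    rw [hrepr]
    have hC : 0 ≤ ((W : ℝ) + 1) * (((W.factorial : ℝ) / ((W - j).factorial : ℝ)) * s ^ j) := by positivity
    have hbound : ∀ t ∈ Set.uIoc (x - s) x,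
        ‖((W : ℝ) + 1) * phiAux j s W t‖ ≤ ((W : ℝ) + 1) * (((W.factorial : ℝ) / ((W - j).factorial : ℝ)) * s ^ j) := by
      intro t ht
      rw [Set.uIoc_of_le (by linarith : x - s ≤ x)] at ht
      obtain ⟨ht1, ht2⟩ := ht
      have hx1 : x ≤ 1 := (abs_le.mp hx).2
      have hx2 : -1 ≤ x - ((j : ℝ) + 1) * s := by
        have := (abs_le.mp hxj).1
        push_cast at this ⊢
        linarith
      have hjs : 0 ≤ (j : ℝ) * s := by positivity
      have ht_abs : |t| ≤ 1 := by
        rw [abs_le]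
        constructor
        · nlinarith
        · linarith
      have htj_abs : |t - (j : ℝ) * s| ≤ 1 := by
        rw [abs_le]
        constructor
        · nlinarith
        · linarith
      rw [norm_mul]
      have := ih W hjW t ht_abs htj_abs
      have h1 : ‖((W : ℝ) + 1)‖ = (W : ℝ) + 1 := by
        rw [Real.norm_eq_abs, abs_of_nonneg]; positivity
      rw [h1]
      exact mul_le_mul_of_nonneg_left this (by positivity)
    have := intervalIntegral.norm_integral_le_of_norm_le_const hbound
    rw [Real.norm_eq_abs] at this
    have habs : |x - (x - s)| = s := by rw [abs_of_nonneg (by linarith)]; ring_nf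
    rw [habs] at this
    calc |∫ t in (x - s)..x, ((W : ℝ) + 1) * phiAux j s W t|
        ≤ ((W : ℝ) + 1) * (((W.factorial : ℝ) / ((W - j).factorial : ℝ)) * s ^ j) * s := this
      _ = (((W+1).factorial : ℝ) / (((W+1) - (j+1)).factorial : ℝ)) * s ^ (j+1) := by
          have : (W + 1) - (j + 1) = W - j := by omega
          rw [this, Nat.factorial_succ]
          push_cast
          ring

/-- If `j ≤ V`, `s ≥ 0` and `s·V·j ≤ 2`, then `φ_j(s,V) ≤ (V!/(V−j)!)·s^j ≤ (V·s)^j`. -/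
theorem phi_upper_bound (j V : ℕ) (hjV : j ≤ V) (s : ℝ) (hs0 : 0 ≤ s)
    (hsVj : s * (V : ℝ) * (j : ℝ) ≤ 2) :
    phi j s V ≤ ((V.factorial : ℝ) / ((V - j).factorial : ℝ)) * s ^ j ∧
      phi j s V ≤ ((V : ℝ) * s) ^ j := by
  have hphi : phi j s V = phiAux j s V 1 := rfl
  have hjs : (j : ℝ) * s ≤ 2 := by
    rcases Nat.eq_zero_or_pos j with hj | hj
    · subst hj; simpa using (by norm_num : (0:ℝ) ≤ 2)
    · have hV1 : (1 : ℝ) ≤ (V : ℝ) := by exact_mod_cast Nat.one_le_iff_ne_zero.mpr (by omega)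
      nlinarith [mul_nonneg (mul_nonneg hs0 (by positivity : (0:ℝ) ≤ (V:ℝ))) (by positivity : (0:ℝ) ≤ (j:ℝ))]
  have h1 : |phiAux j s V 1| ≤ ((V.factorial : ℝ) / ((V - j).factorial : ℝ)) * s ^ j := by
    apply phiAux_abs_le s hs0 j V hjV 1 (by norm_num)
    rw [abs_le]
    constructor
    · linarith
    · have : 0 ≤ (j : ℝ) * s := by positivity
      linarith
  have hmain : phi j s V ≤ ((V.factorial : ℝ) / ((V - j).factorial : ℝ)) * s ^ j := by
    rw [hphi]
    exact le_trans (le_abs_self _) h1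
  refine ⟨hmain, le_trans hmain ?_⟩
  have hdesc : ((V.factorial : ℝ) / ((V - j).factorial : ℝ)) = (V.descFactorial j : ℝ) := by
    rw [div_eq_iff (by positivity : ((V - j).factorial : ℝ) ≠ 0)]
    rw [← Nat.factorial_mul_descFactorial hjV]
    push_cast
    ring
  rw [hdesc]
  calc (V.descFactorial j : ℝ) * s ^ j ≤ ((V : ℝ) ^ j) * s ^ j := by
        apply mul_le_mul_of_nonneg_right _ (by positivity)
        exact_mod_cast Nat.descFactorial_le_pow V j
    _ = ((V : ℝ) * s) ^ j := (mul_pow _ _ _).symm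
end

section
/- Let j ≤ V be natural numbers and s a real number. Then φ_j(s, V) = (V!·s^j/(V−j)!) · ∑_{u=0}^{V−j} (−1)^u·s^u · ( j!·(V−j)! / ((u+j)!·(V−u−j)!) ) · S(j+u, j); equivalently, φ_j(s,V) expands as a polynomial in s whose coefficient structure is governed by Stirling numbers of the second kind. -/
/-- The alternating binomial sum `∑_ℓ (−1)^ℓ C(j,ℓ) ℓ^n` vanishes when `n < j`. -/
lemma alt_sum_vanish : ∀ j : ℕ, ∀ n : ℕ, n < j →
    ∑ ℓ ∈ Finset.range (j + 1), (-1 : ℝ) ^ ℓ * (Nat.choose j ℓ : ℝ) * (ℓ : ℝ) ^ n = 0 := by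
  intro j
  induction j with
  | zero => intro n hn; omega
  | succ j ih =>
    intro n hn
    cases n with
    | zero =>
      simp only [pow_zero, mul_one]
      have h := Int.alternating_sum_range_choose (n := j + 1)
      rw [if_neg (Nat.succ_ne_zero j)] at h
      have h2 := congrArg (fun z : ℤ => (z : ℝ)) h
      push_cast at h2
      simpa using h2
    | succ m =>
      have hm : m < j := by omega
      rw [Finset.sum_range_succ']
      have h0 : (-1 : ℝ) ^ 0 * ((Nat.choose (j+1) 0 : ℕ) : ℝ) * ((0 : ℕ) : ℝ) ^ (m+1) = 0 := by
        simp
      rw [h0, add_zero]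
      have step : ∀ i ∈ Finset.range (j + 1),
          (-1 : ℝ) ^ (i+1) * ((Nat.choose (j+1) (i+1) : ℕ) : ℝ) * (((i+1 : ℕ)) : ℝ) ^ (m+1)
            = ∑ k ∈ Finset.range (m + 1),
                (-((j : ℝ) + 1) * (Nat.choose m k : ℝ)) *
                  ((-1 : ℝ) ^ i * (Nat.choose j i : ℝ) * (i : ℝ) ^ k) := by
        intro i _
        have hc : ((Nat.choose (j+1) (i+1) : ℕ) : ℝ) * ((i : ℝ) + 1)
            = ((j : ℝ) + 1) * (Nat.choose j i : ℝ) := by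
          exact_mod_cast congrArg (fun t : ℕ => (t : ℝ)) (Nat.add_one_mul_choose_eq j i).symm
        have hb : ((i : ℝ) + 1) ^ m
            = ∑ k ∈ Finset.range (m + 1), (i : ℝ) ^ k * 1 ^ (m - k) * (Nat.choose m k : ℝ) :=
          add_pow (i : ℝ) 1 m
        symm
        calc ∑ k ∈ Finset.range (m + 1),
              (-((j : ℝ) + 1) * (Nat.choose m k : ℝ)) *
                ((-1 : ℝ) ^ i * (Nat.choose j i : ℝ) * (i : ℝ) ^ k)
            = (-((j : ℝ) + 1) * ((-1 : ℝ) ^ i * (Nat.choose j i : ℝ))) *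
                ∑ k ∈ Finset.range (m + 1), (i : ℝ) ^ k * 1 ^ (m - k) * (Nat.choose m k : ℝ) := by
              rw [Finset.mul_sum]
              refine Finset.sum_congr rfl fun k _ => ?_
              rw [one_pow]; ring
          _ = (-((j : ℝ) + 1) * ((-1 : ℝ) ^ i * (Nat.choose j i : ℝ))) * ((i : ℝ) + 1) ^ m := by
              rw [← hb]
          _ = (-1 : ℝ) ^ (i+1) * ((Nat.choose (j+1) (i+1) : ℕ) : ℝ) * (((i+1 : ℕ)) : ℝ) ^ (m+1) := by
              push_cast
              rw [pow_succ ((i : ℝ) + 1) m, pow_succ ((-1 : ℝ)) i]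
              linear_combination ((-1 : ℝ) ^ i * ((i : ℝ) + 1) ^ m) * hc
      rw [Finset.sum_congr rfl step, Finset.sum_comm]
      apply Finset.sum_eq_zero
      intro k hk
      rw [Finset.mem_range] at hk
      rw [← Finset.mul_sum, ih k (by omega)]
      ring

/-- Relation between the alternating sum and `stirlingSecond`. -/
lemma alt_sum_eq_stirling (j n : ℕ) :
    stirlingSecond n j = (1 / (j.factorial : ℝ)) * (-1 : ℝ) ^ j *
      ∑ ℓ ∈ Finset.range (j + 1), (-1 : ℝ) ^ ℓ * (Nat.choose j ℓ : ℝ) * (ℓ : ℝ) ^ n := by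
  unfold stirlingSecond
  rw [mul_assoc]
  congr 1
  rw [Finset.mul_sum]
  refine Finset.sum_congr rfl fun i hi => ?_
  rw [Finset.mem_range] at hi
  have h3 : (-1 : ℝ) ^ (j - i) = (-1 : ℝ) ^ j * (-1 : ℝ) ^ i := by
    have hij : j - i + i = j := by omega
    have hsq : (-1 : ℝ) ^ i * (-1 : ℝ) ^ i = 1 := by
      rw [← pow_add, ← two_mul, pow_mul]; norm_num
    calc (-1 : ℝ) ^ (j - i) = (-1 : ℝ) ^ (j - i) * ((-1 : ℝ) ^ i * (-1 : ℝ) ^ i) := by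
          rw [hsq, mul_one]
      _ = ((-1 : ℝ) ^ (j - i) * (-1 : ℝ) ^ i) * (-1 : ℝ) ^ i := by ring
      _ = (-1 : ℝ) ^ j * (-1 : ℝ) ^ i := by rw [← pow_add, hij]
  rw [h3]; ring

/-- Binomial expansion of `phi`. -/
lemma phi_expand (j V : ℕ) (s : ℝ) :
    phi j s V = ∑ n ∈ Finset.range (V + 1), (-1 : ℝ) ^ n * s ^ n * (Nat.choose V n : ℝ) *
      ∑ ℓ ∈ Finset.range (j + 1), (-1 : ℝ) ^ ℓ * (Nat.choose j ℓ : ℝ) * (ℓ : ℝ) ^ n := by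
  unfold phi
  have hb : ∀ ℓ : ℕ, (1 - (ℓ : ℝ) * s) ^ V
      = ∑ n ∈ Finset.range (V + 1),
          (-((ℓ : ℝ) * s)) ^ n * 1 ^ (V - n) * (Nat.choose V n : ℝ) := by
    intro ℓ
    have := add_pow (-((ℓ : ℝ) * s)) 1 V
    rw [← this]; ring_nf
  simp only [hb, Finset.mul_sum]
  rw [Finset.sum_comm]
  refine Finset.sum_congr rfl fun n _ => ?_
  refine Finset.sum_congr rfl fun ℓ _ => ?_
  have hneg : (-((ℓ : ℝ) * s)) ^ n = (-1 : ℝ) ^ n * ((ℓ : ℝ) ^ n * s ^ n) := by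
    rw [neg_eq_neg_one_mul, mul_pow, mul_pow]
  rw [hneg, one_pow]; ring

/-- Polynomial expansion of `φ_j(·,V)` in terms of Stirling numbers of the second kind:
`φ_j(s,V) = (V!·s^j/(V−j)!)·∑_{u=0}^{V−j} (−1)^u·s^u·(j!·(V−j)!/((u+j)!·(V−u−j)!))·S(j+u,j)`. -/
theorem phi_stirling_expansion (j V : ℕ) (hjV : j ≤ V) (s : ℝ) :
    phi j s V
      = ((V.factorial : ℝ) * s ^ j / ((V - j).factorial : ℝ)) *
        ∑ u ∈ Finset.range (V - j + 1),
          (-1 : ℝ) ^ u * s ^ u *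
            ((j.factorial : ℝ) * ((V - j).factorial : ℝ) /
              (((u + j).factorial : ℝ) * ((V - u - j).factorial : ℝ))) *
            stirlingSecond (j + u) j := by
  rw [phi_expand]
  -- drop the vanishing head of the sum
  have hsub : Finset.Ico j (V + 1) ⊆ Finset.range (V + 1) := by
    intro x hx
    rw [Finset.mem_Ico] at hx
    exact Finset.mem_range.mpr hx.2
  rw [← Finset.sum_subset hsub (by
    intro x hx hx'
    rw [Finset.mem_range] at hx
    rw [Finset.mem_Ico, not_and_or] at hx'
    have hxj : x < j := by omega
    rw [alt_sum_vanish j x hxj, mul_zero])]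
  rw [Finset.sum_Ico_eq_sum_range]
  have hVj : V + 1 - j = V - j + 1 := by omega
  rw [hVj, Finset.mul_sum]
  refine Finset.sum_congr rfl fun u hu => ?_
  rw [Finset.mem_range] at hu
  have hjuV : j + u ≤ V := by omega
  have hchoose : ((Nat.choose V (j + u) : ℕ) : ℝ)
      = (V.factorial : ℝ) / (((j + u).factorial : ℝ) * ((V - (j + u)).factorial : ℝ)) :=
    Nat.cast_choose ℝ hjuV
  have hsub2 : V - u - j = V - (j + u) := by omega
  have huj : u + j = j + u := Nat.add_comm u j
  rw [alt_sum_eq_stirling, hsub2, huj, hchoose]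
  have f1 : ((j.factorial : ℝ)) ≠ 0 := Nat.cast_ne_zero.mpr j.factorial_ne_zero
  have f2 : (((V - j).factorial : ℝ)) ≠ 0 := Nat.cast_ne_zero.mpr (V - j).factorial_ne_zero
  have f3 : (((j + u).factorial : ℝ)) ≠ 0 := Nat.cast_ne_zero.mpr (j + u).factorial_ne_zero
  have f4 : (((V - (j + u)).factorial : ℝ)) ≠ 0 :=
    Nat.cast_ne_zero.mpr (V - (j + u)).factorial_ne_zero
  have hpow : (-1 : ℝ) ^ (j + u) = (-1 : ℝ) ^ j * (-1 : ℝ) ^ u := pow_add (-1 : ℝ) j u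
  have hs : s ^ (j + u) = s ^ j * s ^ u := pow_add s j u
  rw [hpow, hs]
  field_simp
end

section
/- Let j ≥ 1 and V ≥ 1 be natural numbers and let s be a real number with s ≠ 1. Then the derivative of φ_j(·, V) at s satisfies d/ds φ_j(s, V) = V·j·(1−s)^{V−1}·φ_{j−1}( s/(1−s), V−1 ). -/
/-- Derivative identity: for `j ≥ 1`, `V ≥ 1` and `s ≠ 1`,
`d/ds φ_j(s,V) = V·j·(1−s)^{V−1}·φ_{j−1}(s/(1−s), V−1)`. -/
theorem phi_deriv (j V : ℕ) (hj : 1 ≤ j) (hV : 1 ≤ V) (s : ℝ) (hs : s ≠ 1) :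
    deriv (fun x => phi j x V) s
      = (V : ℝ) * (j : ℝ) * (1 - s) ^ (V - 1) * phi (j - 1) (s / (1 - s)) (V - 1) := by
  obtain ⟨n, rfl⟩ : ∃ n, j = n + 1 := ⟨j - 1, (Nat.succ_pred_eq_of_pos hj).symm⟩
  obtain ⟨W, rfl⟩ : ∃ W, V = W + 1 := ⟨V - 1, (Nat.succ_pred_eq_of_pos hV).symm⟩
  have h1s : (1 : ℝ) - s ≠ 0 := sub_ne_zero.mpr (Ne.symm hs)
  have hterm : ∀ ℓ : ℕ, HasDerivAt (fun x : ℝ => (1 - (ℓ : ℝ) * x) ^ (W + 1))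
      (((W : ℝ) + 1) * (1 - (ℓ : ℝ) * s) ^ W * (-(ℓ : ℝ))) s := by
    intro ℓ
    have h0 : HasDerivAt (fun x : ℝ => 1 - (ℓ : ℝ) * x) (-(ℓ : ℝ)) s := by
      simpa using ((hasDerivAt_id s).const_mul (ℓ : ℝ)).const_sub 1
    have := h0.fun_pow (W + 1)
    simpa [Nat.add_sub_cancel] using this
  have hderiv : deriv (fun x => phi (n + 1) x (W + 1)) s
      = ∑ ℓ ∈ Finset.range (n + 2),
          (-1 : ℝ) ^ ℓ * (Nat.choose (n + 1) ℓ : ℝ)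
            * (((W : ℝ) + 1) * (1 - (ℓ : ℝ) * s) ^ W * (-(ℓ : ℝ))) := by
    unfold phi
    rw [deriv_fun_sum (fun ℓ _ => (((hterm ℓ).const_mul
        ((-1 : ℝ) ^ ℓ * (Nat.choose (n + 1) ℓ : ℝ))).differentiableAt))]
    refine Finset.sum_congr rfl fun ℓ _ => ?_
    have := ((hterm ℓ).const_mul ((-1 : ℝ) ^ ℓ * (Nat.choose (n + 1) ℓ : ℝ))).deriv
    rw [show (fun x : ℝ => (-1 : ℝ) ^ ℓ * (Nat.choose (n + 1) ℓ : ℝ)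
        * (1 - (ℓ : ℝ) * x) ^ (W + 1))
      = (fun x : ℝ => (-1 : ℝ) ^ ℓ * (Nat.choose (n + 1) ℓ : ℝ)
        * ((fun x : ℝ => (1 - (ℓ : ℝ) * x) ^ (W + 1)) x)) from rfl]
    rw [this]
  rw [hderiv]
  simp only [Nat.add_sub_cancel, phi, Finset.mul_sum]
  rw [Finset.sum_range_succ']
  simp only [Nat.cast_zero, neg_zero, mul_zero, add_zero]
  refine Finset.sum_congr rfl fun m hm => ?_
  have hkey : (1 - s) * (1 - (m : ℝ) * (s / (1 - s))) = 1 - ((m : ℝ) + 1) * s := by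
    field_simp; ring
  have hpow : (1 - s) ^ W * (1 - (m : ℝ) * (s / (1 - s))) ^ W
      = (1 - ((m : ℝ) + 1) * s) ^ W := by rw [← mul_pow, hkey]
  have hchoose : ((n : ℝ) + 1) * (Nat.choose n m : ℝ)
      = (Nat.choose (n + 1) (m + 1) : ℝ) * ((m : ℝ) + 1) := by
    have := Nat.add_one_mul_choose_eq n m
    exact_mod_cast this
  push_cast
  rw [← hpow, pow_succ]
  linear_combination -((W:ℝ)+1) * (1-s)^W * (1 - (m:ℝ)*(s/(1-s)))^W * (-1:ℝ)^m * hchoose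
end

section
/- Consider the near-constant column weight design with N items, T tests, per-item weight L, and defective set 𝒦 of size K. Fix a defective item i ∈ 𝒦, let A_i be the event that every test containing item i also contains at least one item of 𝒦∖{i}, and let W_{𝒦∖i} be the number of tests containing at least one item of 𝒦∖{i}. Then (i) for every w, P( A_i | W_{𝒦∖i} = w ) = (w/T)^L, and consequently (ii) for every real c₁ with 0 < c₁ ≤ 1, P(A_i) ≥ c₁^L · P( W_{𝒦∖i} ≥ c₁·T ). -/
/-- The number of tests containing at least one item of `M`, under the column representation
`X : Fin N → Fin L → Fin T` (item `i` is placed in the tests `X i l`, `l : Fin L`). -/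
def coveredTests {N T L : ℕ} (M : Finset (Fin N)) (X : Fin N → Fin L → Fin T) : ℕ :=
  (Finset.univ.filter (fun t : Fin T => ∃ j ∈ M, ∃ l, X j l = t)).card

/-- Item `i` is masked by `𝒦 ∖ {i}`: every test containing `i` also contains at least one item
of `𝒦 ∖ {i}`. -/
def Masked {N T L : ℕ} (𝒦 : Finset (Fin N)) (i : Fin N) (X : Fin N → Fin L → Fin T) : Prop :=
  ∀ l : Fin L, ∃ j ∈ 𝒦, j ≠ i ∧ ∃ l', X j l' = X i l

open Finset

section Helpers

variable {N T L : ℕ}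

open Classical in
/-- The set of tests covered by `𝒦 ∖ {i}`, as a function of the off-`i` columns. -/
noncomputable def covSet (𝒦 : Finset (Fin N)) (i : Fin N)
    (Y : {j : Fin N // j ≠ i} → Fin L → Fin T) : Finset (Fin T) :=
  Finset.univ.filter (fun t => ∃ j : {j : Fin N // j ≠ i}, (j : Fin N) ∈ 𝒦 ∧ ∃ l, Y j l = t)

lemma symm_apply_ne (i : Fin N)
    (p : (Fin L → Fin T) × ({j : Fin N // j ≠ i} → Fin L → Fin T))
    {j : Fin N} (h : j ≠ i) :
    (Equiv.funSplitAt i (Fin L → Fin T)).symm p j = p.2 ⟨j, h⟩ := by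
  simp [Equiv.funSplitAt, Equiv.piSplitAt, h]

lemma symm_apply_eq' (i : Fin N)
    (p : (Fin L → Fin T) × ({j : Fin N // j ≠ i} → Fin L → Fin T)) :
    (Equiv.funSplitAt i (Fin L → Fin T)).symm p i = p.1 := by
  simp [Equiv.funSplitAt, Equiv.piSplitAt]

lemma cov_symm (𝒦 : Finset (Fin N)) (i : Fin N)
    (p : (Fin L → Fin T) × ({j : Fin N // j ≠ i} → Fin L → Fin T)) :
    coveredTests (𝒦.erase i) ((Equiv.funSplitAt i (Fin L → Fin T)).symm p)
      = (covSet 𝒦 i p.2).card := by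
  classical
  unfold coveredTests covSet
  congr 1
  ext t
  simp only [mem_filter, mem_univ, true_and, Finset.mem_erase]
  constructor
  · rintro ⟨j, ⟨hji, hjK⟩, l, hl⟩
    exact ⟨⟨j, hji⟩, hjK, l, by rw [← symm_apply_ne i p hji]; exact hl⟩
  · rintro ⟨j, hjK, l, hl⟩
    exact ⟨j.1, ⟨j.2, hjK⟩, l, by rw [symm_apply_ne i p j.2]; exact hl⟩

lemma masked_symm (𝒦 : Finset (Fin N)) (i : Fin N)
    (p : (Fin L → Fin T) × ({j : Fin N // j ≠ i} → Fin L → Fin T)) :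
    Masked 𝒦 i ((Equiv.funSplitAt i (Fin L → Fin T)).symm p)
      ↔ ∀ l, p.1 l ∈ covSet 𝒦 i p.2 := by
  classical
  unfold Masked covSet
  simp only [mem_filter, mem_univ, true_and]
  constructor
  · intro h l
    obtain ⟨j, hjK, hji, l', hl'⟩ := h l
    refine ⟨⟨j, hji⟩, hjK, l', ?_⟩
    rw [← symm_apply_ne i p hji, hl', symm_apply_eq' i p]
  · intro h l
    obtain ⟨j, hjK, l', hl'⟩ := h l
    refine ⟨j.1, hjK, j.2, l', ?_⟩
    rw [symm_apply_ne i p j.2, hl', symm_apply_eq' i p]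

lemma nat_card_prod {A B : Type*} [Fintype A] [Fintype B] (q : A → B → Prop) :
    Nat.card {p : A × B // q p.1 p.2} = ∑ b : B, Nat.card {a : A // q a b} := by
  classical
  have e1 : {p : A × B // q p.1 p.2} ≃ {p : B × A // q p.2 p.1} :=
    Equiv.subtypeEquiv (Equiv.prodComm A B) (fun p => Iff.rfl)
  have e2 : {p : B × A // q p.2 p.1} ≃ Σ b : B, {a : A // q a b} :=
    Equiv.subtypeProdEquivSigmaSubtype (fun (b : B) (a : A) => q a b)
  rw [Nat.card_congr (e1.trans e2), Nat.card_eq_fintype_card, Fintype.card_sigma]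
  simp [Nat.card_eq_fintype_card]

lemma nat_card_pi_mem (L : ℕ) (s : Finset (Fin T)) :
    Nat.card {a : Fin L → Fin T // ∀ l, a l ∈ s} = s.card ^ L := by
  classical
  rw [Nat.card_congr (Equiv.subtypePiEquivPi (p := fun (_ : Fin L) (b : Fin T) => b ∈ s)),
    Nat.card_pi]
  simp [Nat.card_eq_finsetCard]

end Helpers

/-- For the near-constant column weight design (each of the `N` items independently places
itself in `L` tests chosen uniformly with replacement among `T` tests), and a fixed defective
set `𝒦` of size `K` containing `i`:
(i) `P(A_i ∩ {W_{𝒦∖i} = w}) = (w/T)^L · P(W_{𝒦∖i} = w)` for every `w`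
    (i.e. `P(A_i | W_{𝒦∖i} = w) = (w/T)^L`), and
(ii) `P(A_i) ≥ c₁^L · P(W_{𝒦∖i} ≥ c₁·T)` for every `0 < c₁ ≤ 1`. -/
theorem masking_probability (N T L K : ℕ) (hT : 1 ≤ T)
    (𝒦 : Finset (Fin N)) (h𝒦 : 𝒦.card = K) (i : Fin N) (hi : i ∈ 𝒦) :
    (∀ w : ℕ,
      (Nat.card {X : Fin N → Fin L → Fin T //
          Masked 𝒦 i X ∧ coveredTests (𝒦.erase i) X = w} : ℝ) /
        (Nat.card (Fin N → Fin L → Fin T) : ℝ)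
      = ((w : ℝ) / (T : ℝ)) ^ L *
        ((Nat.card {X : Fin N → Fin L → Fin T // coveredTests (𝒦.erase i) X = w} : ℝ) /
          (Nat.card (Fin N → Fin L → Fin T) : ℝ)))
    ∧
    (∀ c₁ : ℝ, 0 < c₁ → c₁ ≤ 1 →
      (Nat.card {X : Fin N → Fin L → Fin T // Masked 𝒦 i X} : ℝ) /
          (Nat.card (Fin N → Fin L → Fin T) : ℝ)
        ≥ c₁ ^ L *
          ((Nat.card {X : Fin N → Fin L → Fin T //
              c₁ * (T : ℝ) ≤ (coveredTests (𝒦.erase i) X : ℝ)} : ℝ) /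
            (Nat.card (Fin N → Fin L → Fin T) : ℝ))) := by
  classical
  have hTfin : Nonempty (Fin T) := ⟨⟨0, hT⟩⟩
  set e := Equiv.funSplitAt i (Fin L → Fin T) with he
  -- generic decomposition
  have key : ∀ (P : (Fin N → Fin L → Fin T) → Prop),
      Nat.card {X : Fin N → Fin L → Fin T // P X}
        = ∑ Y : ({j : Fin N // j ≠ i} → Fin L → Fin T),
            Nat.card {a : Fin L → Fin T // P (e.symm (a, Y))} := by
    intro P
    have e0 : {X : Fin N → Fin L → Fin T // P X}
        ≃ {p : (Fin L → Fin T) × ({j : Fin N // j ≠ i} → Fin L → Fin T) // P (e.symm p)} :=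
      Equiv.subtypeEquiv e (fun X => by rw [Equiv.symm_apply_apply])
    rw [Nat.card_congr e0]
    exact nat_card_prod (fun a Y => P (e.symm (a, Y)))
  have hTpow : Nat.card (Fin L → Fin T) = T ^ L := by
    simp [Nat.card_eq_fintype_card]
  have hTot : (0 : ℝ) < (Nat.card (Fin N → Fin L → Fin T) : ℝ) := by
    have : 0 < Nat.card (Fin N → Fin L → Fin T) := Nat.card_pos
    exact_mod_cast this
  have hT0 : (0 : ℝ) < (T : ℝ) := by exact_mod_cast hT
  -- counts per w
  have hM : ∀ w : ℕ,
      Nat.card {X : Fin N → Fin L → Fin T //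
          Masked 𝒦 i X ∧ coveredTests (𝒦.erase i) X = w}
        = w ^ L * (univ.filter (fun Y : ({j : Fin N // j ≠ i} → Fin L → Fin T) =>
            (covSet 𝒦 i Y).card = w)).card := by
    intro w
    rw [key]
    have hterm : ∀ Y : ({j : Fin N // j ≠ i} → Fin L → Fin T),
        Nat.card {a : Fin L → Fin T //
            Masked 𝒦 i (e.symm (a, Y)) ∧ coveredTests (𝒦.erase i) (e.symm (a, Y)) = w}
          = if (covSet 𝒦 i Y).card = w then w ^ L else 0 := by
      intro Y
      have hiff : ∀ a : Fin L → Fin T,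
          (Masked 𝒦 i (e.symm (a, Y)) ∧ coveredTests (𝒦.erase i) (e.symm (a, Y)) = w)
            ↔ ((∀ l, a l ∈ covSet 𝒦 i Y) ∧ (covSet 𝒦 i Y).card = w) := by
        intro a
        rw [masked_symm 𝒦 i (a, Y), cov_symm 𝒦 i (a, Y)]
      rw [Nat.card_congr (Equiv.subtypeEquivRight hiff)]
      by_cases h : (covSet 𝒦 i Y).card = w
      · rw [if_pos h, ← h, ← nat_card_pi_mem L (covSet 𝒦 i Y)]
        exact Nat.card_congr (Equiv.subtypeEquivRight (fun a => by simp [h]))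
      · rw [if_neg h]
        have : IsEmpty {a : Fin L → Fin T //
            (∀ l, a l ∈ covSet 𝒦 i Y) ∧ (covSet 𝒦 i Y).card = w} :=
          ⟨fun a => h a.2.2⟩
        exact Nat.card_of_isEmpty
    calc ∑ Y, Nat.card {a : Fin L → Fin T //
            Masked 𝒦 i (e.symm (a, Y)) ∧ coveredTests (𝒦.erase i) (e.symm (a, Y)) = w}
        = ∑ Y, if (covSet 𝒦 i Y).card = w then w ^ L else 0 := by
          exact Finset.sum_congr rfl (fun Y _ => hterm Y)
      _ = ∑ Y ∈ univ.filter (fun Y => (covSet 𝒦 i Y).card = w), w ^ L := by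
          rw [Finset.sum_filter]
      _ = _ := by rw [Finset.sum_const, smul_eq_mul, mul_comm]
  have hC : ∀ w : ℕ,
      Nat.card {X : Fin N → Fin L → Fin T // coveredTests (𝒦.erase i) X = w}
        = T ^ L * (univ.filter (fun Y : ({j : Fin N // j ≠ i} → Fin L → Fin T) =>
            (covSet 𝒦 i Y).card = w)).card := by
    intro w
    rw [key]
    have hterm : ∀ Y : ({j : Fin N // j ≠ i} → Fin L → Fin T),
        Nat.card {a : Fin L → Fin T // coveredTests (𝒦.erase i) (e.symm (a, Y)) = w}
          = if (covSet 𝒦 i Y).card = w then T ^ L else 0 := by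
      intro Y
      have hiff : ∀ a : Fin L → Fin T,
          (coveredTests (𝒦.erase i) (e.symm (a, Y)) = w) ↔ ((covSet 𝒦 i Y).card = w) :=
        fun a => by rw [cov_symm 𝒦 i (a, Y)]
      rw [Nat.card_congr (Equiv.subtypeEquivRight hiff)]
      by_cases h : (covSet 𝒦 i Y).card = w
      · rw [if_pos h]
        have : ∀ a : Fin L → Fin T, ((covSet 𝒦 i Y).card = w) ↔ True := fun a => by simp [h]
        rw [Nat.card_congr (Equiv.subtypeEquivRight this), ← hTpow]
        exact Nat.card_congr (Equiv.subtypeUnivEquiv (fun a => trivial))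
      · rw [if_neg h]
        have : IsEmpty {_a : Fin L → Fin T // (covSet 𝒦 i Y).card = w} := ⟨fun a => h a.2⟩
        exact Nat.card_of_isEmpty
    calc ∑ Y, Nat.card {a : Fin L → Fin T // coveredTests (𝒦.erase i) (e.symm (a, Y)) = w}
        = ∑ Y, if (covSet 𝒦 i Y).card = w then T ^ L else 0 :=
          Finset.sum_congr rfl (fun Y _ => hterm Y)
      _ = ∑ Y ∈ univ.filter (fun Y => (covSet 𝒦 i Y).card = w), T ^ L := by
          rw [Finset.sum_filter]
      _ = _ := by rw [Finset.sum_const, smul_eq_mul, mul_comm]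
  constructor
  · -- part (i)
    intro w
    rw [hM w, hC w]
    push_cast
    rw [div_pow]
    field_simp
  · -- part (ii)
    intro c₁ hc₁ hc₁'
    -- masked count as a sum
    have hMk : Nat.card {X : Fin N → Fin L → Fin T // Masked 𝒦 i X}
        = ∑ Y : ({j : Fin N // j ≠ i} → Fin L → Fin T), (covSet 𝒦 i Y).card ^ L := by
      rw [key]
      refine Finset.sum_congr rfl (fun Y _ => ?_)
      rw [← nat_card_pi_mem L (covSet 𝒦 i Y)]
      exact Nat.card_congr (Equiv.subtypeEquivRight (fun a => masked_symm 𝒦 i (a, Y)))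
    set D := univ.filter (fun Y : ({j : Fin N // j ≠ i} → Fin L → Fin T) =>
      c₁ * (T : ℝ) ≤ ((covSet 𝒦 i Y).card : ℝ)) with hD
    have hCc : Nat.card {X : Fin N → Fin L → Fin T //
        c₁ * (T : ℝ) ≤ (coveredTests (𝒦.erase i) X : ℝ)} = T ^ L * D.card := by
      rw [key]
      have hterm : ∀ Y : ({j : Fin N // j ≠ i} → Fin L → Fin T),
          Nat.card {a : Fin L → Fin T //
              c₁ * (T : ℝ) ≤ ((coveredTests (𝒦.erase i) (e.symm (a, Y)) : ℕ) : ℝ)}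
            = if c₁ * (T : ℝ) ≤ ((covSet 𝒦 i Y).card : ℝ) then T ^ L else 0 := by
        intro Y
        have hiff : ∀ a : Fin L → Fin T,
            (c₁ * (T : ℝ) ≤ ((coveredTests (𝒦.erase i) (e.symm (a, Y)) : ℕ) : ℝ))
              ↔ (c₁ * (T : ℝ) ≤ ((covSet 𝒦 i Y).card : ℝ)) :=
          fun a => by rw [cov_symm 𝒦 i (a, Y)]
        rw [Nat.card_congr (Equiv.subtypeEquivRight hiff)]
        by_cases h : c₁ * (T : ℝ) ≤ ((covSet 𝒦 i Y).card : ℝ)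
        · rw [if_pos h, ← hTpow]
          exact Nat.card_congr (Equiv.subtypeUnivEquiv (fun a => h))
        · rw [if_neg h]
          have : IsEmpty {_a : Fin L → Fin T //
              c₁ * (T : ℝ) ≤ ((covSet 𝒦 i Y).card : ℝ)} := ⟨fun a => h a.2⟩
          exact Nat.card_of_isEmpty
      calc ∑ Y, Nat.card {a : Fin L → Fin T //
              c₁ * (T : ℝ) ≤ ((coveredTests (𝒦.erase i) (e.symm (a, Y)) : ℕ) : ℝ)}
          = ∑ Y, if c₁ * (T : ℝ) ≤ ((covSet 𝒦 i Y).card : ℝ) then T ^ L else 0 :=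
            Finset.sum_congr rfl (fun Y _ => hterm Y)
        _ = ∑ Y ∈ D, T ^ L := by rw [hD, Finset.sum_filter]
        _ = _ := by rw [Finset.sum_const, smul_eq_mul, mul_comm]
    rw [ge_iff_le, hMk, hCc]
    rw [← mul_div_assoc, div_le_div_iff_of_pos_right hTot]
    push_cast
    calc c₁ ^ L * ((T : ℝ) ^ L * (D.card : ℝ))
        = ∑ _Y ∈ D, (c₁ * T) ^ L := by
          rw [Finset.sum_const, nsmul_eq_mul, mul_pow]; ring
      _ ≤ ∑ Y ∈ D, ((covSet 𝒦 i Y).card : ℝ) ^ L := by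
          refine Finset.sum_le_sum (fun Y hY => ?_)
          have h1 : c₁ * (T : ℝ) ≤ ((covSet 𝒦 i Y).card : ℝ) := (Finset.mem_filter.mp hY).2
          exact pow_le_pow_left₀ (by positivity) h1 L
      _ ≤ ∑ Y : ({j : Fin N // j ≠ i} → Fin L → Fin T), ((covSet 𝒦 i Y).card : ℝ) ^ L := by
          refine Finset.sum_le_sum_of_subset_of_nonneg (Finset.filter_subset _ _)
            (fun Y _ _ => by positivity)
end

section
/- Let T, L, w, ℓ be natural numbers with w ≤ T. Let 𝒩(ℓ) be the number of pairs of lists (a, b) ∈ ({1,…,T}^L) × ({1,…,T}^L) such that: every entry of a lies in {1,…,w} ∪ {entries of b}; every entry of b lies in {1,…,w} ∪ {entries of a}; and exactly ℓ distinct values outside {1,…,w} occur among the entries of a and b combined. Then 𝒩(ℓ) ≤ binom(T−w, ℓ) · L^{2ℓ} · (w+ℓ)^{2(L−ℓ)}. -/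
namespace MaskingAux

lemma orderIsoOfFin_congr {α : Type*} [LinearOrder α] {S S' : Finset α} (hSS : S = S')
    {k : ℕ} (h : S.card = k) (h' : S'.card = k) (i : Fin k) :
    (S.orderIsoOfFin h i : α) = (S'.orderIsoOfFin h' i : α) := by
  subst hSS; rfl

def encval {T : ℕ} (w ℓ : ℕ) (S : Finset (Fin T)) (hS : S.card = ℓ) (t : Fin T)
    (ht : t.val < w ∨ t ∈ S) : Fin (w + ℓ) :=
  if h : t.val < w then ⟨t.val, lt_of_lt_of_le h (Nat.le_add_right w ℓ)⟩
  else ⟨w + ((S.orderIsoOfFin hS).symm ⟨t, ht.resolve_left h⟩).val,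
    Nat.add_lt_add_left ((S.orderIsoOfFin hS).symm ⟨t, ht.resolve_left h⟩).isLt w⟩

lemma encval_inj {T : ℕ} {w ℓ : ℕ} {S S' : Finset (Fin T)} (hSS : S = S')
    (hS : S.card = ℓ) (hS' : S'.card = ℓ)
    {t₁ t₂ : Fin T} (h₁ : t₁.val < w ∨ t₁ ∈ S) (h₂ : t₂.val < w ∨ t₂ ∈ S')
    (h : encval w ℓ S hS t₁ h₁ = encval w ℓ S' hS' t₂ h₂) : t₁ = t₂ := by
  subst hSS
  unfold encval at h
  by_cases k1 : t₁.val < w <;> by_cases k2 : t₂.val < w <;>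
    simp only [k1, k2, dif_pos, dif_neg, not_false_iff, Fin.mk.injEq] at h
  · exact Fin.ext h
  · omega
  · omega
  · have h' : ((S.orderIsoOfFin hS).symm ⟨t₁, h₁.resolve_left k1⟩) =
        ((S.orderIsoOfFin hS).symm ⟨t₂, h₂.resolve_left k2⟩) := Fin.ext (by omega)
    have := (S.orderIsoOfFin hS).symm.injective h'
    exact congrArg Subtype.val this

end MaskingAux

open MaskingAux in
/-- Counting bound for pairs of mutually-masking lists.  Lists are ordered `L`-tuples of
coupons from `Fin T`; the first `w` coupons (those `t` with `t.val < w`) play the role of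
`{1,…,w}`.  `𝒩(ℓ)` counts the pairs `(a,b)` such that every entry of `a` lies in
`{1,…,w} ∪ {entries of b}`, every entry of `b` lies in `{1,…,w} ∪ {entries of a}`, and exactly
`ℓ` distinct values outside `{1,…,w}` occur among the entries of `a` and `b` combined.  Then
`𝒩(ℓ) ≤ C(T−w, ℓ) · L^{2ℓ} · (w+ℓ)^{2(L−ℓ)}`. -/
theorem masking_pairs_count_bound (T L w ℓ : ℕ) (hw : w ≤ T) :
    Nat.card {p : (Fin L → Fin T) × (Fin L → Fin T) //
        (∀ l, (p.1 l).val < w ∨ ∃ l', p.2 l' = p.1 l) ∧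
        (∀ l, (p.2 l).val < w ∨ ∃ l', p.1 l' = p.2 l) ∧
        ((Finset.univ.image p.1 ∪ Finset.univ.image p.2).filter
          (fun t : Fin T => w ≤ t.val)).card = ℓ}
      ≤ Nat.choose (T - w) ℓ * L ^ (2 * ℓ) * (w + ℓ) ^ (2 * (L - ℓ)) := by
  classical
  set highs : Finset (Fin T) := Finset.univ.filter (fun t : Fin T => w ≤ t.val) with hhighsdef
  have hhighs : highs.card = T - w := by
    rcases Nat.lt_or_ge w T with h | h
    · have he : highs = Finset.Ici (⟨w, h⟩ : Fin T) := by
        ext t; simp [hhighsdef, Finset.mem_Ici, Fin.le_def]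
      rw [he, Fin.card_Ici]
    · have he : highs = ∅ := by
        ext t; simp only [hhighsdef, Finset.mem_filter, Finset.mem_univ, true_and,
          Finset.notMem_empty, iff_false, not_le]
        exact lt_of_lt_of_le t.isLt h
      rw [he, Finset.card_empty]; omega
  set M := {p : (Fin L → Fin T) × (Fin L → Fin T) //
        (∀ l, (p.1 l).val < w ∨ ∃ l', p.2 l' = p.1 l) ∧
        (∀ l, (p.2 l).val < w ∨ ∃ l', p.1 l' = p.2 l) ∧
        ((Finset.univ.image p.1 ∪ Finset.univ.image p.2).filter
          (fun t : Fin T => w ≤ t.val)).card = ℓ} with hMdef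
  set Sp : M → Finset (Fin T) := fun p =>
    (Finset.univ.image p.1.1 ∪ Finset.univ.image p.1.2).filter (fun t : Fin T => w ≤ t.val)
    with hSpdef
  have hS : ∀ p : M, (Sp p).card = ℓ := fun p => p.2.2.2
  -- every element of Sp p is in the image of both components
  have hSa : ∀ p : M, Sp p ⊆ Finset.univ.image p.1.1 := by
    intro p t ht
    simp only [hSpdef, Finset.mem_filter, Finset.mem_union, Finset.mem_image,
      Finset.mem_univ, true_and] at ht
    obtain ⟨h1 | h1, h2⟩ := ht
    · obtain ⟨l, hl⟩ := h1
      exact hl ▸ Finset.mem_image_of_mem _ (Finset.mem_univ l)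
    · obtain ⟨l, hl⟩ := h1
      rcases p.2.2.1 l with hlt | ⟨l', hl'⟩
      · rw [hl] at hlt; exact absurd h2 (by omega)
      · rw [← hl, ← hl']
        exact Finset.mem_image_of_mem _ (Finset.mem_univ l')
  have hSb : ∀ p : M, Sp p ⊆ Finset.univ.image p.1.2 := by
    intro p t ht
    simp only [hSpdef, Finset.mem_filter, Finset.mem_union, Finset.mem_image,
      Finset.mem_univ, true_and] at ht
    obtain ⟨h1 | h1, h2⟩ := ht
    · obtain ⟨l, hl⟩ := h1
      rcases p.2.1 l with hlt | ⟨l', hl'⟩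
      · rw [hl] at hlt; exact absurd h2 (by omega)
      · rw [← hl, ← hl']
        exact Finset.mem_image_of_mem _ (Finset.mem_univ l')
    · obtain ⟨l, hl⟩ := h1
      exact hl ▸ Finset.mem_image_of_mem _ (Finset.mem_univ l)
  have exA : ∀ p : M, ∀ i : Fin ℓ, ∃ l : Fin L,
      p.1.1 l = ((Sp p).orderIsoOfFin (hS p) i : Fin T) := by
    intro p i
    have hm := hSa p (((Sp p).orderIsoOfFin (hS p) i).2)
    rw [Finset.mem_image] at hm
    obtain ⟨l, _, hl⟩ := hm
    exact ⟨l, hl⟩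
  have exB : ∀ p : M, ∀ i : Fin ℓ, ∃ l : Fin L,
      p.1.2 l = ((Sp p).orderIsoOfFin (hS p) i : Fin T) := by
    intro p i
    have hm := hSb p (((Sp p).orderIsoOfFin (hS p) i).2)
    rw [Finset.mem_image] at hm
    obtain ⟨l, _, hl⟩ := hm
    exact ⟨l, hl⟩
  choose ga hga using exA
  choose gb hgb using exB
  have hgainj : ∀ p : M, Function.Injective (ga p) := by
    intro p i j hij
    have : ((Sp p).orderIsoOfFin (hS p) i : Fin T) = ((Sp p).orderIsoOfFin (hS p) j : Fin T) := by
      rw [← hga p i, ← hga p j, hij]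
    exact (Finset.orderIsoOfFin _ (hS p)).injective (Subtype.ext this)
  have hgbinj : ∀ p : M, Function.Injective (gb p) := by
    intro p i j hij
    have : ((Sp p).orderIsoOfFin (hS p) i : Fin T) = ((Sp p).orderIsoOfFin (hS p) j : Fin T) := by
      rw [← hgb p i, ← hgb p j, hij]
    exact (Finset.orderIsoOfFin _ (hS p)).injective (Subtype.ext this)
  set Ca : M → Finset (Fin L) := fun p => (Finset.univ.image (ga p))ᶜ with hCadef
  set Cb : M → Finset (Fin L) := fun p => (Finset.univ.image (gb p))ᶜ with hCbdef
  have hCa : ∀ p : M, (Ca p).card = L - ℓ := by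
    intro p
    rw [hCadef]
    simp [Finset.card_compl, Finset.card_image_of_injective _ (hgainj p)]
  have hCb : ∀ p : M, (Cb p).card = L - ℓ := by
    intro p
    rw [hCbdef]
    simp [Finset.card_compl, Finset.card_image_of_injective _ (hgbinj p)]
  have hmemA : ∀ p : M, ∀ l : Fin L, (p.1.1 l).val < w ∨ p.1.1 l ∈ Sp p := by
    intro p l
    by_cases h : (p.1.1 l).val < w
    · exact Or.inl h
    · refine Or.inr ?_
      rw [hSpdef]
      refine Finset.mem_filter.mpr ⟨Finset.mem_union_left _
        (Finset.mem_image_of_mem _ (Finset.mem_univ l)), ?_⟩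
      omega
  have hmemB : ∀ p : M, ∀ l : Fin L, (p.1.2 l).val < w ∨ p.1.2 l ∈ Sp p := by
    intro p l
    by_cases h : (p.1.2 l).val < w
    · exact Or.inl h
    · refine Or.inr ?_
      rw [hSpdef]
      refine Finset.mem_filter.mpr ⟨Finset.mem_union_right _
        (Finset.mem_image_of_mem _ (Finset.mem_univ l)), ?_⟩
      omega
  -- the codomain
  set D := {S : Finset (Fin T) // S ∈ Finset.powersetCard ℓ highs} ×
      (Fin ℓ → Fin L) × (Fin ℓ → Fin L) ×
      (Fin (L - ℓ) → Fin (w + ℓ)) × (Fin (L - ℓ) → Fin (w + ℓ)) with hDdef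
  have hSpmem : ∀ p : M, Sp p ∈ Finset.powersetCard ℓ highs := by
    intro p
    rw [Finset.mem_powersetCard]
    refine ⟨?_, hS p⟩
    intro t ht
    rw [hSpdef] at ht
    rw [hhighsdef]
    exact Finset.mem_filter.mpr ⟨Finset.mem_univ t, (Finset.mem_filter.mp ht).2⟩
  set F : M → D := fun p =>
    (⟨Sp p, hSpmem p⟩, ga p, gb p,
      fun j => encval w ℓ (Sp p) (hS p) (p.1.1 ((Ca p).orderIsoOfFin (hCa p) j))
        (hmemA p _),
      fun j => encval w ℓ (Sp p) (hS p) (p.1.2 ((Cb p).orderIsoOfFin (hCb p) j))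
        (hmemB p _)) with hFdef
  have hFinj : Function.Injective F := by
    intro p q hpq
    have hSpq : Sp p = Sp q := congrArg (fun d : D => d.1.val) hpq
    have hgapq : ga p = ga q := congrArg (fun d : D => d.2.1) hpq
    have hgbpq : gb p = gb q := congrArg (fun d : D => d.2.2.1) hpq
    have ha' := congrArg (fun d : D => d.2.2.2.1) hpq
    have hb' := congrArg (fun d : D => d.2.2.2.2) hpq
    have hCapq : Ca p = Ca q := by rw [hCadef]; simp only [hgapq]
    have hCbpq : Cb p = Cb q := by rw [hCbdef]; simp only [hgbpq]
    have haeq : p.1.1 = q.1.1 := by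
      funext l
      by_cases hl : l ∈ Finset.univ.image (ga p)
      · obtain ⟨i, _, hi⟩ := Finset.mem_image.mp hl
        have h1 : p.1.1 l = ((Sp p).orderIsoOfFin (hS p) i : Fin T) := hi ▸ hga p i
        have h2 : q.1.1 l = ((Sp q).orderIsoOfFin (hS q) i : Fin T) := by
          have : gb q i = gb q i := rfl
          have hgi : ga q i = l := by rw [← hgapq, hi]
          exact hgi ▸ hga q i
        rw [h1, h2, orderIsoOfFin_congr hSpq]
      · have hlc : l ∈ Ca p := by rw [hCadef]; exact Finset.mem_compl.mpr hl
        obtain ⟨j, hj⟩ := ((Ca p).orderIsoOfFin (hCa p)).surjective ⟨l, hlc⟩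
        have hjl : ((Ca p).orderIsoOfFin (hCa p) j : Fin L) = l := by rw [hj]
        have hjl' : ((Cb p).orderIsoOfFin (hCb p) j : Fin L) = l → True := fun _ => trivial
        have hjlq : ((Ca q).orderIsoOfFin (hCa q) j : Fin L) = l := by
          rw [← orderIsoOfFin_congr hCapq (hCa p) (hCa q) j, hjl]
        have := congrFun ha' j
        have hval := encval_inj hSpq (hS p) (hS q) (hmemA p _) (hmemA q _) this
        rw [hjl] at hval
        rw [hjlq] at hval
        exact hval
    have hbeq : p.1.2 = q.1.2 := by
      funext l
      by_cases hl : l ∈ Finset.univ.image (gb p)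
      · obtain ⟨i, _, hi⟩ := Finset.mem_image.mp hl
        have h1 : p.1.2 l = ((Sp p).orderIsoOfFin (hS p) i : Fin T) := hi ▸ hgb p i
        have h2 : q.1.2 l = ((Sp q).orderIsoOfFin (hS q) i : Fin T) := by
          have hgi : gb q i = l := by rw [← hgbpq, hi]
          exact hgi ▸ hgb q i
        rw [h1, h2, orderIsoOfFin_congr hSpq]
      · have hlc : l ∈ Cb p := by rw [hCbdef]; exact Finset.mem_compl.mpr hl
        obtain ⟨j, hj⟩ := ((Cb p).orderIsoOfFin (hCb p)).surjective ⟨l, hlc⟩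
        have hjl : ((Cb p).orderIsoOfFin (hCb p) j : Fin L) = l := by rw [hj]
        have hjlq : ((Cb q).orderIsoOfFin (hCb q) j : Fin L) = l := by
          rw [← orderIsoOfFin_congr hCbpq (hCb p) (hCb q) j, hjl]
        have := congrFun hb' j
        have hval := encval_inj hSpq (hS p) (hS q) (hmemB p _) (hmemB q _) this
        rw [hjl] at hval
        rw [hjlq] at hval
        exact hval
    exact Subtype.ext (Prod.ext haeq hbeq)
  have hcard : Nat.card M ≤ Nat.card D := Nat.card_le_card_of_injective F hFinj
  have hDcard : Nat.card D = Nat.choose (T - w) ℓ * L ^ (2 * ℓ) * (w + ℓ) ^ (2 * (L - ℓ)) := by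
    rw [hDdef, Nat.card_eq_fintype_card]
    simp only [Fintype.card_prod, Fintype.card_fun, Fintype.card_fin, Fintype.card_coe]
    rw [Finset.card_powersetCard, hhighs, two_mul, pow_add, two_mul, pow_add]
    ring
  calc Nat.card M ≤ Nat.card D := hcard
    _ = _ := hDcard
end
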